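/- arXiv:2004.05866 — 7 statements merged into one kernel-verified Lean document; each statement's English description precedes it below -/
import Mathlib

section
/- Let d ∈ ℕ, n ∈ ℤ^d and z ∈ ℂ with |2d − z| > 2d (in particular z ∉ [0,4d]). For α ∈ ℕ₀^d write |α| := α₁ + ⋯ + α_d. Then the family a_α := (2|α| + |n|)! / (α₁!⋯α_d! · (α₁+|n₁|)!⋯(α_d+|n_d|)!) · (2d − z)^{−2|α|−|n|−1}, indexed by α ∈ ℕ₀^d, is summable, and Σ_{α ∈ ℕ₀^d} a_α = G(z,n). -/
open MeasureTheory
open Finset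

section H



lemma sum_multinorm_le {d : ℕ} (y : Fin d → ℝ) (hy : ∀ j, 0 ≤ y j) (t : ℝ)
    (ht : 0 < t) (h : ∑ j, y j < t) (u : Finset (Fin d → ℕ)) :
    ∑ β ∈ u, (Nat.multinomial Finset.univ β : ℝ) * (∏ j, y j ^ β j) * t⁻¹ ^ (∑ j, β j + 1)
      ≤ t⁻¹ * (1 - (∑ j, y j) / t)⁻¹ := by
  classical
  set r : ℝ := (∑ j, y j) / t with hr
  have hr0 : 0 ≤ r := div_nonneg (Finset.sum_nonneg fun j _ => hy j) ht.le
  have hr1 : r < 1 := (div_lt_one ht).2 h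
  set K := u.sup (fun β => ∑ j, β j) with hK
  have hsub : u ⊆ (Finset.range (K + 1)).biUnion (fun k => Finset.piAntidiag Finset.univ k) := by
    intro β hβ
    refine Finset.mem_biUnion.2 ⟨∑ j, β j, Finset.mem_range.2 ?_, ?_⟩
    · exact Nat.lt_succ_of_le (Finset.le_sup hβ)
    · simp [Finset.mem_piAntidiag]
  have hnonneg : ∀ β : Fin d → ℕ,
      0 ≤ (Nat.multinomial Finset.univ β : ℝ) * (∏ j, y j ^ β j) * t⁻¹ ^ (∑ j, β j + 1) := by
    intro β
    have h1 : (0:ℝ) ≤ ∏ j, y j ^ β j := Finset.prod_nonneg fun j _ => pow_nonneg (hy j) _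
    positivity
  calc ∑ β ∈ u, (Nat.multinomial Finset.univ β : ℝ) * (∏ j, y j ^ β j) * t⁻¹ ^ (∑ j, β j + 1)
      ≤ ∑ β ∈ (Finset.range (K + 1)).biUnion (fun k => Finset.piAntidiag Finset.univ k),
          (Nat.multinomial Finset.univ β : ℝ) * (∏ j, y j ^ β j) * t⁻¹ ^ (∑ j, β j + 1) :=
        Finset.sum_le_sum_of_subset_of_nonneg hsub (fun β _ _ => hnonneg β)
    _ = ∑ k ∈ Finset.range (K + 1), ∑ β ∈ Finset.piAntidiag Finset.univ k,
          (Nat.multinomial Finset.univ β : ℝ) * (∏ j, y j ^ β j) * t⁻¹ ^ (∑ j, β j + 1) := by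
        refine Finset.sum_biUnion ?_
        intro k₁ _ k₂ _ hne
        refine Finset.disjoint_left.2 fun β hβ1 hβ2 => hne ?_
        rw [Finset.mem_piAntidiag] at hβ1 hβ2
        rw [← hβ1.1, hβ2.1]
    _ = ∑ k ∈ Finset.range (K + 1), r ^ k * t⁻¹ := by
        refine Finset.sum_congr rfl fun k _ => ?_
        have : ∑ β ∈ Finset.piAntidiag Finset.univ k,
            (Nat.multinomial Finset.univ β : ℝ) * (∏ j, y j ^ β j) * t⁻¹ ^ (∑ j, β j + 1)
            = ∑ β ∈ Finset.piAntidiag Finset.univ k,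
            ((Nat.multinomial Finset.univ β : ℝ) * ∏ j, y j ^ β j) * t⁻¹ ^ (k + 1) := by
          refine Finset.sum_congr rfl fun β hβ => ?_
          rw [Finset.mem_piAntidiag] at hβ
          rw [hβ.1]
        rw [this, ← Finset.sum_mul, ← Finset.sum_pow_eq_sum_piAntidiag]
        rw [hr, div_pow, div_eq_mul_inv, pow_succ, ← mul_assoc, inv_pow]
    _ ≤ (1 - r)⁻¹ * t⁻¹ := by
        rw [← Finset.sum_mul]
        refine mul_le_mul_of_nonneg_right ?_ (inv_nonneg.2 ht.le)
        have hs : Summable fun k : ℕ => r ^ k := summable_geometric_of_lt_one hr0 hr1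
        calc ∑ k ∈ Finset.range (K + 1), r ^ k ≤ ∑' k, r ^ k :=
              Summable.sum_le_tsum _ (fun k _ => pow_nonneg hr0 k) hs
          _ = (1 - r)⁻¹ := tsum_geometric_of_lt_one hr0 hr1
    _ = t⁻¹ * (1 - r)⁻¹ := mul_comm _ _

lemma hasSum_multigeom {d : ℕ} (x : Fin d → ℂ) (w : ℂ) (h : ∑ j, ‖x j‖ < ‖w‖) :
    HasSum (fun β : Fin d → ℕ =>
      (Nat.multinomial Finset.univ β : ℂ) * (∏ j, x j ^ β j) * w⁻¹ ^ (∑ j, β j + 1))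
      (w - ∑ j, x j)⁻¹ := by
  classical
  have hw0 : (0:ℝ) < ‖w‖ := lt_of_le_of_lt (Finset.sum_nonneg fun j _ => norm_nonneg _) h
  have hw : w ≠ 0 := by simpa using norm_pos_iff.mp hw0
  set f : (Fin d → ℕ) → ℂ := fun β =>
    (Nat.multinomial Finset.univ β : ℂ) * (∏ j, x j ^ β j) * w⁻¹ ^ (∑ j, β j + 1) with hf
  set S : ℂ := ∑ j, x j with hS
  have hnorm : ∀ β, ‖f β‖ =
      (Nat.multinomial Finset.univ β : ℝ) * (∏ j, ‖x j‖ ^ β j) * (‖w‖⁻¹) ^ (∑ j, β j + 1) := by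
    intro β
    simp [hf, norm_mul, norm_prod, norm_pow, norm_inv, Complex.norm_natCast]
  have hsummable : Summable f := by
    refine Summable.of_norm ?_
    refine summable_of_sum_le (fun β => norm_nonneg (f β)) (c := ‖w‖⁻¹ * (1 - (∑ j, ‖x j‖) / ‖w‖)⁻¹) ?_
    intro u
    calc ∑ β ∈ u, ‖f β‖
        = ∑ β ∈ u, (Nat.multinomial Finset.univ β : ℝ) * (∏ j, ‖x j‖ ^ β j) *
            (‖w‖⁻¹) ^ (∑ j, β j + 1) := Finset.sum_congr rfl fun β _ => hnorm β
      _ ≤ _ := sum_multinorm_le _ (fun j => norm_nonneg _) _ hw0 h u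
  -- geometric series
  have hSnorm : ‖S‖ < ‖w‖ := lt_of_le_of_lt (norm_sum_le _ _) h
  have hq : ‖S / w‖ < 1 := by
    rw [norm_div, div_lt_one hw0]; exact hSnorm
  have hgeom : HasSum (fun k : ℕ => S ^ k * w⁻¹ ^ (k + 1)) (w - S)⁻¹ := by
    have h1 : HasSum (fun k : ℕ => (S / w) ^ k) (1 - S / w)⁻¹ :=
      hasSum_geometric_of_norm_lt_one hq
    have h2 := h1.mul_right w⁻¹
    have hval : (1 - S / w)⁻¹ * w⁻¹ = (w - S)⁻¹ := by
      rw [← mul_inv]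
      congr 1
      field_simp
    have hterm : ∀ k : ℕ, (S / w) ^ k * w⁻¹ = S ^ k * w⁻¹ ^ (k + 1) := by
      intro k
      rw [div_pow, div_eq_mul_inv, ← inv_pow, pow_succ, mul_assoc]
    rw [hval] at h2
    exact h2.congr_fun (fun k => (hterm k).symm)
  -- fiberwise
  have hfs : HasSum f (∑' β, f β) := hsummable.hasSum
  set e := Equiv.sigmaFiberEquiv (fun β : Fin d → ℕ => ∑ j, β j) with he
  have hsig : HasSum (f ∘ e) (∑' β, f β) := e.hasSum_iff.mpr hfs
  have hfiber : ∀ k : ℕ,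
      HasSum (fun c : {β : Fin d → ℕ // ∑ j, β j = k} => (f ∘ e) ⟨k, c⟩)
        (S ^ k * w⁻¹ ^ (k + 1)) := by
    intro k
    have hsumm : Summable (fun c : {β : Fin d → ℕ // ∑ j, β j = k} => (f ∘ e) ⟨k, c⟩) :=
      hsig.summable.comp_injective sigma_mk_injective
    have hval : ∑' c : {β : Fin d → ℕ // ∑ j, β j = k}, (f ∘ e) ⟨k, c⟩
        = S ^ k * w⁻¹ ^ (k + 1) := by
      have h1 : ∑' c : {β : Fin d → ℕ // ∑ j, β j = k}, (f ∘ e) ⟨k, c⟩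
          = ∑' c : {β : Fin d → ℕ | ∑ j, β j = k}, f c := rfl
      rw [h1, _root_.tsum_subtype]
      rw [tsum_eq_sum (s := Finset.piAntidiag Finset.univ k)
        (fun β hβ => by
          rw [Set.indicator_apply_eq_zero]
          intro hmem
          exact absurd (Finset.mem_piAntidiag.2 ⟨hmem, fun i _ => Finset.mem_univ i⟩) hβ)]
      have h2 : ∑ β ∈ Finset.piAntidiag Finset.univ k,
          Set.indicator {β : Fin d → ℕ | ∑ j, β j = k} f β
          = ∑ β ∈ Finset.piAntidiag Finset.univ k, ((Nat.multinomial Finset.univ β : ℂ) *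
              ∏ j, x j ^ β j) * w⁻¹ ^ (k + 1) := by
        refine Finset.sum_congr rfl fun β hβ => ?_
        rw [Finset.mem_piAntidiag] at hβ
        rw [Set.indicator_of_mem (show β ∈ {β : Fin d → ℕ | ∑ j, β j = k} from hβ.1), hf]
        simp only []
        rw [hβ.1]
      rw [h2, ← Finset.sum_mul, ← Finset.sum_pow_eq_sum_piAntidiag]
    exact hval ▸ hsumm.hasSum
  have hmain : HasSum (fun k : ℕ => S ^ k * w⁻¹ ^ (k + 1)) (∑' β, f β) :=
    HasSum.sigma hsig hfiber
  have : (∑' β, f β) = (w - S)⁻¹ := hmain.unique hgeom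
  exact this ▸ hfs



lemma integral_exp_int (t : ℤ) :
    ∫ θ : ℝ in Set.Icc (-Real.pi) Real.pi, Complex.exp (Complex.I * t * θ) =
      if t = 0 then (2 * Real.pi : ℂ) else 0 := by
  rw [MeasureTheory.integral_Icc_eq_integral_Ioc,
    ← intervalIntegral.integral_of_le (by linarith [Real.pi_pos] : (-Real.pi : ℝ) ≤ Real.pi)]
  by_cases ht : t = 0
  · subst ht
    simp
    ring
  · rw [if_neg ht]
    have hc : (Complex.I * t : ℂ) ≠ 0 := by
      simp [Complex.I_ne_zero, ht]
    have := integral_exp_mul_complex (a := -Real.pi) (b := Real.pi) hc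
    simp only [mul_assoc] at this ⊢
    rw [this]
    have hexp : Complex.exp (Complex.I * (t * (Real.pi : ℂ))) =
        Complex.exp (Complex.I * (t * ((-Real.pi : ℝ) : ℂ))) := by
      rw [show (Complex.I * (t * ((-Real.pi : ℝ) : ℂ))) =
        Complex.I * (t * (Real.pi:ℂ)) - t * (2 * Real.pi * Complex.I) by push_cast; ring]
      rw [Complex.exp_sub, Complex.exp_int_mul_two_pi_mul_I, div_one]
    rw [hexp, sub_self, zero_div]

lemma exp_cos_pow_eq (m : ℤ) (b : ℕ) (θ : ℝ) :
    Complex.exp (Complex.I * m * θ) * (2 * (Real.cos θ : ℂ)) ^ b =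
      ∑ j ∈ Finset.range (b + 1), (b.choose j : ℂ) *
        Complex.exp (Complex.I * ((m : ℂ) + 2 * j - b) * θ) := by
  have h2cos : (2 * (Real.cos θ : ℂ)) = Complex.exp (θ * Complex.I) + Complex.exp (-(θ * Complex.I)) := by
    rw [Complex.ofReal_cos, Complex.cos]
    ring
  rw [h2cos, add_pow, Finset.mul_sum]
  refine Finset.sum_congr rfl fun j hj => ?_
  have hj' : j ≤ b := Nat.lt_succ_iff.mp (Finset.mem_range.mp hj)
  rw [← Complex.exp_nat_mul, ← Complex.exp_nat_mul, ← Complex.exp_add, mul_comm _ ((b.choose j : ℂ)),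
    ← mul_assoc, mul_comm _ ((b.choose j : ℂ)), mul_assoc, ← Complex.exp_add]
  congr 2
  push_cast [Nat.cast_sub hj']
  ring

lemma integral_exp_cos_pow (b : ℕ) (m : ℤ) :
    ∫ θ : ℝ in Set.Icc (-Real.pi) Real.pi,
        Complex.exp (Complex.I * m * θ) * (2 * (Real.cos θ : ℂ)) ^ b =
      ∑ j ∈ Finset.range (b + 1), (b.choose j : ℂ) *
        (if (m : ℤ) + 2 * j - b = 0 then (2 * Real.pi : ℂ) else 0) := by
  simp_rw [exp_cos_pow_eq m b]
  rw [MeasureTheory.integral_finset_sum]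
  · refine Finset.sum_congr rfl fun j hj => ?_
    rw [MeasureTheory.integral_const_mul]
    congr 1
    have := integral_exp_int ((m : ℤ) + 2 * j - b)
    rw [show ((((m : ℤ) + 2 * j - b : ℤ) : ℂ)) = ((m : ℂ) + 2 * j - b) by push_cast; ring] at this
    rw [this]
  · intro j hj
    refine (Continuous.integrableOn_Icc ?_).integrable.const_mul _
    fun_prop

lemma cval1 (m : ℤ) (a : ℕ) :
    ∫ θ : ℝ in Set.Icc (-Real.pi) Real.pi,
        Complex.exp (Complex.I * m * θ) * (2 * (Real.cos θ : ℂ)) ^ (2 * a + m.natAbs) =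
      ((2 * a + m.natAbs).choose a : ℂ) * (2 * Real.pi) := by
  set b := 2 * a + m.natAbs with hb
  rw [integral_exp_cos_pow]
  rcases Int.natAbs_eq m with hm | hm
  · -- m ≥ 0, j₀ = a
    rw [Finset.sum_eq_single_of_mem a (by simp [hb]; omega)]
    · rw [if_pos (by omega)]
    · intro j hj hne
      rw [if_neg (by simp only [hb] at *; omega), mul_zero]
  · -- m ≤ 0, j₀ = a + m.natAbs
    rw [Finset.sum_eq_single_of_mem (a + m.natAbs) (by simp [hb]; omega)]
    · rw [if_pos (by omega)]
      have : b.choose (a + m.natAbs) = b.choose a := by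
        rw [show a + m.natAbs = b - a by omega]
        exact Nat.choose_symm (by omega)
      rw [this]
    · intro j hj hne
      rw [if_neg (by simp only [hb] at *; omega), mul_zero]

lemma cval2 (m : ℤ) (b : ℕ) (hb : ∀ a : ℕ, b ≠ 2 * a + m.natAbs) :
    ∫ θ : ℝ in Set.Icc (-Real.pi) Real.pi,
        Complex.exp (Complex.I * m * θ) * (2 * (Real.cos θ : ℂ)) ^ b = 0 := by
  rw [integral_exp_cos_pow]
  refine Finset.sum_eq_zero fun j hj => ?_
  rw [if_neg, mul_zero]
  intro hcond
  rw [Finset.mem_range] at hj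
  by_cases h2 : 2 * j ≤ b
  · exact hb j (by omega)
  · exact hb (b - j) (by omega)

lemma integral_box_prod {d : ℕ} (f : Fin d → ℝ → ℂ) :
    ∫ θ : Fin d → ℝ in Set.univ.pi fun _ => Set.Icc (-Real.pi) Real.pi, ∏ j, f j (θ j)
      = ∏ j, ∫ x : ℝ in Set.Icc (-Real.pi) Real.pi, f j x := by
  classical
  rw [← MeasureTheory.integral_indicator
    (MeasurableSet.univ_pi fun _ => measurableSet_Icc)]
  have hind : (Set.univ.pi fun _ : Fin d => Set.Icc (-Real.pi) Real.pi).indicator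
      (fun θ : Fin d → ℝ => ∏ j, f j (θ j))
      = fun θ : Fin d → ℝ => ∏ j, (Set.Icc (-Real.pi) Real.pi).indicator (f j) (θ j) := by
    funext θ
    by_cases hθ : θ ∈ Set.univ.pi fun _ : Fin d => Set.Icc (-Real.pi) Real.pi
    · rw [Set.indicator_of_mem hθ]
      refine (Finset.prod_congr rfl fun j _ => ?_).symm
      exact Set.indicator_of_mem (hθ j (Set.mem_univ j)) _
    · rw [Set.indicator_of_notMem hθ]
      rw [Set.mem_univ_pi, not_forall] at hθ
      obtain ⟨j, hj⟩ := hθ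
      exact (Finset.prod_eq_zero (Finset.mem_univ j)
        (Set.indicator_of_notMem hj _)).symm
  rw [hind, MeasureTheory.integral_fintype_prod_volume_eq_prod
    (fun j => (Set.Icc (-Real.pi) Real.pi).indicator (f j))]
  exact Finset.prod_congr rfl fun j _ =>
    MeasureTheory.integral_indicator measurableSet_Icc
end H


/-- The lattice resolvent kernel `G(z,n)` in dimension `d`:
`G(z,n) = (2π)^{-d} ∫_{[-π,π]^d} e^{i n·θ} / (2d - 2cos θ₁ - ⋯ - 2cos θ_d - z) dθ`. -/
noncomputable def G (d : ℕ) (z : ℂ) (n : Fin d → ℤ) : ℂ :=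
  (2 * (Real.pi : ℂ)) ^ (-(d : ℤ)) *
    ∫ θ : Fin d → ℝ in Set.univ.pi fun _ => Set.Icc (-Real.pi) Real.pi,
      Complex.exp (Complex.I * ∑ j, (n j : ℂ) * (θ j : ℂ)) /
        (2 * d - 2 * ∑ j, (Real.cos (θ j) : ℂ) - z)

/-- Laurent expansion of the resolvent of the discrete Laplacian for `|2d - z| > 2d`. -/
theorem laurent_expansion_of_resolvent (d : ℕ) (hd : 0 < d) (n : Fin d → ℤ) (z : ℂ)
    (hz : 2 * d < ‖(2 * d - z : ℂ)‖) :
    Summable (fun α : Fin d → ℕ =>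
      ((2 * (∑ j, α j) + ∑ j, (n j).natAbs).factorial : ℂ) /
        ((∏ j, ((α j).factorial : ℂ)) * ∏ j, ((α j + (n j).natAbs).factorial : ℂ)) *
        (2 * d - z) ^ (-(2 * (∑ j, (α j : ℤ)) + (∑ j, ((n j).natAbs : ℤ)) + 1))) ∧
    ∑' α : Fin d → ℕ,
      ((2 * (∑ j, α j) + ∑ j, (n j).natAbs).factorial : ℂ) /
        ((∏ j, ((α j).factorial : ℂ)) * ∏ j, ((α j + (n j).natAbs).factorial : ℂ)) *
        (2 * d - z) ^ (-(2 * (∑ j, (α j : ℤ)) + (∑ j, ((n j).natAbs : ℤ)) + 1))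
      = G d z n := by
  classical
  set w : ℂ := 2 * d - z with hwdef
  have hw : 2 * d < ‖w‖ := hz
  have hw0 : (0:ℝ) < ‖w‖ := lt_of_le_of_lt (by positivity) hw
  have hwne : w ≠ 0 := by simpa using norm_pos_iff.mp hw0
  set box : Set (Fin d → ℝ) := Set.univ.pi fun _ => Set.Icc (-Real.pi) Real.pi with hbox
  set F : (Fin d → ℕ) → (Fin d → ℝ) → ℂ := fun β θ =>
    (Nat.multinomial Finset.univ β : ℂ) *
      (∏ j, Complex.exp (Complex.I * (n j : ℂ) * (θ j : ℂ)) *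
        (2 * (Real.cos (θ j) : ℂ)) ^ β j) * w⁻¹ ^ (∑ j, β j + 1) with hF
  -- pointwise HasSum
  have hpt : ∀ θ : Fin d → ℝ,
      HasSum (fun β => F β θ)
        (Complex.exp (Complex.I * ∑ j, (n j : ℂ) * (θ j : ℂ)) /
          (2 * d - 2 * ∑ j, (Real.cos (θ j) : ℂ) - z)) := by
    intro θ
    have hx : ∑ j, ‖(2 * (Real.cos (θ j) : ℂ))‖ < ‖w‖ := by
      refine lt_of_le_of_lt ?_ hw
      calc ∑ j, ‖(2 * (Real.cos (θ j) : ℂ))‖ ≤ ∑ _j : Fin d, 2 := by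
            refine Finset.sum_le_sum fun j _ => ?_
            rw [norm_mul]
            simp only [Complex.norm_ofNat, Complex.norm_real]
            nlinarith [Real.abs_cos_le_one (θ j), Real.norm_eq_abs (Real.cos (θ j))]
        _ = 2 * d := by simp [mul_comm]
    have h0 := (hasSum_multigeom (fun j => 2 * (Real.cos (θ j) : ℂ)) w hx).mul_left
      (Complex.exp (Complex.I * ∑ j, (n j : ℂ) * (θ j : ℂ)))
    have hterm : ∀ β : Fin d → ℕ,
        Complex.exp (Complex.I * ∑ j, (n j : ℂ) * (θ j : ℂ)) *
          ((Nat.multinomial Finset.univ β : ℂ) * (∏ j, (2 * (Real.cos (θ j) : ℂ)) ^ β j) *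
            w⁻¹ ^ (∑ j, β j + 1)) = F β θ := by
      intro β
      rw [hF]
      simp only []
      rw [Finset.prod_mul_distrib, ← Complex.exp_sum]
      rw [show ∑ j, Complex.I * (n j : ℂ) * (θ j : ℂ)
        = Complex.I * ∑ j, (n j : ℂ) * (θ j : ℂ) by rw [Finset.mul_sum]; exact Finset.sum_congr rfl fun j _ => by ring]
      ring
    have hval : Complex.exp (Complex.I * ∑ j, (n j : ℂ) * (θ j : ℂ)) *
        (w - ∑ j, 2 * (Real.cos (θ j) : ℂ))⁻¹
        = Complex.exp (Complex.I * ∑ j, (n j : ℂ) * (θ j : ℂ)) /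
          (2 * d - 2 * ∑ j, (Real.cos (θ j) : ℂ) - z) := by
      rw [div_eq_mul_inv]
      congr 2
      rw [hwdef, ← Finset.mul_sum]
      ring
    rw [hval] at h0
    exact h0.congr_fun fun β => (hterm β).symm
  have hexp1 : ∀ (m : ℤ) (x : ℝ), ‖Complex.exp (Complex.I * (m : ℂ) * (x : ℂ))‖ = 1 := by
    intro m x
    rw [Complex.norm_exp]
    simp
  set bnd : (Fin d → ℕ) → ℝ := fun β =>
    (Nat.multinomial Finset.univ β : ℝ) * (∏ j, (2:ℝ) ^ β j) * ‖w‖⁻¹ ^ (∑ j, β j + 1) with hbnd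
  have hbnd_nonneg : ∀ β, 0 ≤ bnd β := by
    intro β
    have : (0:ℝ) ≤ ∏ j, (2:ℝ) ^ β j := Finset.prod_nonneg fun j _ => by positivity
    positivity
  have hsum2d : ∑ _j : Fin d, (2:ℝ) < ‖w‖ := by
    simpa [mul_comm] using hw
  have hbnd_summable : Summable bnd := by
    refine summable_of_sum_le hbnd_nonneg (c := ‖w‖⁻¹ * (1 - (∑ _j : Fin d, (2:ℝ)) / ‖w‖)⁻¹) ?_
    intro u
    exact sum_multinorm_le (fun _ => (2:ℝ)) (fun _ => by norm_num) ‖w‖ hw0 hsum2d u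
  have hFcont : ∀ β, Continuous (F β) := by
    intro β
    rw [hF]
    fun_prop
  have hnormF : ∀ β θ, ‖F β θ‖ ≤ bnd β := by
    intro β θ
    have h1 : ∏ j, ‖Complex.exp (Complex.I * (n j : ℂ) * ((θ j : ℝ) : ℂ)) *
        (2 * (Real.cos (θ j) : ℂ)) ^ β j‖ ≤ ∏ j, (2:ℝ) ^ β j := by
      refine Finset.prod_le_prod (fun j _ => norm_nonneg _) fun j _ => ?_
      rw [norm_mul, hexp1, one_mul, norm_pow]
      refine pow_le_pow_left₀ (norm_nonneg _) ?_ _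
      rw [norm_mul]
      simp only [Complex.norm_ofNat, Complex.norm_real, Real.norm_eq_abs]
      nlinarith [Real.abs_cos_le_one (θ j)]
    have h2 : (0:ℝ) ≤ (Nat.multinomial Finset.univ β : ℝ) := Nat.cast_nonneg _
    have h3 : (0:ℝ) ≤ ‖w‖⁻¹ ^ (∑ j, β j + 1) := by positivity
    calc ‖F β θ‖ = (Nat.multinomial Finset.univ β : ℝ) *
          (∏ j, ‖Complex.exp (Complex.I * (n j : ℂ) * ((θ j : ℝ) : ℂ)) *
            (2 * (Real.cos (θ j) : ℂ)) ^ β j‖) * ‖w‖⁻¹ ^ (∑ j, β j + 1) := by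
          rw [hF]
          simp only []
          rw [norm_mul, norm_mul, norm_prod, norm_pow, norm_inv, Complex.norm_natCast]
      _ ≤ bnd β := by
          rw [hbnd]
          exact mul_le_mul_of_nonneg_right (mul_le_mul_of_nonneg_left h1 h2) h3
  have hboxfin : volume box < ⊤ := by
    rw [hbox, volume_pi_pi]
    simp [Real.volume_Icc]
  have : Fact (volume box < ⊤) := ⟨hboxfin⟩
  have hHasSumInt : HasSum (fun β => ∫ θ in box, F β θ)
      (∫ θ in box, Complex.exp (Complex.I * ∑ j, (n j : ℂ) * (θ j : ℂ)) /
          (2 * d - 2 * ∑ j, (Real.cos (θ j) : ℂ) - z)) := by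
    refine MeasureTheory.hasSum_integral_of_dominated_convergence
      (fun β _ => bnd β) (fun β => (hFcont β).aestronglyMeasurable) ?_ ?_ ?_ ?_
    · intro β
      exact Filter.Eventually.of_forall fun θ => hnormF β θ
    · exact Filter.Eventually.of_forall fun θ => hbnd_summable
    · exact integrable_const _
    · exact Filter.Eventually.of_forall fun θ => hpt θ
  set T : (Fin d → ℕ) → ℂ := fun β =>
    (Nat.multinomial Finset.univ β : ℂ) * w⁻¹ ^ (∑ j, β j + 1) *
      ∏ j, ∫ x : ℝ in Set.Icc (-Real.pi) Real.pi,
        Complex.exp (Complex.I * (n j : ℂ) * (x : ℂ)) * (2 * (Real.cos x : ℂ)) ^ β j with hT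
  have hint : ∀ β, (∫ θ in box, F β θ) = T β := by
    intro β
    have h1 : (fun θ : Fin d → ℝ => F β θ) = fun θ : Fin d → ℝ =>
        ((Nat.multinomial Finset.univ β : ℂ) * w⁻¹ ^ (∑ j, β j + 1)) *
          ∏ j, (fun x : ℝ => Complex.exp (Complex.I * (n j : ℂ) * (x : ℂ)) *
            (2 * (Real.cos x : ℂ)) ^ β j) (θ j) := by
      funext θ
      rw [hF]
      simp only []
      ring
    rw [h1, hbox, MeasureTheory.integral_const_mul, hT]
    simp only []
    congr 1
    exact integral_box_prod (fun j x => Complex.exp (Complex.I * (n j : ℂ) * (x : ℂ)) *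
      (2 * (Real.cos x : ℂ)) ^ β j)
  have hT_sum : HasSum T (∫ θ in box, Complex.exp (Complex.I * ∑ j, (n j : ℂ) * (θ j : ℂ)) /
          (2 * d - 2 * ∑ j, (Real.cos (θ j) : ℂ) - z)) :=
    hHasSumInt.congr_fun fun β => (hint β).symm
  -- injection
  set i : (Fin d → ℕ) → (Fin d → ℕ) := fun α j => 2 * α j + (n j).natAbs with hi
  have hinj : Function.Injective i := by
    intro a b hab
    funext j
    have h := congrFun hab j
    simp only [hi] at h
    omega
  have hvanish : ∀ β ∉ Set.range i, T β = 0 := by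
    intro β hβ
    have hex : ∃ j, ∀ a : ℕ, β j ≠ 2 * a + (n j).natAbs := by
      by_contra hcon
      push_neg at hcon
      choose a ha using hcon
      exact hβ ⟨a, funext fun j => (ha j).symm⟩
    obtain ⟨j, hj⟩ := hex
    rw [hT]
    simp only []
    rw [Finset.prod_eq_zero (Finset.mem_univ j) (cval2 (n j) (β j) hj), mul_zero]
  have hTi : HasSum (T ∘ i) (∫ θ in box,
      Complex.exp (Complex.I * ∑ j, (n j : ℂ) * (θ j : ℂ)) /
        (2 * d - 2 * ∑ j, (Real.cos (θ j) : ℂ) - z)) :=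
    (Function.Injective.hasSum_iff hinj hvanish).mpr hT_sum
  have h2pi : (2 * (Real.pi : ℂ)) ≠ 0 := by
    simp [Real.pi_ne_zero, Complex.ofReal_ne_zero]
  -- per-α identity
  have hAT : ∀ α : Fin d → ℕ,
      ((2 * (∑ j, α j) + ∑ j, (n j).natAbs).factorial : ℂ) /
        ((∏ j, ((α j).factorial : ℂ)) * ∏ j, ((α j + (n j).natAbs).factorial : ℂ)) *
        w ^ (-(2 * (∑ j, (α j : ℤ)) + (∑ j, ((n j).natAbs : ℤ)) + 1))
      = (2 * (Real.pi : ℂ)) ^ (-(d : ℤ)) * (T ∘ i) α := by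
    intro α
    set N : ℕ := ∑ j, i α j with hN
    have hN' : N = 2 * (∑ j, α j) + ∑ j, (n j).natAbs := by
      rw [hN, hi]
      simp only []
      rw [Finset.sum_add_distrib, Finset.mul_sum]
    -- T (i α)
    have hTval : (T ∘ i) α = (Nat.multinomial Finset.univ (i α) : ℂ) * w⁻¹ ^ (N + 1) *
        ((∏ j, ((i α j).choose (α j) : ℂ)) * (2 * (Real.pi : ℂ)) ^ d) := by
      rw [Function.comp_apply, hT]
      simp only []
      congr 1
      calc ∏ j, ∫ x : ℝ in Set.Icc (-Real.pi) Real.pi,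
            Complex.exp (Complex.I * (n j : ℂ) * (x : ℂ)) * (2 * (Real.cos x : ℂ)) ^ i α j
          = ∏ j, (((i α j).choose (α j) : ℂ) * (2 * (Real.pi : ℂ))) := by
            refine Finset.prod_congr rfl fun j _ => ?_
            have h := cval1 (n j) (α j)
            simp only [hi]
            exact h
        _ = (∏ j, ((i α j).choose (α j) : ℂ)) * (2 * (Real.pi : ℂ)) ^ d := by
            rw [Finset.prod_mul_distrib, Finset.prod_const, Finset.card_univ, Fintype.card_fin]
    -- nat combinatorial identity
    have hprodnat : (∏ j, (i α j).choose (α j)) *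
        ((∏ j, (α j).factorial) * (∏ j, (α j + (n j).natAbs).factorial))
        = ∏ j, (i α j).factorial := by
      rw [← Finset.prod_mul_distrib, ← Finset.prod_mul_distrib]
      refine Finset.prod_congr rfl fun j _ => ?_
      have h1 : α j ≤ i α j := by simp only [hi]; omega
      have h2 := Nat.choose_mul_factorial_mul_factorial h1
      rw [show i α j - α j = α j + (n j).natAbs by simp only [hi]; omega] at h2
      rw [← h2]
      ring
    have hnat : Nat.multinomial Finset.univ (i α) *
        ((∏ j, (i α j).choose (α j)) *
          ((∏ j, (α j).factorial) * (∏ j, (α j + (n j).natAbs).factorial)))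
        = N.factorial := by
      rw [hprodnat, mul_comm, Nat.multinomial_spec]
    have hcast : (Nat.multinomial Finset.univ (i α) : ℂ) *
        ((∏ j, ((i α j).choose (α j) : ℂ)) *
          ((∏ j, ((α j).factorial : ℂ)) * (∏ j, ((α j + (n j).natAbs).factorial : ℂ))))
        = (N.factorial : ℂ) := by
      exact_mod_cast hnat
    have hfac1 : (∏ j, ((α j).factorial : ℂ)) ≠ 0 :=
      Finset.prod_ne_zero_iff.mpr fun j _ => Nat.cast_ne_zero.mpr (Nat.factorial_ne_zero _)
    have hfac2 : (∏ j, ((α j + (n j).natAbs).factorial : ℂ)) ≠ 0 :=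
      Finset.prod_ne_zero_iff.mpr fun j _ => Nat.cast_ne_zero.mpr (Nat.factorial_ne_zero _)
    have hcoeff : (N.factorial : ℂ) /
        ((∏ j, ((α j).factorial : ℂ)) * ∏ j, ((α j + (n j).natAbs).factorial : ℂ))
        = (Nat.multinomial Finset.univ (i α) : ℂ) * ∏ j, ((i α j).choose (α j) : ℂ) := by
      field_simp
      linear_combination -hcast
    have hzpow : w ^ (-(2 * (∑ j, (α j : ℤ)) + (∑ j, ((n j).natAbs : ℤ)) + 1))
        = w⁻¹ ^ (N + 1) := by
      have hNz : (2 * (∑ j, (α j : ℤ)) + (∑ j, ((n j).natAbs : ℤ)) + 1) = ((N + 1 : ℕ) : ℤ) := by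
        rw [hN']; push_cast; ring
      rw [hNz, zpow_neg, zpow_natCast, inv_pow]
    have h2pid : (2 * (Real.pi : ℂ)) ^ (-(d : ℤ)) * (2 * (Real.pi : ℂ)) ^ d = 1 := by
      rw [← zpow_natCast (2 * (Real.pi : ℂ)) d, ← zpow_add₀ h2pi]
      simp
    rw [hTval, hzpow, ← hN', hcoeff]
    have hring : (2 * (Real.pi : ℂ)) ^ (-(d : ℤ)) *
        ((Nat.multinomial Finset.univ (i α) : ℂ) * w⁻¹ ^ (N + 1) *
          ((∏ j, ((i α j).choose (α j) : ℂ)) * (2 * (Real.pi : ℂ)) ^ d))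
        = (Nat.multinomial Finset.univ (i α) : ℂ) * (∏ j, ((i α j).choose (α j) : ℂ)) *
            w⁻¹ ^ (N + 1) *
          ((2 * (Real.pi : ℂ)) ^ (-(d : ℤ)) * (2 * (Real.pi : ℂ)) ^ d) := by
      ring
    rw [hring, h2pid, mul_one]
  -- final
  have hG : HasSum (fun α : Fin d → ℕ =>
      ((2 * (∑ j, α j) + ∑ j, (n j).natAbs).factorial : ℂ) /
        ((∏ j, ((α j).factorial : ℂ)) * ∏ j, ((α j + (n j).natAbs).factorial : ℂ)) *
        w ^ (-(2 * (∑ j, (α j : ℤ)) + (∑ j, ((n j).natAbs : ℤ)) + 1))) (G d z n) := by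
    have h := hTi.mul_left ((2 * (Real.pi : ℂ)) ^ (-(d : ℤ)))
    have h2 := h.congr_fun fun α => hAT α
    have hGdef : G d z n = (2 * (Real.pi : ℂ)) ^ (-(d : ℤ)) *
        ∫ θ in box, Complex.exp (Complex.I * ∑ j, (n j : ℂ) * (θ j : ℂ)) /
          (2 * d - 2 * ∑ j, (Real.cos (θ j) : ℂ) - z) := rfl
    rw [hGdef]
    exact h2
  exact ⟨hG.summable, hG.tsum_eq⟩
end

section
/- Let d ∈ ℕ, n ∈ ℤ^d and z ∈ ℂ with Re z < 0. Then G(z,n) = ∫₀^∞ e^{−t(2d−z)} · Π_{j=1}^d I_{|n_j|}(2t) dt, where the integral over (0,∞) converges. -/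
open MeasureTheory

/-- The modified Bessel function of the first kind of nonnegative integer order:
`I_ν(x) = Σ_{k} (x/2)^(2k+ν) / (k! (k+ν)!)`. -/
noncomputable def besselI (ν : ℕ) (x : ℝ) : ℝ :=
  ∑' k : ℕ, (x / 2) ^ (2 * k + ν) / ((k.factorial : ℝ) * ((k + ν).factorial : ℝ))

open Complex Real Filter
open scoped ENNReal NNReal Topology

lemma exp_int_integral (l : ℤ) :
    ∫ θ : ℝ in Set.Icc (-Real.pi) Real.pi, Complex.exp (Complex.I * l * θ) =
      if l = 0 then (2 * Real.pi : ℂ) else 0 := by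
  rw [MeasureTheory.integral_Icc_eq_integral_Ioc,
    ← intervalIntegral.integral_of_le (by linarith [Real.pi_pos] : (-Real.pi : ℝ) ≤ Real.pi)]
  rcases eq_or_ne l 0 with h | h
  · simp [h, intervalIntegral.integral_const, Complex.ofReal_mul]
    ring
  · rw [if_neg h]
    have hc : (Complex.I * l : ℂ) ≠ 0 := by
      simp [Complex.I_ne_zero, Int.cast_eq_zero, h]
    have := integral_exp_mul_complex (c := Complex.I * l) hc (a := -Real.pi) (b := Real.pi)
    simp_rw [mul_comm (Complex.I * (l:ℂ)) _] at this
    simp_rw [show ∀ θ : ℝ, Complex.I * l * θ = θ * (Complex.I * l) from fun θ => by ring, this]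
    have key : Complex.exp (↑Real.pi * (Complex.I * l)) = Complex.exp (↑(-Real.pi) * (Complex.I * l)) := by
      rw [show (↑Real.pi * (Complex.I * l) : ℂ) = ↑(-Real.pi) * (Complex.I * l) + l * (2 * Real.pi * Complex.I) by push_cast; ring,
        Complex.exp_add, Complex.exp_int_mul_two_pi_mul_I, mul_one]
    rw [key, sub_self, zero_div]

noncomputable def bterm (m : ℤ) (x : ℝ) (p : ℕ × ℕ) (θ : ℝ) : ℂ :=
  ((x / 2 : ℂ) ^ (p.1 + p.2) / ((p.1.factorial : ℂ) * (p.2.factorial : ℂ))) *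
    Complex.exp (Complex.I * ((p.1 : ℤ) - (p.2 : ℤ) + m : ℤ) * θ)

lemma cexp_eq_tsum (w : ℂ) : Complex.exp w = ∑' n : ℕ, w ^ n / n.factorial := by
  rw [Complex.exp_eq_exp_ℂ, NormedSpace.exp_eq_tsum_div]

lemma summable_norm_pow_div_fact (w : ℂ) :
    Summable fun n : ℕ => ‖w ^ n / (n.factorial : ℂ)‖ := by
  have := Real.summable_pow_div_factorial ‖w‖
  refine this.congr fun n => ?_
  rw [norm_div, norm_pow]
  simp

lemma pointwise_expand (m : ℤ) (x : ℝ) (θ : ℝ) :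
    Complex.exp (Complex.I * m * θ) * Complex.exp ((x : ℂ) * Real.cos θ) =
      ∑' p : ℕ × ℕ, bterm m x p θ := by
  have hcos : ((x : ℂ) * Real.cos θ) =
      (x / 2 : ℂ) * Complex.exp (θ * Complex.I) + (x / 2 : ℂ) * Complex.exp (-(θ * Complex.I)) := by
    have h2 : 2 * Complex.cos θ = Complex.exp (θ * Complex.I) + Complex.exp (-θ * Complex.I) :=
      Complex.two_cos θ
    rw [show ((Real.cos θ : ℝ) : ℂ) = Complex.cos θ from Complex.ofReal_cos θ]
    simp only [neg_mul] at h2 ⊢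
    linear_combination (x : ℂ) / 2 * h2
  rw [hcos, Complex.exp_add, cexp_eq_tsum ((x / 2 : ℂ) * Complex.exp (θ * Complex.I)),
    cexp_eq_tsum ((x / 2 : ℂ) * Complex.exp (-(θ * Complex.I))),
    tsum_mul_tsum_of_summable_norm (summable_norm_pow_div_fact _) (summable_norm_pow_div_fact _)]
  rw [← tsum_mul_left]
  congr 1
  funext p
  unfold bterm
  have hexp : Complex.exp (Complex.I * m * θ) *
      (Complex.exp ((p.1 : ℂ) * (θ * Complex.I)) * Complex.exp ((p.2 : ℂ) * (-(θ * Complex.I)))) =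
      Complex.exp (Complex.I * ((p.1 : ℤ) - (p.2 : ℤ) + m : ℤ) * θ) := by
    rw [← Complex.exp_add, ← Complex.exp_add]
    congr 1
    push_cast
    ring
  calc Complex.exp (Complex.I * m * θ) *
        (((x / 2 : ℂ) * Complex.exp (θ * Complex.I)) ^ p.1 / p.1.factorial *
          (((x / 2 : ℂ) * Complex.exp (-(θ * Complex.I))) ^ p.2 / p.2.factorial))
      = ((x / 2 : ℂ) ^ (p.1 + p.2) / ((p.1.factorial : ℂ) * (p.2.factorial : ℂ))) *
        (Complex.exp (Complex.I * m * θ) *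
          (Complex.exp ((p.1 : ℂ) * (θ * Complex.I)) * Complex.exp ((p.2 : ℂ) * (-(θ * Complex.I))))) := by
        rw [mul_pow, mul_pow, ← Complex.exp_nat_mul, ← Complex.exp_nat_mul, pow_add]
        ring
    _ = _ := by rw [hexp]





lemma summable_coef (x : ℝ) :
    Summable fun p : ℕ × ℕ => (|x| / 2) ^ (p.1 + p.2) / ((p.1.factorial : ℝ) * p.2.factorial) := by
  have ha := Real.summable_pow_div_factorial (|x| / 2)
  have := ha.mul_of_nonneg ha (fun k => by positivity) (fun k => by positivity)
  refine this.congr fun p => ?_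
  rw [div_mul_div_comm, ← pow_add]

lemma norm_bterm (m : ℤ) (x : ℝ) (p : ℕ × ℕ) (θ : ℝ) :
    ‖bterm m x p θ‖ = (|x| / 2) ^ (p.1 + p.2) / ((p.1.factorial : ℝ) * p.2.factorial) := by
  unfold bterm
  rw [norm_mul, norm_div, norm_pow]
  have : ‖Complex.exp (Complex.I * ((p.1 : ℤ) - (p.2 : ℤ) + m : ℤ) * θ)‖ = 1 := by
    rw [Complex.norm_exp]
    have : (Complex.I * ((p.1 : ℤ) - (p.2 : ℤ) + m : ℤ) * θ).re = 0 := by simp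
    rw [this, Real.exp_zero]
  rw [this, mul_one]
  simp [abs_div]

lemma bessel_integral (m : ℤ) (x : ℝ) :
    ∫ θ : ℝ in Set.Icc (-Real.pi) Real.pi,
      Complex.exp (Complex.I * m * θ) * Complex.exp ((x : ℂ) * Real.cos θ) =
      2 * Real.pi * besselI m.natAbs x := by
  simp_rw [pointwise_expand m x]
  rw [MeasureTheory.integral_tsum]
  · -- compute each integral then reindex
    have hint : ∀ p : ℕ × ℕ, (∫ θ : ℝ in Set.Icc (-Real.pi) Real.pi, bterm m x p θ) =
        ((x / 2 : ℂ) ^ (p.1 + p.2) / ((p.1.factorial : ℂ) * (p.2.factorial : ℂ))) *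
          (if ((p.1 : ℤ) - (p.2 : ℤ) + m : ℤ) = 0 then (2 * Real.pi : ℂ) else 0) := by
      intro p
      unfold bterm
      rw [MeasureTheory.integral_const_mul, exp_int_integral]
    simp_rw [hint]
    set T : ℕ × ℕ → ℂ := fun p =>
      ((x / 2 : ℂ) ^ (p.1 + p.2) / ((p.1.factorial : ℂ) * (p.2.factorial : ℂ))) *
        (if ((p.1 : ℤ) - (p.2 : ℤ) + m : ℤ) = 0 then (2 * Real.pi : ℂ) else 0) with hT
    have hinj : Function.Injective (fun k : ℕ => ((k + (-m).toNat, k + m.toNat) : ℕ × ℕ)) := by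
      intro a b hab
      simpa using congrArg Prod.fst hab
    have hsupp : Function.support T ⊆
        Set.range (fun k : ℕ => ((k + (-m).toNat, k + m.toNat) : ℕ × ℕ)) := by
      intro p hp
      have hcond : ((p.1 : ℤ) - (p.2 : ℤ) + m : ℤ) = 0 := by
        by_contra h
        simp [hT, h] at hp
      obtain ⟨p1, p2⟩ := p
      refine ⟨min p1 p2, ?_⟩
      simp only [Prod.mk.injEq]
      simp only at hcond
      omega
    rw [← hinj.tsum_eq hsupp]
    have hterm : ∀ k : ℕ, T (k + (-m).toNat, k + m.toNat) =
        2 * Real.pi * ((x / 2) ^ (2 * k + m.natAbs) /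
          ((k.factorial : ℝ) * ((k + m.natAbs).factorial : ℝ)) : ℝ) := by
      intro k
      have hcond : ((k + (-m).toNat : ℕ) : ℤ) - ((k + m.toNat : ℕ) : ℤ) + m = 0 := by
        push_cast; omega
      have hexp : (k + (-m).toNat) + (k + m.toNat) = 2 * k + m.natAbs := by omega
      have hfact : ((k + (-m).toNat).factorial : ℝ) * ((k + m.toNat).factorial : ℝ) =
          (k.factorial : ℝ) * ((k + m.natAbs).factorial : ℝ) := by
        rcases le_or_gt 0 m with h | h
        · have h1 : (-m).toNat = 0 := by omega
          have h2 : m.toNat = m.natAbs := by omega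
          rw [h1, h2]; ring_nf
        · have h1 : m.toNat = 0 := by omega
          have h2 : (-m).toNat = m.natAbs := by omega
          rw [h1, h2]; ring_nf
      simp only [hT, hcond, if_pos, hexp]
      push_cast [hfact]
      push_cast at hfact
      rw [show (((k + (-m).toNat).factorial : ℂ) * ((k + m.toNat).factorial : ℂ)) =
        ((k.factorial : ℂ) * ((k + m.natAbs).factorial : ℂ)) by exact_mod_cast congrArg (Complex.ofReal) hfact]
      ring
    simp_rw [hterm]
    rw [tsum_mul_left, besselI, Complex.ofReal_tsum]
  · intro p
    exact (Continuous.aestronglyMeasurable (by unfold bterm; fun_prop)).restrict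
  · -- summability bound
    have hnorm : ∀ p : ℕ × ℕ, ∫⁻ θ in Set.Icc (-Real.pi) Real.pi, ‖bterm m x p θ‖ₑ =
        ENNReal.ofReal ((|x| / 2) ^ (p.1 + p.2) / ((p.1.factorial : ℝ) * p.2.factorial)) *
          ENNReal.ofReal (2 * Real.pi) := by
      intro p
      have h1 : ∀ θ : ℝ, ‖bterm m x p θ‖ₑ =
          ENNReal.ofReal ((|x| / 2) ^ (p.1 + p.2) / ((p.1.factorial : ℝ) * p.2.factorial)) := by
        intro θ
        rw [← norm_bterm m x p θ, ofReal_norm]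
      simp_rw [h1]
      rw [MeasureTheory.lintegral_const, Measure.restrict_apply_univ, Real.volume_Icc]
      congr 1
      rw [ENNReal.ofReal_eq_ofReal_iff (by linarith [Real.pi_pos]) (by positivity)]
      ring
    simp_rw [hnorm]
    rw [ENNReal.tsum_mul_right]
    refine ENNReal.mul_ne_top ?_ ENNReal.ofReal_ne_top
    have hs := summable_coef x
    show (∑' p : ℕ × ℕ, ((Real.toNNReal ((|x| / 2) ^ (p.1 + p.2) / ((p.1.factorial : ℝ) * p.2.factorial)) : ℝ≥0) : ℝ≥0∞)) ≠ ⊤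
    rw [ENNReal.tsum_coe_ne_top_iff_summable]
    exact NNReal.summable_coe.mp (hs.congr fun p => (Real.coe_toNNReal _ (by positivity)).symm)

lemma norm_cexp_neg_mul (w : ℂ) (t : ℝ) : ‖Complex.exp (-(t : ℂ) * w)‖ = Real.exp (-w.re * t) := by
  rw [Complex.norm_exp]
  congr 1
  simp [mul_comm]

lemma laplace_integrable {w : ℂ} (hw : 0 < w.re) :
    IntegrableOn (fun t : ℝ => Complex.exp (-(t : ℂ) * w)) (Set.Ioi 0) := by
  refine Integrable.mono' (exp_neg_integrableOn_Ioi 0 hw)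
    ((Continuous.aestronglyMeasurable (by fun_prop)).restrict) ?_
  filter_upwards with t
  rw [norm_cexp_neg_mul]

lemma laplace_integral {w : ℂ} (hw : 0 < w.re) :
    ∫ t in Set.Ioi (0 : ℝ), Complex.exp (-(t : ℂ) * w) = 1 / w := by
  have hw0 : w ≠ 0 := fun h => by simp [h] at hw
  have hderiv : ∀ t ∈ Set.Ici (0 : ℝ),
      HasDerivAt (fun t : ℝ => -Complex.exp (-(t : ℂ) * w) / w)
        (Complex.exp (-(t : ℂ) * w)) t := by
    intro t _
    have h1 : HasDerivAt (fun t : ℝ => -(t : ℂ) * w) (-w) t := by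
      simpa using (Complex.ofRealCLM.hasDerivAt (x := t)).neg.mul_const w
    have h2 := (h1.cexp).neg.div_const w
    refine h2.congr_deriv ?_
    rw [mul_neg, neg_neg, mul_div_assoc, div_self hw0, mul_one]
  have htend : Tendsto (fun t : ℝ => -Complex.exp (-(t : ℂ) * w) / w) atTop (𝓝 0) := by
    rw [tendsto_zero_iff_norm_tendsto_zero]
    have : (fun t : ℝ => ‖-Complex.exp (-(t : ℂ) * w) / w‖) =
        fun t : ℝ => Real.exp (-w.re * t) / ‖w‖ := by
      funext t
      rw [norm_div, norm_neg, norm_cexp_neg_mul]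
    rw [this]
    have : Tendsto (fun t : ℝ => -w.re * t) atTop atBot :=
      Tendsto.neg_mul_atTop (by linarith : -w.re < 0) tendsto_const_nhds tendsto_id
    simpa using (Real.tendsto_exp_atBot.comp this).div_const ‖w‖
  have := integral_Ioi_of_hasDerivAt_of_tendsto' hderiv (laplace_integrable hw) htend
  rw [this]
  norm_num
  rw [neg_div, neg_neg, one_div]

lemma int_pi {d : ℕ} (g : Fin d → ℝ → ℂ) :
    ∫ θ : Fin d → ℝ in Set.univ.pi fun _ => Set.Icc (-Real.pi) Real.pi, ∏ j, g j (θ j) =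
      ∏ j, ∫ x in Set.Icc (-Real.pi) Real.pi, g j x := by
  rw [← MeasureTheory.integral_indicator (MeasurableSet.univ_pi fun _ => measurableSet_Icc)]
  have h : (Set.univ.pi fun _ : Fin d => Set.Icc (-Real.pi) Real.pi).indicator
      (fun θ => ∏ j, g j (θ j)) =
      fun θ => ∏ j, (Set.Icc (-Real.pi) Real.pi).indicator (g j) (θ j) := by
    funext θ
    by_cases h : θ ∈ Set.univ.pi fun _ : Fin d => Set.Icc (-Real.pi) Real.pi
    · rw [Set.indicator_of_mem h]
      exact Finset.prod_congr rfl fun j _ =>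
        (Set.indicator_of_mem (h j (Set.mem_univ j)) _).symm
    · rw [Set.indicator_of_notMem h]
      rw [Set.mem_univ_pi] at h
      push_neg at h
      obtain ⟨j, hj⟩ := h
      exact (Finset.prod_eq_zero (Finset.mem_univ j) (Set.indicator_of_notMem hj _)).symm
  rw [h, MeasureTheory.integral_fintype_prod_volume_eq_prod]
  exact Finset.prod_congr rfl fun j _ => MeasureTheory.integral_indicator measurableSet_Icc

lemma inner_eq (d : ℕ) (n : Fin d → ℤ) (z : ℂ) (t : ℝ) :
    (∫ θ : Fin d → ℝ in Set.univ.pi fun _ => Set.Icc (-Real.pi) Real.pi,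
      Complex.exp (Complex.I * ∑ j, (n j : ℂ) * (θ j : ℂ)) *
        Complex.exp (-(t : ℂ) * (2 * d - 2 * ∑ j, (Real.cos (θ j) : ℂ) - z)))
    = (2 * Real.pi : ℂ) ^ d *
      (Complex.exp (-(t : ℂ) * (2 * d - z)) * ∏ j, (besselI (n j).natAbs (2 * t) : ℂ)) := by
  have key : ∀ θ : Fin d → ℝ,
      Complex.exp (Complex.I * ∑ j, (n j : ℂ) * (θ j : ℂ)) *
        Complex.exp (-(t : ℂ) * (2 * d - 2 * ∑ j, (Real.cos (θ j) : ℂ) - z)) =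
      Complex.exp (-(t : ℂ) * (2 * d - z)) *
        ∏ j, (Complex.exp (Complex.I * (n j : ℂ) * ((θ j : ℝ) : ℂ)) *
          Complex.exp (((2 * t : ℝ) : ℂ) * (Real.cos (θ j) : ℂ))) := by
    intro θ
    rw [Finset.prod_mul_distrib, ← Complex.exp_sum, ← Complex.exp_sum]
    rw [show (Complex.I * ∑ j, (n j : ℂ) * (θ j : ℂ)) = ∑ j, Complex.I * (n j : ℂ) * (θ j : ℂ) by
      rw [Finset.mul_sum]; exact Finset.sum_congr rfl fun j _ => by ring]
    rw [show (-(t : ℂ) * (2 * d - 2 * ∑ j, (Real.cos (θ j) : ℂ) - z)) =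
        -(t : ℂ) * (2 * d - z) + ∑ j, ((2 * t : ℝ) : ℂ) * Real.cos (θ j) by
      push_cast
      rw [show ∑ x, 2 * (t : ℂ) * Complex.cos ((θ x : ℝ) : ℂ)
        = 2 * (t : ℂ) * ∑ i, Complex.cos ((θ i : ℝ) : ℂ) from (Finset.mul_sum _ _ _).symm]
      ring]
    rw [Complex.exp_add]
    ring
  simp_rw [key]
  rw [MeasureTheory.integral_const_mul, int_pi fun j x =>
    Complex.exp (Complex.I * (n j : ℂ) * (x : ℂ)) *
      Complex.exp (((2 * t : ℝ) : ℂ) * (Real.cos x : ℂ))]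
  rw [show ∀ (f : Fin d → ℂ), (∏ j, f j) = ∏ j, f j from fun _ => rfl]
  rw [Finset.prod_congr rfl fun j (_ : j ∈ Finset.univ) => bessel_integral (n j) (2 * t)]
  rw [Finset.prod_mul_distrib, Finset.prod_const, Finset.card_univ, Fintype.card_fin]
  ring

/-- Laplace-transform representation of the resolvent for `Re z < 0`:
`G(z,n) = ∫₀^∞ e^{-t(2d-z)} Π_j I_{|n_j|}(2t) dt`. -/
theorem resolvent_eq_laplace_transform_besselI (d : ℕ) (hd : 0 < d) (n : Fin d → ℤ)
    (z : ℂ) (hz : z.re < 0) :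
    IntegrableOn (fun t : ℝ =>
      Complex.exp (-(t : ℂ) * (2 * d - z)) * ∏ j, (besselI (n j).natAbs (2 * t) : ℂ))
      (Set.Ioi 0) ∧
    G d z n = ∫ t in Set.Ioi (0 : ℝ),
      Complex.exp (-(t : ℂ) * (2 * d - z)) * ∏ j, (besselI (n j).natAbs (2 * t) : ℂ) := by
  set S : Set (Fin d → ℝ) := Set.univ.pi fun _ => Set.Icc (-Real.pi) Real.pi with hSdef
  set μ : Measure (Fin d → ℝ) := volume.restrict S with hμdef
  set ν : Measure ℝ := volume.restrict (Set.Ioi 0) with hνdef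
  haveI : IsFiniteMeasure μ := ⟨by
    rw [hμdef, Measure.restrict_apply_univ]
    exact (isCompact_univ_pi fun _ => isCompact_Icc).measure_lt_top⟩
  set f : (Fin d → ℝ) → ℝ → ℂ := fun θ t =>
    Complex.exp (Complex.I * ∑ j, (n j : ℂ) * (θ j : ℂ)) *
      Complex.exp (-(t : ℂ) * (2 * d - 2 * ∑ j, (Real.cos (θ j) : ℂ) - z)) with hfdef
  -- real part facts
  have hA : ∀ θ : Fin d → ℝ, 0 ≤ 2 * d - 2 * ∑ j, Real.cos (θ j) := by
    intro θ
    have h1 : ∑ j, Real.cos (θ j) ≤ ∑ _j : Fin d, (1 : ℝ) :=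
      Finset.sum_le_sum fun j _ => Real.cos_le_one _
    simp only [Finset.sum_const, Finset.card_univ, Fintype.card_fin, smul_eq_mul, nsmul_eq_mul, mul_one] at h1
    linarith
  have hre : ∀ θ : Fin d → ℝ, (2 * (d : ℂ) - 2 * ∑ j, (Real.cos (θ j) : ℂ) - z).re =
      (2 * d - 2 * ∑ j, Real.cos (θ j)) - z.re := by
    intro θ
    have : (2 * (d : ℂ) - 2 * ∑ j, (Real.cos (θ j) : ℂ) - z) =
        ((2 * d - 2 * ∑ j, Real.cos (θ j) : ℝ) : ℂ) - z := by
      push_cast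
      ring
    rw [this, Complex.sub_re, Complex.ofReal_re]
  have hw : ∀ θ : Fin d → ℝ, 0 < (2 * (d : ℂ) - 2 * ∑ j, (Real.cos (θ j) : ℂ) - z).re := by
    intro θ
    rw [hre θ]
    linarith [hA θ]
  -- the first exponential has norm 1
  have hnorm1 : ∀ θ : Fin d → ℝ,
      ‖Complex.exp (Complex.I * ∑ j, (n j : ℂ) * (θ j : ℂ))‖ = 1 := by
    intro θ
    have hs : (∑ j, (n j : ℂ) * (θ j : ℂ)) = ((∑ j, (n j : ℝ) * θ j : ℝ) : ℂ) := by
      push_cast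
      ring
    rw [hs, Complex.norm_exp]
    simp
  -- integrability of uncurry f on the product
  have hF : Integrable (Function.uncurry f) (μ.prod ν) := by
    have hcont : Continuous (Function.uncurry f) := by
      apply Continuous.mul
      · apply Complex.continuous_exp.comp
        apply continuous_const.mul
        apply continuous_finset_sum
        intro j _
        exact continuous_const.mul (Complex.continuous_ofReal.comp
          ((continuous_apply j).comp continuous_fst))
      · apply Complex.continuous_exp.comp
        apply Continuous.mul
        · exact (Complex.continuous_ofReal.comp continuous_snd).neg
        · apply Continuous.sub
          apply Continuous.sub continuous_const
          apply continuous_const.mul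
          apply continuous_finset_sum
          intro j _
          exact Complex.continuous_ofReal.comp
            (Real.continuous_cos.comp ((continuous_apply j).comp continuous_fst))
          exact continuous_const
    have hg2 : Integrable (fun t : ℝ => Real.exp (t * z.re)) ν := by
      refine (exp_neg_integrableOn_Ioi 0 (neg_pos.mpr hz)).congr
        (Filter.Eventually.of_forall fun t => by ring_nf)
    have hg : Integrable (fun p : (Fin d → ℝ) × ℝ =>
        (fun _ : Fin d → ℝ => (1 : ℝ)) p.1 * Real.exp (p.2 * z.re)) (μ.prod ν) :=
      (integrable_const 1).mul_prod hg2
    have hae : ∀ᵐ p : (Fin d → ℝ) × ℝ ∂μ.prod ν, 0 < p.2 := by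
      rw [MeasureTheory.ae_iff]
      have hsub : {p : (Fin d → ℝ) × ℝ | ¬ 0 < p.2} ⊆ Set.univ ×ˢ (Set.Ioi (0 : ℝ))ᶜ :=
        fun p hp => ⟨Set.mem_univ _, hp⟩
      refine measure_mono_null hsub ?_
      rw [Measure.prod_prod]
      have : ν (Set.Ioi (0 : ℝ))ᶜ = 0 := by
        rw [hνdef, Measure.restrict_apply measurableSet_Ioi.compl]
        simp [Set.Iic_inter_Ioi, Set.Ioc_self]
      rw [this, mul_zero]
    refine Integrable.mono' hg hcont.aestronglyMeasurable ?_
    filter_upwards [hae] with p hp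
    show ‖f p.1 p.2‖ ≤ (1 : ℝ) * Real.exp (p.2 * z.re)
    simp only [hfdef]
    rw [norm_mul, hnorm1 p.1, one_mul, norm_cexp_neg_mul, one_mul]
    rw [Real.exp_le_exp, hre p.1]
    have := hA p.1
    nlinarith
  -- pointwise identity in θ
  have h1 : ∀ θ : Fin d → ℝ,
      Complex.exp (Complex.I * ∑ j, (n j : ℂ) * (θ j : ℂ)) /
        (2 * d - 2 * ∑ j, (Real.cos (θ j) : ℂ) - z) = ∫ t, f θ t ∂ν := by
    intro θ
    rw [hfdef]
    simp only
    rw [hνdef, MeasureTheory.integral_const_mul, laplace_integral (hw θ), mul_one_div]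
  -- the inner θ-integral
  have h2 : ∀ t : ℝ, (∫ θ, f θ t ∂μ) = (2 * Real.pi : ℂ) ^ d *
      (Complex.exp (-(t : ℂ) * (2 * d - z)) * ∏ j, (besselI (n j).natAbs (2 * t) : ℂ)) :=
    fun t => inner_eq d n z t
  have hswap := MeasureTheory.integral_integral_swap hF
  have hpi : ((2 * Real.pi : ℂ)) ≠ 0 := by
    simp [Real.pi_ne_zero]
  constructor
  · have hInt : Integrable (fun t => ∫ θ, f θ t ∂μ) ν := by
      have := hF.integral_prod_right
      exact this
    have hInt2 := hInt.const_mul (((2 * Real.pi : ℂ)) ^ d)⁻¹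
    refine hInt2.congr (Filter.Eventually.of_forall fun t => ?_)
    show (((2 * Real.pi : ℂ)) ^ d)⁻¹ * (∫ θ, f θ t ∂μ) = _
    rw [h2 t, ← mul_assoc, inv_mul_cancel₀ (pow_ne_zero _ hpi), one_mul]
  · rw [G]
    have hG1 : (∫ θ : Fin d → ℝ in S,
        Complex.exp (Complex.I * ∑ j, (n j : ℂ) * (θ j : ℂ)) /
          (2 * d - 2 * ∑ j, (Real.cos (θ j) : ℂ) - z)) =
        ∫ θ, ∫ t, f θ t ∂ν ∂μ :=
      MeasureTheory.integral_congr_ae (Filter.Eventually.of_forall h1)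
    rw [hG1, hswap]
    have hG2 : (∫ t, ∫ θ, f θ t ∂μ ∂ν) = (2 * Real.pi : ℂ) ^ d *
        ∫ t, Complex.exp (-(t : ℂ) * (2 * d - z)) *
          ∏ j, (besselI (n j).natAbs (2 * t) : ℂ) ∂ν := by
      rw [← MeasureTheory.integral_const_mul]
      exact MeasureTheory.integral_congr_ae (Filter.Eventually.of_forall fun t => h2 t)
    rw [hG2, ← mul_assoc]
    rw [zpow_neg, zpow_natCast, inv_mul_cancel₀ (pow_ne_zero _ hpi), one_mul]
end

section
/- Let d = 1. For every z ∈ ℂ ∖ [0,4] and every n ∈ ℤ one has G(z,n) = (2 − z − √(−z)·√(4−z))^{|n|} / (2^{|n|} · √(−z)·√(4−z)). -/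
open MeasureTheory

namespace ResolventAux
open Complex Real intervalIntegral

section
variable (z : ℂ) (hz : ∀ x : ℝ, 0 ≤ x → x ≤ 4 → z ≠ (x : ℂ))

lemma cpow_half_re (x : ℂ) (hx : x ≠ 0) :
    (x ^ ((1:ℂ)/2)).re = Real.exp ((Complex.log x).re / 2) * Real.cos (x.arg / 2) := by
  rw [Complex.cpow_def_of_ne_zero hx, Complex.exp_re]
  simp [Complex.mul_re, Complex.mul_im, Complex.log_im]
  ring_nf

lemma cpow_half_im (x : ℂ) (hx : x ≠ 0) :
    (x ^ ((1:ℂ)/2)).im = Real.exp ((Complex.log x).re / 2) * Real.sin (x.arg / 2) := by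
  rw [Complex.cpow_def_of_ne_zero hx, Complex.exp_im]
  simp [Complex.mul_re, Complex.mul_im, Complex.log_im]
  ring_nf

lemma sqrt_quadrant (x : ℂ) (hx : x ≠ 0) :
    (0 < x.im → 0 < (x ^ ((1:ℂ)/2)).re ∧ 0 < (x ^ ((1:ℂ)/2)).im) ∧
    (x.im < 0 → 0 < (x ^ ((1:ℂ)/2)).re ∧ (x ^ ((1:ℂ)/2)).im < 0) ∧
    (x.im = 0 → 0 < x.re → 0 < (x ^ ((1:ℂ)/2)).re ∧ (x ^ ((1:ℂ)/2)).im = 0) ∧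
    (x.im = 0 → x.re < 0 → (x ^ ((1:ℂ)/2)).re = 0 ∧ 0 < (x ^ ((1:ℂ)/2)).im) := by
  have hre := cpow_half_re x hx
  have him := cpow_half_im x hx
  have hπ := Real.pi_pos
  have hE : 0 < Real.exp ((Complex.log x).re / 2) := Real.exp_pos _
  have harg1 : -π < x.arg := Complex.neg_pi_lt_arg x
  have harg2 : x.arg ≤ π := Complex.arg_le_pi x
  refine ⟨fun h => ?_, fun h => ?_, fun h1 h2 => ?_, fun h1 h2 => ?_⟩
  · have h0 : 0 < x.arg := by
      rcases (Complex.arg_nonneg_iff.2 h.le).lt_or_eq with h' | h'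
      · exact h'
      · have := (Complex.arg_eq_zero_iff.1 h'.symm).2; linarith
    have hlt : x.arg < π := lt_of_le_of_ne harg2 fun he => by
      have := (Complex.arg_eq_pi_iff.1 he).2; linarith
    refine ⟨?_, ?_⟩
    · rw [hre]
      exact mul_pos hE (Real.cos_pos_of_mem_Ioo ⟨by linarith, by linarith⟩)
    · rw [him]
      exact mul_pos hE (Real.sin_pos_of_pos_of_lt_pi (by linarith) (by linarith))
  · have h0 : x.arg < 0 := Complex.arg_neg_iff.2 h
    refine ⟨?_, ?_⟩
    · rw [hre]
      exact mul_pos hE (Real.cos_pos_of_mem_Ioo ⟨by linarith, by linarith⟩)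
    · rw [him]
      exact mul_neg_of_pos_of_neg hE
        (Real.sin_neg_of_neg_of_neg_pi_lt (by linarith) (by linarith))
  · have h0 : x.arg = 0 := Complex.arg_eq_zero_iff.2 ⟨h2.le, h1⟩
    rw [hre, him, h0]
    simp [hE]
  · have h0 : x.arg = π := Complex.arg_eq_pi_iff.2 ⟨h2, h1⟩
    rw [hre, him, h0]
    simp [Real.cos_pi_div_two, Real.sin_pi_div_two, hE]

include hz

lemma hz_ne_zero : z ≠ 0 := by
  intro h; exact hz 0 le_rfl (by norm_num) (by simp [h])

lemma hz_ne_four : (4:ℂ) - z ≠ 0 := by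
  intro h
  exact hz 4 (by norm_num) le_rfl (by push_cast; linear_combination -h)

lemma key_pos :
    0 < ((-z) ^ ((1:ℂ)/2)).re * ((4 - z) ^ ((1:ℂ)/2)).re +
        ((-z) ^ ((1:ℂ)/2)).im * ((4 - z) ^ ((1:ℂ)/2)).im := by
  have h0 : -z ≠ 0 := neg_ne_zero.2 (hz_ne_zero z hz)
  have h4 : (4:ℂ) - z ≠ 0 := hz_ne_four z hz
  obtain ⟨q1a, q2a, q3a, q4a⟩ := sqrt_quadrant (-z) h0
  obtain ⟨q1b, q2b, q3b, q4b⟩ := sqrt_quadrant ((4:ℂ) - z) h4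
  have hima : (-z).im = -z.im := by simp
  have himb : ((4:ℂ) - z).im = -z.im := by simp
  rcases lt_trichotomy z.im 0 with h | h | h
  · obtain ⟨r1, r2⟩ := q1a (by rw [hima]; linarith)
    obtain ⟨r3, r4⟩ := q1b (by rw [himb]; linarith)
    nlinarith
  · -- z real
    have hre : z.re < 0 ∨ 4 < z.re := by
      by_contra hc
      push_neg at hc
      exact hz z.re hc.1 hc.2 (Complex.ext (by simp) (by simp [h]))
    rcases hre with h' | h'
    · obtain ⟨r1, r2⟩ := q3a (by rw [hima, h]; ring) (by simp; linarith)
      obtain ⟨r3, r4⟩ := q3b (by rw [himb, h]; ring) (by simp; linarith)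
      nlinarith
    · obtain ⟨r1, r2⟩ := q4a (by rw [hima, h]; ring) (by simp; linarith)
      obtain ⟨r3, r4⟩ := q4b (by rw [himb, h]; ring) (by simp; linarith)
      nlinarith
  · obtain ⟨r1, r2⟩ := q2a (by rw [hima]; linarith)
    obtain ⟨r3, r4⟩ := q2b (by rw [himb]; linarith)
    nlinarith

lemma abs_w_lt_one :
    ‖(2 - z - (-z) ^ ((1:ℂ)/2) * (4 - z) ^ ((1:ℂ)/2)) / 2‖ < 1 := by
  have h0 : -z ≠ 0 := neg_ne_zero.2 (hz_ne_zero z hz)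
  have h4 : (4:ℂ) - z ≠ 0 := hz_ne_four z hz
  set a : ℂ := (-z) ^ ((1:ℂ)/2) with ha
  set b : ℂ := ((4:ℂ) - z) ^ ((1:ℂ)/2) with hb
  have ha2 : a * a = -z := by
    rw [ha, ← Complex.cpow_add _ _ h0]; norm_num
  have hb2 : b * b = 4 - z := by
    rw [hb, ← Complex.cpow_add _ _ h4]; norm_num
  have ha0 : a ≠ 0 := by
    intro h; rw [h] at ha2; simp at ha2; exact h0 (by rw [ha2]; ring)
  set u : ℂ := 2 - z with hu
  set s : ℂ := a * b with hs
  have huab : u = (a * a + b * b) / 2 := by rw [ha2, hb2]; ring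
  have hab := key_pos z hz
  rw [← ha, ← hb] at hab
  have hkey : u.re * s.re + u.im * s.im =
      (a.re * b.re + a.im * b.im) * ((a.re^2 + a.im^2) + (b.re^2 + b.im^2)) / 2 := by
    rw [huab, hs]
    simp only [Complex.mul_re, Complex.mul_im, Complex.add_re, Complex.add_im,
      Complex.div_re, Complex.div_im, Complex.normSq_apply]
    norm_num
    ring
  have hA : 0 < a.re^2 + a.im^2 := by
    have := Complex.normSq_pos.2 ha0
    rw [Complex.normSq_apply] at this; nlinarith
  have hpos : 0 < u.re * s.re + u.im * s.im := by
    rw [hkey]; nlinarith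
  have hlt : Complex.normSq (u - s) < Complex.normSq (u + s) := by
    simp only [Complex.normSq_apply, Complex.sub_re, Complex.sub_im, Complex.add_re,
      Complex.add_im]
    nlinarith
  have hprod : (u - s) * (u + s) = 4 := by
    have hss : s * s = (-z) * (4 - z) := by rw [hs]; rw [mul_mul_mul_comm, ha2, hb2]
    rw [hu]; linear_combination -hss
  have hpq : ‖u - s‖ * ‖u + s‖ = 4 := by
    rw [← norm_mul, hprod]; simp
  have hp2 : (‖u - s‖)^2 < (‖u + s‖)^2 := by
    rw [Complex.sq_norm, Complex.sq_norm]; exact hlt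
  have hppos : 0 < ‖u - s‖ := by
    rcases (norm_nonneg (u - s)).lt_or_eq with h | h
    · exact h
    · exfalso; rw [← h] at hpq; simp at hpq
  have hqpos : 0 < ‖u + s‖ := by nlinarith
  have hplt : ‖u - s‖ < 2 := by nlinarith
  calc ‖(u - s) / 2‖ = ‖u - s‖ / 2 := by
        rw [norm_div]; simp
    _ < 1 := by linarith
end

lemma exp_integral (m : ℤ) :
    ∫ t in Set.Icc (-Real.pi) Real.pi, Complex.exp ((m:ℂ) * t * Complex.I) =
      if m = 0 then 2 * (Real.pi : ℂ) else 0 := by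
  have hle : -Real.pi ≤ Real.pi := by linarith [Real.pi_pos]
  rw [MeasureTheory.integral_Icc_eq_integral_Ioc,
    ← intervalIntegral.integral_of_le hle]
  rcases eq_or_ne m 0 with h | h
  · simp [h, intervalIntegral.integral_const]
    push_cast
    ring
  · simp only [h, if_false]
    have hc : (m : ℂ) * Complex.I ≠ 0 := by
      simp [Complex.I_ne_zero, Complex.ext_iff]
      exact_mod_cast h
    have : ∀ t : ℝ, (m:ℂ) * t * Complex.I = ((m:ℂ) * Complex.I) * t := fun t => by ring
    simp_rw [this]
    rw [integral_exp_mul_complex hc]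
    have h1 : (m:ℂ) * Complex.I * (Real.pi : ℂ) = m * ((Real.pi:ℂ) * Complex.I) := by ring
    have h2 : (m:ℂ) * Complex.I * ((-Real.pi : ℝ) : ℂ) = ((-m : ℤ) : ℂ) * ((Real.pi:ℂ) * Complex.I) := by
      push_cast; ring
    rw [h1, h2, Complex.exp_int_mul, Complex.exp_int_mul, Complex.exp_pi_mul_I]
    rw [zpow_neg]
    rcases Int.even_or_odd m with he | ho
    · rw [he.neg_one_zpow]; simp
    · rw [Odd.neg_one_zpow ho]; norm_num

-- pointwise identity
lemma pointwise (z w s : ℂ) (n : ℤ) (t : ℝ)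
    (hw : ‖w‖ < 1) (hw0 : w ≠ 0) (hs0 : s ≠ 0)
    (hsw : s * w = 1 - w^2) (hw2 : w^2 + 1 = (2 - z) * w) :
    ∑' k : ℕ, (s⁻¹ * w^(k+1) * Complex.exp (((n - 1 - k : ℤ):ℂ) * t * Complex.I)
        + s⁻¹ * w^k * Complex.exp (((n + k : ℤ):ℂ) * t * Complex.I))
      = Complex.exp (Complex.I * ((n:ℂ) * t)) / (2 - 2 * (Real.cos t : ℂ) - z) := by
  set x : ℂ := Complex.exp ((t:ℂ) * Complex.I) with hxdef
  set y : ℂ := Complex.exp (-(t:ℂ) * Complex.I) with hydef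
  set E : ℂ := Complex.exp (Complex.I * ((n:ℂ) * t)) with hEdef
  have hxy : x * y = 1 := by rw [hxdef, hydef, ← Complex.exp_add]; simp
  have hxabs : ‖x‖ = 1 := Complex.norm_exp_ofReal_mul_I t
  have hyabs : ‖y‖ = 1 := by
    have : -(t:ℂ) * Complex.I = ((-t : ℝ):ℂ) * Complex.I := by push_cast; ring
    rw [hydef, this]; exact Complex.norm_exp_ofReal_mul_I (-t)
  have hwy : ‖w * y‖ < 1 := by rw [norm_mul, hyabs, mul_one]; exact hw
  have hwx : ‖w * x‖ < 1 := by rw [norm_mul, hxabs, mul_one]; exact hw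
  have hcos : x + y = 2 * (Real.cos t : ℂ) := by
    rw [hxdef, hydef, Complex.exp_mul_I, Complex.exp_mul_I, Complex.ofReal_cos]
    simp [Complex.cos_neg, Complex.sin_neg]
    ring
  -- rewrite terms
  have hterm : ∀ k : ℕ,
      (s⁻¹ * w^(k+1) * Complex.exp (((n - 1 - k : ℤ):ℂ) * t * Complex.I)
        + s⁻¹ * w^k * Complex.exp (((n + k : ℤ):ℂ) * t * Complex.I))
      = (s⁻¹ * E * (w*y)) * (w*y)^k + (s⁻¹ * E) * (w*x)^k := by
    intro k
    have e1 : ((n - 1 - k : ℤ):ℂ) * t * Complex.I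
        = Complex.I * ((n:ℂ) * t) + ((k+1 : ℕ):ℂ) * (-(t:ℂ) * Complex.I) := by
      push_cast; ring
    have e2 : ((n + k : ℤ):ℂ) * t * Complex.I
        = Complex.I * ((n:ℂ) * t) + ((k : ℕ):ℂ) * ((t:ℂ) * Complex.I) := by
      push_cast; ring
    rw [e1, e2, Complex.exp_add, Complex.exp_add, Complex.exp_nat_mul,
      Complex.exp_nat_mul, ← hxdef, ← hydef, ← hEdef]
    rw [mul_pow, mul_pow]
    ring
  rw [tsum_congr hterm]
  have s1 : Summable fun k : ℕ => (s⁻¹ * E * (w*y)) * (w*y)^k :=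
    (summable_geometric_of_norm_lt_one hwy).mul_left _
  have s2 : Summable fun k : ℕ => (s⁻¹ * E) * (w*x)^k :=
    (summable_geometric_of_norm_lt_one hwx).mul_left _
  rw [Summable.tsum_add s1 s2, tsum_mul_left, tsum_mul_left,
    tsum_geometric_of_norm_lt_one hwy, tsum_geometric_of_norm_lt_one hwx]
  -- algebra
  have hx0 : x ≠ 0 := Complex.exp_ne_zero _
  have hy0 : y ≠ 0 := Complex.exp_ne_zero _
  have h1wy : 1 - w * y ≠ 0 := by
    intro h
    have hh : ‖w * y‖ = 1 := by
      rw [show w * y = 1 by linear_combination -h]; simp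
    linarith [hwy, hh.symm.le]
  have h1wx : 1 - w * x ≠ 0 := by
    intro h
    have hh : ‖w * x‖ = 1 := by
      rw [show w * x = 1 by linear_combination -h]; simp
    linarith [hwx, hh.symm.le]
  have hD : 2 - 2 * (Real.cos t : ℂ) - z ≠ 0 := by
    intro h
    have hfac : w * (2 - 2 * (Real.cos t : ℂ) - z) = (x - w) * (1 - w*x) * y := by
      linear_combination w * hcos + (w*x - w^2 - 1) * hxy - hw2
    rw [h, mul_zero] at hfac
    have hxw : x - w ≠ 0 := by
      intro hh
      have : x = w := by linear_combination hh
      rw [this] at hxabs; linarith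
    have := mul_ne_zero (mul_ne_zero hxw h1wx) hy0
    exact this hfac.symm
  have hfac : w * (2 - 2 * (Real.cos t : ℂ) - z) = (x - w) * (1 - w*x) * y := by
    linear_combination w * hcos + (w*x - w^2 - 1) * hxy - hw2
  rw [eq_div_iff hD]
  rw [Complex.ofReal_cos] at hfac ⊢
  field_simp
  linear_combination (s*E) * hfac +
    (-E*(2 - 2*Complex.cos (t:ℂ) - z)*w^2 + s*E*(1-w*x)) * hxy -
    (E*(2 - 2*Complex.cos (t:ℂ) - z)) * hsw

lemma central (z w s : ℂ) (n : ℤ)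
    (hw : ‖w‖ < 1) (hw0 : w ≠ 0) (hs0 : s ≠ 0)
    (hsw : s * w = 1 - w^2) (hw2 : w^2 + 1 = (2 - z) * w) :
    ∫ t in Set.Icc (-Real.pi) Real.pi,
        Complex.exp (Complex.I * ((n:ℂ) * t)) / (2 - 2 * (Real.cos t : ℂ) - z)
      = 2 * (Real.pi:ℂ) * w ^ n.natAbs / s := by
  have hπ := Real.pi_pos
  set F : ℕ → ℝ → ℂ := fun k t =>
    s⁻¹ * w^(k+1) * Complex.exp (((n - 1 - k : ℤ):ℂ) * t * Complex.I)
      + s⁻¹ * w^k * Complex.exp (((n + k : ℤ):ℂ) * t * Complex.I) with hF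
  have hcont : ∀ (c : ℂ) (m : ℤ), Continuous fun t : ℝ => c * Complex.exp ((m:ℂ) * t * Complex.I) := by
    intro c m
    exact continuous_const.mul (Complex.continuous_exp.comp (by continuity))
  have hFcont : ∀ k, Continuous (F k) := fun k => (hcont _ _).add (hcont _ _)
  have hFint : ∀ k, IntegrableOn (F k) (Set.Icc (-Real.pi) Real.pi) := fun k =>
    (hFcont k).integrableOn_Icc
  have hnorm : ∀ (c : ℂ) (m : ℤ) (t : ℝ), ‖c * Complex.exp ((m:ℂ) * t * Complex.I)‖
      = ‖c‖ := by
    intro c m t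
    rw [norm_mul]
    have : (m:ℂ) * t * Complex.I = ((m * t : ℝ):ℂ) * Complex.I := by push_cast; ring
    rw [this, Complex.norm_exp_ofReal_mul_I, mul_one]
  have hFbound : ∀ k (t : ℝ), ‖F k t‖ ≤ ‖s⁻¹‖ * (‖w‖)^(k+1)
      + ‖s⁻¹‖ * (‖w‖)^k := by
    intro k t
    refine le_trans (norm_add_le _ _) ?_
    rw [hnorm, hnorm, norm_mul, norm_mul, norm_pow, norm_pow]
  set r : ℝ := ‖w‖ with hr
  set C : ℝ := ‖s⁻¹‖ with hC
  have hr0 : 0 ≤ r := norm_nonneg w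
  have hC0 : 0 ≤ C := norm_nonneg s⁻¹
  have hgeo : Summable (fun k : ℕ => (C * r^(k+1) + C * r^k) * (2 * Real.pi)) := by
    have h := (summable_geometric_of_lt_one hr0 hw).mul_left (2 * Real.pi * C * (r + 1))
    exact h.congr fun k => by ring
  have hsum : Summable fun k => ∫ t in Set.Icc (-Real.pi) Real.pi, ‖F k t‖ := by
    refine Summable.of_nonneg_of_le (fun k => integral_nonneg fun t => norm_nonneg _)
      (fun k => ?_) hgeo
    have h1 : ∫ t in Set.Icc (-Real.pi) Real.pi, ‖F k t‖
        ≤ ∫ _t in Set.Icc (-Real.pi) Real.pi, (C * r^(k+1) + C * r^k) := by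
      apply setIntegral_mono_on ((hFint k).norm) (integrableOn_const (by
        rw [Real.volume_Icc]; exact ENNReal.ofReal_ne_top)) measurableSet_Icc
      intro t _
      exact hFbound k t
    refine h1.trans ?_
    rw [setIntegral_const, Real.volume_real_Icc_of_le (by linarith), smul_eq_mul]
    have : π - -π = 2 * π := by ring
    rw [this]
    exact le_of_eq (by ring)
  have hpt : ∀ t : ℝ, ∑' k, F k t
      = Complex.exp (Complex.I * ((n:ℂ) * t)) / (2 - 2 * (Real.cos t : ℂ) - z) :=
    fun t => pointwise z w s n t hw hw0 hs0 hsw hw2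
  have hswap := MeasureTheory.integral_tsum_of_summable_integral_norm
    (μ := volume.restrict (Set.Icc (-Real.pi) Real.pi)) (F := F) (fun k => hFint k) hsum
  have hint1 : ∀ (c : ℂ) (m : ℤ), IntegrableOn (fun t : ℝ => c * Complex.exp ((m:ℂ)*t*Complex.I))
      (Set.Icc (-Real.pi) Real.pi) := fun c m => (hcont c m).integrableOn_Icc
  have hIk : ∀ k : ℕ, (∫ t in Set.Icc (-Real.pi) Real.pi, F k t)
      = s⁻¹ * w^(k+1) * (if (n - 1 - k : ℤ) = 0 then 2*(Real.pi:ℂ) else 0)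
        + s⁻¹ * w^k * (if (n + k : ℤ) = 0 then 2*(Real.pi:ℂ) else 0) := by
    intro k
    calc (∫ t in Set.Icc (-Real.pi) Real.pi, F k t)
        = (∫ t in Set.Icc (-Real.pi) Real.pi,
            s⁻¹ * w^(k+1) * Complex.exp (((n - 1 - k : ℤ):ℂ) * t * Complex.I))
          + ∫ t in Set.Icc (-Real.pi) Real.pi,
            s⁻¹ * w^k * Complex.exp (((n + k : ℤ):ℂ) * t * Complex.I) := by
          rw [hF]; exact integral_add (hint1 _ _) (hint1 _ _)
      _ = _ := by rw [MeasureTheory.integral_const_mul, MeasureTheory.integral_const_mul, exp_integral, exp_integral]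
  have hgoal : (∫ t in Set.Icc (-Real.pi) Real.pi, ∑' k, F k t) = 2 * (Real.pi:ℂ) * w ^ n.natAbs / s := by
    rw [← hswap, tsum_congr hIk]
    have hs1 : Summable (fun k : ℕ =>
        s⁻¹ * w^(k+1) * (if (n - 1 - k : ℤ) = 0 then 2*(Real.pi:ℂ) else 0)) := by
      apply summable_of_ne_finset_zero (s := {(n-1).toNat})
      intro b hb
      simp only [Finset.mem_singleton] at hb
      rw [if_neg (by omega), mul_zero]
    have hs2 : Summable (fun k : ℕ =>
        s⁻¹ * w^k * (if (n + k : ℤ) = 0 then 2*(Real.pi:ℂ) else 0)) := by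
      apply summable_of_ne_finset_zero (s := {(-n).toNat})
      intro b hb
      simp only [Finset.mem_singleton] at hb
      rw [if_neg (by omega), mul_zero]
    rw [Summable.tsum_add hs1 hs2]
    rcases le_or_gt 1 n with h | h
    · have hT1 : (∑' k : ℕ, s⁻¹ * w^(k+1) * (if (n - 1 - k : ℤ) = 0 then 2*(Real.pi:ℂ) else 0))
          = s⁻¹ * w^(n.natAbs) * (2*(Real.pi:ℂ)) := by
        rw [tsum_eq_single (n-1).toNat (fun b hb => by rw [if_neg (by omega), mul_zero])]
        rw [if_pos (by omega), show (n-1).toNat + 1 = n.natAbs by omega]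
      have hT2 : (∑' k : ℕ, s⁻¹ * w^k * (if (n + k : ℤ) = 0 then 2*(Real.pi:ℂ) else 0)) = 0 := by
        rw [tsum_congr (fun k => by rw [if_neg (by omega), mul_zero]), tsum_zero]
      rw [hT1, hT2, add_zero, div_eq_mul_inv]
      ring
    · have hT1 : (∑' k : ℕ, s⁻¹ * w^(k+1) * (if (n - 1 - k : ℤ) = 0 then 2*(Real.pi:ℂ) else 0))
          = 0 := by
        rw [tsum_congr (fun k => by rw [if_neg (by omega), mul_zero]), tsum_zero]
      have hT2 : (∑' k : ℕ, s⁻¹ * w^k * (if (n + k : ℤ) = 0 then 2*(Real.pi:ℂ) else 0))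
          = s⁻¹ * w^(n.natAbs) * (2*(Real.pi:ℂ)) := by
        rw [tsum_eq_single (-n).toNat (fun b hb => by rw [if_neg (by omega), mul_zero])]
        rw [if_pos (by omega), show (-n).toNat = n.natAbs by omega]
      rw [hT1, hT2, zero_add, div_eq_mul_inv]
      ring
  rw [← hgoal]
  exact setIntegral_congr_fun measurableSet_Icc fun t _ => (hpt t).symm

lemma G_one (z : ℂ) (n : ℤ) :
    G 1 z ![n] = (2 * (Real.pi : ℂ))⁻¹ *
      ∫ t : ℝ in Set.Icc (-Real.pi) Real.pi,
        Complex.exp (Complex.I * ((n : ℂ) * (t : ℂ))) / (2 - 2 * (Real.cos t : ℂ) - z) := by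
  rw [G]
  congr 1
  · norm_num
  have e := MeasureTheory.volume_preserving_funUnique (Fin 1) ℝ
  have emb : MeasurableEmbedding (MeasurableEquiv.funUnique (Fin 1) ℝ) :=
    (MeasurableEquiv.funUnique (Fin 1) ℝ).measurableEmbedding
  have hpre : (Set.univ.pi fun _ : Fin 1 => Set.Icc (-Real.pi) Real.pi) =
      (MeasurableEquiv.funUnique (Fin 1) ℝ) ⁻¹' Set.Icc (-Real.pi) Real.pi := by
    ext θ
    simp [MeasurableEquiv.funUnique, Equiv.funUnique, Pi.le_def, Fin.forall_fin_one]
  rw [hpre, ← e.setIntegral_preimage_emb emb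
    (fun t => Complex.exp (Complex.I * ((n : ℂ) * (t : ℂ))) / (2 - 2 * (Real.cos t : ℂ) - z))
    (Set.Icc (-Real.pi) Real.pi)]
  apply setIntegral_congr_fun (by measurability)
  intro θ _
  simp [MeasurableEquiv.funUnique, Equiv.funUnique, Fin.sum_univ_one]


end ResolventAux

open ResolventAux in
/-- Closed formula for the one-dimensional resolvent kernel:
`G(z,n) = (2 - z - √(-z)√(4-z))^{|n|} / (2^{|n|} √(-z)√(4-z))` for `z ∉ [0,4]`,
where the square roots are principal complex powers. -/
theorem resolvent_dim_one_closed_formula (n : ℤ) (z : ℂ)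
    (hz : ∀ x : ℝ, 0 ≤ x → x ≤ 4 → z ≠ (x : ℂ)) :
    G 1 z ![n] =
      (2 - z - (-z) ^ ((1 : ℂ) / 2) * (4 - z) ^ ((1 : ℂ) / 2)) ^ n.natAbs /
        (2 ^ n.natAbs * ((-z) ^ ((1 : ℂ) / 2) * (4 - z) ^ ((1 : ℂ) / 2))) := by
  have h0 : -z ≠ 0 := neg_ne_zero.2 (hz_ne_zero z hz)
  have h4 : (4:ℂ) - z ≠ 0 := hz_ne_four z hz
  set a : ℂ := (-z) ^ ((1:ℂ)/2) with ha
  set b : ℂ := ((4:ℂ) - z) ^ ((1:ℂ)/2) with hb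
  have ha2 : a * a = -z := by rw [ha, ← Complex.cpow_add _ _ h0]; norm_num
  have hb2 : b * b = 4 - z := by rw [hb, ← Complex.cpow_add _ _ h4]; norm_num
  set s : ℂ := a * b with hs
  set w : ℂ := (2 - z - s) / 2 with hwdef
  have hss : s * s = (-z) * (4 - z) := by rw [hs, mul_mul_mul_comm, ha2, hb2]
  have hs0 : s ≠ 0 := by
    intro h
    rw [h, zero_mul] at hss
    exact (mul_ne_zero h0 h4) hss.symm
  have hw2 : w^2 + 1 = (2 - z) * w := by
    rw [hwdef]; linear_combination (1/4 : ℂ) * hss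
  have hsw : s * w = 1 - w^2 := by
    rw [hwdef]; linear_combination (-1/4 : ℂ) * hss
  have hw0 : w ≠ 0 := by
    intro h
    rw [h] at hw2
    simp at hw2
  have hw : ‖w‖ < 1 := abs_w_lt_one z hz
  have hπ := Real.pi_pos
  rw [G_one z n, central z w s n hw hw0 hs0 hsw hw2]
  have h2 : ((2:ℂ)) ^ n.natAbs ≠ 0 := pow_ne_zero _ two_ne_zero
  have hπ0 : (2 * (Real.pi:ℂ)) ≠ 0 := by
    simp [Complex.ofReal_ne_zero, Real.pi_ne_zero]
  rw [hwdef, div_pow]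
  field_simp
end

section
/- Let d ∈ ℕ, k ∈ ℕ₀ and n ∈ ℤ^d. The number of sequences (w₁,…,w_k) with each wᵢ ∈ {e₁,−e₁,…,e_d,−e_d} ⊂ ℤ^d and w₁ + ⋯ + w_k = n equals Σ_{α ∈ ℕ₀^d, 2(α₁+⋯+α_d) = k−|n|} k! / (α₁!⋯α_d! · (α₁+|n₁|)!⋯(α_d+|n_d|)!) when k ≥ |n| and k − |n| is even, and equals 0 otherwise. -/
open Finset

lemma card_fiber_count {β : Type*} [Fintype β] [DecidableEq β] :
    ∀ (k : ℕ) (c : β → ℕ),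
    ((Finset.univ.filter fun w : Fin k → β =>
        ∀ b, (Finset.univ.filter fun i => w i = b).card = c b).card : ℚ)
    = if ∑ b, c b = k then (k.factorial : ℚ) / ∏ b, ((c b).factorial : ℚ) else 0 := by
  intro k
  induction k with
  | zero =>
    intro c
    by_cases hc : ∀ b, c b = 0
    · have h1 : (Finset.univ.filter fun w : Fin 0 → β =>
          ∀ b, (Finset.univ.filter fun i => w i = b).card = c b) = Finset.univ := by
        ext w; simp [hc]
      have h2 : ∑ b, c b = 0 := Finset.sum_eq_zero fun b _ => hc b
      simp [h1, h2, hc]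
    · push_neg at hc
      obtain ⟨b0, hb0⟩ := hc
      have h1 : (Finset.univ.filter fun w : Fin 0 → β =>
          ∀ b, (Finset.univ.filter fun i => w i = b).card = c b) = ∅ := by
        ext w; simp only [mem_filter, mem_univ, true_and, Finset.notMem_empty, iff_false]
        intro h
        exact hb0 (by simpa using (h b0).symm)
      have h2 : ∑ b, c b ≠ 0 := fun h => hb0 (Finset.sum_eq_zero_iff.mp h b0 (mem_univ _))
      simp only [h1, Finset.card_empty, Nat.cast_zero, h2, if_false]
  | succ k ih =>
    intro c
    have hcount : ∀ (w : Fin (k+1) → β) (b' : β),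
        (univ.filter fun i => w i = b').card
        = (univ.filter fun i => Fin.tail w i = b').card + (if w 0 = b' then 1 else 0) := by
      intro w b'
      rw [Finset.card_filter, Finset.card_filter, Fin.sum_univ_succ, add_comm]
      rfl
    have hsplit : ((univ.filter fun w : Fin (k+1) → β =>
        ∀ b, (univ.filter fun i => w i = b).card = c b).card : ℚ)
        = ∑ b : β, (((univ.filter fun w : Fin (k+1) → β =>
            (∀ b', (univ.filter fun i => w i = b').card = c b') ∧ w 0 = b)).card : ℚ) := by
      push_cast
      rw [Finset.card_eq_sum_card_fiberwise (f := fun w : Fin (k+1) → β => w 0)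
        (t := univ) (fun _ _ => mem_univ _)]
      push_cast
      exact Finset.sum_congr rfl fun b _ => by rw [Finset.filter_filter]
    have hfiber : ∀ b : β,
        ((univ.filter fun w : Fin (k+1) → β =>
            (∀ b', (univ.filter fun i => w i = b').card = c b') ∧ w 0 = b)).card
        = if c b = 0 then 0 else
            (univ.filter fun w : Fin k → β =>
              ∀ b', (univ.filter fun i => w i = b').card
                 = (if b' = b then c b - 1 else c b')).card := by
      intro b
      by_cases hcb : c b = 0
      · rw [if_pos hcb, Finset.card_eq_zero]
        ext w
        simp only [mem_filter, mem_univ, true_and, Finset.notMem_empty, iff_false, not_and]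
        intro hco h0
        have := hco b
        rw [hcount w b, if_pos h0] at this
        omega
      · rw [if_neg hcb]
        refine Finset.card_nbij' (fun w => Fin.tail w) (fun w' => Fin.cons b w')
          ?_ ?_ ?_ ?_
        · intro w hw
          simp only [mem_coe, mem_filter, mem_univ, true_and] at hw ⊢
          obtain ⟨hco, h0⟩ := hw
          intro b'
          have := hco b'
          rw [hcount w b', h0] at this
          by_cases hbb : b' = b
          · subst hbb; rw [if_pos rfl] at this ⊢; omega
          · rw [if_neg (fun h => hbb h.symm)] at this; rw [if_neg hbb]; omega
        · intro w' hw'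
          simp only [mem_coe, mem_filter, mem_univ, true_and] at hw' ⊢
          constructor
          · intro b'
            have := hw' b'
            rw [hcount (Fin.cons b w') b']
            have ht : Fin.tail (Fin.cons (α := fun _ => β) b w') = w' := by simp
            have hz : (Fin.cons (α := fun _ => β) b w') 0 = b := by simp
            rw [ht, hz, this]
            by_cases hbb : b' = b
            · subst hbb
              rw [if_pos rfl, if_pos rfl]
              omega
            · rw [if_neg hbb, if_neg (fun h => hbb h.symm)]
              omega
          · simp
        · intro w hw
          simp only [mem_coe, mem_filter, mem_univ, true_and] at hw
          show Fin.cons b (Fin.tail w) = w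
          rw [← hw.2]
          exact Fin.cons_self_tail w
        · intro w' _
          simp
    rw [hsplit]
    have hfac : ∀ b : β, ((c b).factorial : ℚ) ≠ 0 := fun b => by
      exact_mod_cast (Nat.factorial_pos (c b)).ne'
    have hFne : (∏ b, ((c b).factorial : ℚ)) ≠ 0 := Finset.prod_ne_zero_iff.mpr fun b _ => hfac b
    by_cases hk : ∑ b, c b = k + 1
    · rw [if_pos hk]
      have key : ∀ b : β,
          (((univ.filter fun w : Fin (k+1) → β =>
            (∀ b', (univ.filter fun i => w i = b').card = c b') ∧ w 0 = b)).card : ℚ)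
          = (c b : ℚ) * ((k.factorial : ℚ) / ∏ b', ((c b').factorial : ℚ)) := by
        intro b
        rw [hfiber b]
        by_cases hcb : c b = 0
        · rw [if_pos hcb, hcb]; simp
        · rw [if_neg hcb, ih]
          set c' : β → ℕ := fun b' => if b' = b then c b - 1 else c b' with hc'
          have hsum' : ∑ b', c' b' = k := by
            have h1 : ∀ b' : β, c' b' + (if b' = b then 1 else 0) = c b' := by
              intro b'
              simp only [hc']
              by_cases h : b' = b
              · rw [if_pos h, if_pos h, h]; omega
              · rw [if_neg h, if_neg h]
                omega
            have h2 : ∑ b', (c' b' + (if b' = b then 1 else 0)) = ∑ b', c b' :=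
              Finset.sum_congr rfl fun b' _ => h1 b'
            rw [Finset.sum_add_distrib, Finset.sum_ite_eq' univ b (fun _ => 1),
              if_pos (mem_univ b)] at h2
            omega
          rw [if_pos hsum']
          have hprodrel : (∏ b', ((c b').factorial : ℚ))
              = (c b : ℚ) * ∏ b', ((c' b').factorial : ℚ) := by
            rw [← Finset.mul_prod_erase univ _ (mem_univ b),
              ← Finset.mul_prod_erase univ (fun b' => ((c' b').factorial : ℚ)) (mem_univ b)]
            have h3 : ∏ b' ∈ univ.erase b, ((c b').factorial : ℚ)
                = ∏ b' ∈ univ.erase b, ((c' b').factorial : ℚ) :=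
              Finset.prod_congr rfl fun b' hb' => by
                simp [hc', (Finset.mem_erase.mp hb').1]
            rw [h3, ← mul_assoc]
            congr 1
            have h4 : c b = (c b - 1) + 1 := by omega
            rw [hc']
            simp only [if_pos rfl]
            rw [h4, Nat.factorial_succ]
            push_cast
            ring
          have hF'ne : (∏ b', ((c' b').factorial : ℚ)) ≠ 0 :=
            Finset.prod_ne_zero_iff.mpr fun b' _ => by
              exact_mod_cast (Nat.factorial_pos (c' b')).ne'
          have hcbne : ((c b : ℕ) : ℚ) ≠ 0 := Nat.cast_ne_zero.mpr hcb
          have hre : (∏ b_1, (((if b_1 = b then c b - 1 else c b_1).factorial : ℕ) : ℚ))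
              = ∏ b', ((c' b').factorial : ℚ) := rfl
          rw [hre, hprodrel, mul_div_assoc', mul_div_mul_left _ _ hcbne]
      rw [Finset.sum_congr rfl fun b _ => key b, ← Finset.sum_mul]
      have : (∑ b, (c b : ℚ)) = ((k+1 : ℕ) : ℚ) := by
        rw [← Nat.cast_sum, hk]
      rw [this, Nat.factorial_succ]
      push_cast
      ring
    · rw [if_neg hk]
      refine Finset.sum_eq_zero fun b _ => ?_
      rw [hfiber b]
      by_cases hcb : c b = 0
      · rw [if_pos hcb]; simp
      · rw [if_neg hcb, ih]
        have hsum' : ∑ b', (if b' = b then c b - 1 else c b') ≠ k := by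
          intro h
          apply hk
          have h1 : ∀ b' : β, (if b' = b then c b - 1 else c b') + (if b' = b then 1 else 0) = c b' := by
            intro b'
            by_cases hh : b' = b
            · rw [if_pos hh, if_pos hh, hh]; omega
            · rw [if_neg hh, if_neg hh]
              omega
          have h2 : ∑ b', ((if b' = b then c b - 1 else c b') + (if b' = b then 1 else 0)) = ∑ b', c b' :=
            Finset.sum_congr rfl fun b' _ => h1 b'
          rw [Finset.sum_add_distrib, Finset.sum_ite_eq' univ b (fun _ => 1),
            if_pos (mem_univ b)] at h2
          omega
        rw [if_neg hsum']

/-- The number of `k`-step nearest-neighbour lattice walks from `0` to `n` in `ℤ^d`,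
i.e. sequences `(w₁,…,w_k)` of signed standard basis vectors summing to `n`, equals
`Σ_{α : 2|α| = k - |n|} k! / (α₁!⋯α_d! (α₁+|n₁|)!⋯(α_d+|n_d|)!)` when `k ≥ |n|` and
`k - |n|` is even, and `0` otherwise. -/
theorem card_lattice_walks (d k : ℕ) (hd : 0 < d) (n : Fin d → ℤ) :
    ((Finset.univ.filter fun w : Fin k → Fin d × Bool =>
        (∑ i, (Pi.single (w i).1 (if (w i).2 then 1 else -1) : Fin d → ℤ)) = n).card
      : ℚ)
    = if (∑ j, (n j).natAbs) ≤ k ∧ Even (k - ∑ j, (n j).natAbs) then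
        ∑ α ∈ (Fintype.piFinset fun _ : Fin d => Finset.range (k + 1)).filter
            (fun α => 2 * ∑ j, α j = k - ∑ j, (n j).natAbs),
          (k.factorial : ℚ) /
            ((∏ j, ((α j).factorial : ℚ)) * ∏ j, ((α j + (n j).natAbs).factorial : ℚ))
      else 0 := by
  classical
  set absn := ∑ j, (n j).natAbs with habsn
  set S := Finset.univ.filter fun w : Fin k → Fin d × Bool =>
      (∑ i, (Pi.single (w i).1 (if (w i).2 then 1 else -1) : Fin d → ℤ)) = n with hS
  -- value of the walk sum at coordinate j
  have hval : ∀ (w : Fin k → Fin d × Bool) (j : Fin d),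
      (∑ i, (Pi.single (w i).1 (if (w i).2 then 1 else -1) : Fin d → ℤ)) j
      = ((univ.filter fun i => w i = (j, true)).card : ℤ)
        - ((univ.filter fun i => w i = (j, false)).card : ℤ) := by
    intro w j
    rw [Finset.sum_apply, Finset.card_filter, Finset.card_filter]
    push_cast
    rw [← Finset.sum_sub_distrib]
    refine Finset.sum_congr rfl fun i _ => ?_
    rcases hwi : w i with ⟨a, b⟩
    simp only [hwi, Pi.single_apply, Prod.mk.injEq]
    by_cases haj : j = a
    · subst haj
      cases b <;> simp
    · have haj' : ¬ a = j := fun h => haj h.symm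
      cases b <;> simp [haj, haj']
  have hmem : ∀ w : Fin k → Fin d × Bool, w ∈ S ↔ ∀ j,
      ((univ.filter fun i => w i = (j, true)).card : ℤ)
        - ((univ.filter fun i => w i = (j, false)).card : ℤ) = n j := by
    intro w
    rw [hS, mem_filter]
    simp only [mem_univ, true_and, funext_iff]
    exact forall_congr' fun j => by rw [hval w j]
  have hk0 : ∀ w : Fin k → Fin d × Bool,
      ∑ b : Fin d × Bool, (univ.filter fun i => w i = b).card = k := by
    intro w
    have h := Finset.card_eq_sum_card_fiberwise (f := w) (s := univ) (t := univ)
      (fun _ _ => mem_univ _)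
    simp only [Finset.card_univ, Fintype.card_fin] at h
    exact h.symm
  -- the α-map
  set Amap : (Fin k → Fin d × Bool) → (Fin d → ℕ) :=
    fun w j => (univ.filter fun i => w i = (j, true)).card - (n j).toNat with hAmap
  have hfacts : ∀ w ∈ S, ∀ j,
      (univ.filter fun i => w i = (j, true)).card = Amap w j + (n j).toNat ∧
      (univ.filter fun i => w i = (j, false)).card = Amap w j + (-(n j)).toNat := by
    intro w hw j
    have h1 := (hmem w).mp hw j
    simp only [hAmap]
    constructor <;> omega
  have hksum : ∀ w ∈ S, k = 2 * ∑ j, Amap w j + absn := by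
    intro w hw
    have h1 := hk0 w
    rw [Fintype.sum_prod_type] at h1
    -- h1 : ∑ j, ∑ b : Bool, ... = k  (check orientation)
    have h2 : ∀ j : Fin d, ∑ b : Bool, (univ.filter fun i => w i = (j, b)).card
        = 2 * Amap w j + (n j).natAbs := by
      intro j
      rw [Fintype.sum_bool]
      have := hfacts w hw j
      omega
    rw [Finset.sum_congr rfl fun j _ => h2 j, Finset.sum_add_distrib,
      ← Finset.mul_sum] at h1
    omega
  by_cases hcond : absn ≤ k ∧ Even (k - absn)
  · rw [if_pos hcond]
    set t := (Fintype.piFinset fun _ : Fin d => Finset.range (k + 1)).filter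
        (fun α => 2 * ∑ j, α j = k - absn) with ht
    have hmaps : ∀ w ∈ S, Amap w ∈ t := by
      intro w hw
      rw [ht, mem_filter, Fintype.mem_piFinset]
      have hk := hksum w hw
      refine ⟨fun j => ?_, by omega⟩
      rw [Finset.mem_range]
      have hle : (univ.filter fun i => w i = (j, true)).card ≤ k := by
        calc (univ.filter fun i => w i = (j, true)).card ≤ (univ : Finset (Fin k)).card :=
          Finset.card_filter_le _ _
        _ = k := Finset.card_fin k
      simp only [hAmap]
      omega
    rw [Finset.card_eq_sum_card_fiberwise hmaps]
    push_cast
    refine Finset.sum_congr rfl fun α hα => ?_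
    rw [ht, mem_filter] at hα
    obtain ⟨hα1, hα2⟩ := hα
    set C : Fin d × Bool → ℕ :=
      fun b => α b.1 + (if b.2 then (n b.1).toNat else (-(n b.1)).toNat) with hC
    have hct : ∀ j, C (j, true) = α j + (n j).toNat := fun j => by simp [hC]
    have hcf : ∀ j, C (j, false) = α j + (-(n j)).toNat := fun j => by simp [hC]
    have hset : S.filter (fun w => Amap w = α)
        = univ.filter (fun w : Fin k → Fin d × Bool =>
            ∀ b, (univ.filter fun i => w i = b).card = C b) := by
      ext w
      simp only [mem_filter, mem_univ, true_and]
      constructor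
      · rintro ⟨hwS, hwA⟩
        rintro ⟨j, bb⟩
        have := hfacts w hwS j
        have hAj : Amap w j = α j := congrFun hwA j
        cases bb
        · rw [hcf j]; omega
        · rw [hct j]; omega
      · intro hco
        have hwS : w ∈ S := by
          rw [hmem]
          intro j
          have h1 := hco (j, true)
          have h2 := hco (j, false)
          rw [hct j] at h1
          rw [hcf j] at h2
          omega
        refine ⟨hwS, funext fun j => ?_⟩
        have h1 := hco (j, true)
        rw [hct j] at h1
        simp only [hAmap]
        omega
    rw [hset, card_fiber_count k C]
    have hCsum : ∑ b : Fin d × Bool, C b = k := by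
      rw [Fintype.sum_prod_type]
      have h2 : ∀ j : Fin d, ∑ b : Bool, C (j, b) = 2 * α j + (n j).natAbs := by
        intro j
        rw [Fintype.sum_bool, hct j, hcf j]
        omega
      rw [Finset.sum_congr rfl fun j _ => h2 j, Finset.sum_add_distrib, ← Finset.mul_sum]
      omega
    rw [if_pos hCsum]
    congr 1
    rw [Fintype.prod_prod_type]
    have h3 : ∀ j : Fin d, ∏ b : Bool, ((C (j, b)).factorial : ℚ)
        = ((α j).factorial : ℚ) * ((α j + (n j).natAbs).factorial : ℚ) := by
      intro j
      rw [Fintype.prod_bool, hct j, hcf j]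
      rcases le_or_gt 0 (n j) with h | h
      · have e1 : (n j).toNat = (n j).natAbs := by omega
        have e2 : (-(n j)).toNat = 0 := by omega
        rw [e1, e2, add_zero, mul_comm]
      · have e1 : (n j).toNat = 0 := by omega
        have e2 : (-(n j)).toNat = (n j).natAbs := by omega
        rw [e1, e2, add_zero]
    rw [Finset.prod_congr rfl fun j _ => h3 j, Finset.prod_mul_distrib]
  · rw [if_neg hcond]
    have hSempty : S = ∅ := by
      ext w
      simp only [Finset.notMem_empty, iff_false]
      intro hw
      have := hksum w hw
      exact hcond ⟨by omega, ⟨∑ j, Amap w j, by omega⟩⟩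
    rw [hSempty]
    simp
end

section
/- Let d = 2 and z ∈ ℂ ∖ [0,8]. Then: (i) for every (m,l) ∈ ℤ², 𝒫(m,l) = (1/4)|m||l|(z−4) − 𝒫₀(0) + 𝒫₀(m) + 𝒫₀(l) + ((z−4)²/4)·Σ_{μ=−|m|}^{|m|} Σ_{ν=−|l|}^{|l|} (|m|−|μ|)(|l|−|ν|)·𝒫(μ,ν); and (ii) for every (m,l) ∈ ℕ₀², 𝒬(m,l) = −1/4 − ((z−4)/4)·Σ_{μ=−m}^{m} Σ_{ν=−l}^{l} 𝒫(μ,ν). -/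
open MeasureTheory

/-- `𝒫(m,l) = (-1)^{m+l} G(z, m+l, m-l)`. -/
noncomputable def P (z : ℂ) (m l : ℤ) : ℂ := (-1 : ℂ) ^ (m + l) * G 2 z ![m + l, m - l]

/-- `𝒬(m,l) = (-1)^{m+l} G(z, m+l+1, m-l)`. -/
noncomputable def Q (z : ℂ) (m l : ℤ) : ℂ := (-1 : ℂ) ^ (m + l) * G 2 z ![m + l + 1, m - l]

/-- `𝒫₀(m) = (-1)^m G(z, m, m)`. -/
noncomputable def P₀ (z : ℂ) (m : ℤ) : ℂ := (-1 : ℂ) ^ m * G 2 z ![m, m]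

noncomputable section
namespace PQR

open MeasureTheory Real Set

def box : Set (ℝ × ℝ) := Icc (-π) π ×ˢ Icc (-π) π

def den (z : ℂ) (p : ℝ × ℝ) : ℂ := 2 * 2 - 2 * ((Real.cos p.1 : ℂ) + (Real.cos p.2 : ℂ)) - z

def g (z : ℂ) (a b : ℤ) : ℂ :=
  ∫ p : ℝ × ℝ in box, Complex.exp (Complex.I * ((a : ℂ) * p.1 + (b : ℂ) * p.2)) / den z p

theorem den_ne (z : ℂ) (hz : ∀ x : ℝ, 0 ≤ x → x ≤ 8 → z ≠ (x : ℂ)) (p : ℝ × ℝ) : den z p ≠ 0 := by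
  have h1 : -1 ≤ Real.cos p.1 := Real.neg_one_le_cos p.1
  have h2 : -1 ≤ Real.cos p.2 := Real.neg_one_le_cos p.2
  have h3 : Real.cos p.1 ≤ 1 := Real.cos_le_one p.1
  have h4 : Real.cos p.2 ≤ 1 := Real.cos_le_one p.2
  have key : z ≠ ((4 - 2 * (Real.cos p.1 + Real.cos p.2) : ℝ) : ℂ) := by
    apply hz <;> nlinarith
  intro h
  apply key
  have : (2 * 2 - 2 * ((Real.cos p.1 : ℂ) + (Real.cos p.2 : ℂ)) : ℂ)
      = ((4 - 2 * (Real.cos p.1 + Real.cos p.2) : ℝ) : ℂ) := by push_cast; ring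
  rw [den, sub_eq_zero] at h
  rw [← h, this]

theorem continuous_integrand (z : ℂ) (hz : ∀ x : ℝ, 0 ≤ x → x ≤ 8 → z ≠ (x : ℂ)) (a b : ℤ) :
    Continuous fun p : ℝ × ℝ =>
      Complex.exp (Complex.I * ((a : ℂ) * p.1 + (b : ℂ) * p.2)) / den z p := by
  apply Continuous.div
  · exact Complex.continuous_exp.comp <| by fun_prop
  · unfold den; fun_prop
  · exact den_ne z hz

theorem integrable_integrand (z : ℂ) (hz : ∀ x : ℝ, 0 ≤ x → x ≤ 8 → z ≠ (x : ℂ)) (a b : ℤ) :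
    IntegrableOn (fun p : ℝ × ℝ =>
      Complex.exp (Complex.I * ((a : ℂ) * p.1 + (b : ℂ) * p.2)) / den z p) box := by
  exact (continuous_integrand z hz a b).continuousOn.integrableOn_compact
    (isCompact_Icc.prod isCompact_Icc)
theorem cos_ofReal_eq (x : ℝ) : (Real.cos x : ℂ)
    = (Complex.exp (Complex.I * x) + (Complex.exp (Complex.I * x))⁻¹) / 2 := by
  rw [Complex.ofReal_cos]
  simp only [Complex.cos]
  rw [← Complex.exp_neg]
  ring_nf

theorem int1 (k : ℤ) :
    (∫ x in Icc (-π) π, Complex.exp (Complex.I * (k * x))) = if k = 0 then (2 * π : ℂ) else 0 := by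
  split_ifs with hk
  · subst hk
    simp only [Int.cast_zero, zero_mul, mul_zero, Complex.exp_zero]
    rw [setIntegral_const]
    rw [measureReal_def, Real.volume_Icc]
    rw [ENNReal.toReal_ofReal (by linarith [pi_pos] : (0:ℝ) ≤ π - -π)]
    push_cast
    ring_nf
    norm_num
  · have hc : (Complex.I * k : ℂ) ≠ 0 := by
      simp [Complex.I_ne_zero, Int.cast_injective.ne_iff, hk]
    have : ∀ x : ℝ, Complex.I * (k * x) = (Complex.I * k) * x := by intro x; ring
    simp only [this]
    rw [integral_Icc_eq_integral_Ioc,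
      ← intervalIntegral.integral_of_le (by linarith [pi_pos] : -π ≤ π),
      integral_exp_mul_complex hc]
    have h1 : Complex.I * k * π = (k : ℂ) * (π * Complex.I) := by ring
    have h2 : Complex.I * k * ((-π : ℝ) : ℂ) = ((-k : ℤ) : ℂ) * (π * Complex.I) := by push_cast; ring
    rw [h1, h2, Complex.exp_int_mul, Complex.exp_int_mul, Complex.exp_pi_mul_I]
    have : ((-1 : ℂ)) ^ (-k) = ((-1 : ℂ)) ^ k := by
      rw [zpow_neg]
      rw [inv_eq_of_mul_eq_one_right]
      rw [← mul_zpow]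
      norm_num
    rw [this, sub_self, zero_div]

theorem orth (a b : ℤ) :
    (∫ p : ℝ × ℝ in box, Complex.exp (Complex.I * ((a:ℂ) * p.1 + (b:ℂ) * p.2)))
      = if a = 0 ∧ b = 0 then (4 * π ^ 2 : ℂ) else 0 := by
  have hsplit : ∀ p : ℝ × ℝ, Complex.exp (Complex.I * ((a:ℂ) * p.1 + (b:ℂ) * p.2))
      = Complex.exp (Complex.I * ((a:ℂ) * p.1)) * Complex.exp (Complex.I * ((b:ℂ) * p.2)) := by
    intro p; rw [← Complex.exp_add]; ring_nf
  simp only [hsplit]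
  rw [box, Measure.volume_eq_prod,
    setIntegral_prod_mul (fun x : ℝ => Complex.exp (Complex.I * ((a:ℂ) * x)))
      (fun y : ℝ => Complex.exp (Complex.I * ((b:ℂ) * y))), int1, int1]
  split_ifs with h h1 h2 <;> simp_all <;> ring
theorem g_swap (z : ℂ) (a b : ℤ) : g z a b = g z b a := by
  rw [g, g]
  have := Measure.measurePreserving_swap (μ := (volume : Measure ℝ)) (ν := (volume : Measure ℝ))
  rw [← Measure.volume_eq_prod] at this
  rw [← this.setIntegral_preimage_emb MeasurableEquiv.prodComm.measurableEmbedding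
    (fun p : ℝ × ℝ => Complex.exp (Complex.I * ((a : ℂ) * p.1 + (b : ℂ) * p.2)) / den z p) box]
  have hset : Prod.swap ⁻¹' box = box := by
    ext ⟨x, y⟩
    simp only [box, Set.mem_preimage, Prod.swap_prod_mk, Set.mem_prod, Set.mem_Icc]
    tauto
  rw [hset]
  apply setIntegral_congr_fun (by rw [box]; exact measurableSet_Icc.prod measurableSet_Icc)
  intro p _
  simp only [den, Prod.fst_swap, Prod.snd_swap]
  ring_nf

theorem g_neg2 (z : ℂ) (a b : ℤ) : g z a (-b) = g z a b := by
  rw [g, g]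
  set T : ℝ × ℝ ≃ᵐ ℝ × ℝ := (MeasurableEquiv.refl ℝ).prodCongr (MeasurableEquiv.neg ℝ) with hT
  have hmp : MeasurePreserving T volume volume := by
    rw [Measure.volume_eq_prod]
    exact (MeasurePreserving.id volume).prod (Measure.measurePreserving_neg volume)
  rw [← hmp.setIntegral_preimage_emb T.measurableEmbedding
    (fun p : ℝ × ℝ => Complex.exp (Complex.I * ((a : ℂ) * p.1 + (b : ℂ) * p.2)) / den z p) box]
  have hset : ⇑T ⁻¹' box = box := by
    ext ⟨x, y⟩
    simp only [hT, box, MeasurableEquiv.prodCongr, MeasurableEquiv.neg, MeasurableEquiv.refl,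
      MeasurableEquiv.coe_mk, Equiv.prodCongr_apply, Equiv.coe_refl, Equiv.neg_apply,
      Set.mem_preimage, Prod.map_apply, id_eq, Set.mem_prod, Set.mem_Icc]
    constructor <;> rintro ⟨⟨h1, h2⟩, h3, h4⟩ <;> exact ⟨⟨h1, h2⟩, by linarith, by linarith⟩
  rw [hset]
  apply setIntegral_congr_fun (by rw [box]; exact measurableSet_Icc.prod measurableSet_Icc)
  intro p _
  simp only [hT, MeasurableEquiv.prodCongr, MeasurableEquiv.neg, MeasurableEquiv.refl,
    MeasurableEquiv.coe_mk, Equiv.prodCongr_apply, Equiv.coe_refl, Equiv.neg_apply, Prod.map_fst,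
    Prod.map_snd, id_eq, den, Real.cos_neg]
  push_cast
  ring_nf
theorem key_pointwise (z : ℂ) (hz : ∀ x : ℝ, 0 ≤ x → x ≤ 8 → z ≠ (x : ℂ)) (a b : ℤ) (p : ℝ × ℝ) :
    (4 - z) * (Complex.exp (Complex.I * ((a : ℂ) * p.1 + (b : ℂ) * p.2)) / den z p)
      - Complex.exp (Complex.I * (((a+1 : ℤ) : ℂ) * p.1 + (b : ℂ) * p.2)) / den z p
      - Complex.exp (Complex.I * (((a-1 : ℤ) : ℂ) * p.1 + (b : ℂ) * p.2)) / den z p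
      - Complex.exp (Complex.I * ((a : ℂ) * p.1 + ((b+1 : ℤ) : ℂ) * p.2)) / den z p
      - Complex.exp (Complex.I * ((a : ℂ) * p.1 + ((b-1 : ℤ) : ℂ) * p.2)) / den z p
      = Complex.exp (Complex.I * ((a : ℂ) * p.1 + (b : ℂ) * p.2)) := by
  obtain ⟨x, y⟩ := p
  have hD := den_ne z hz (x, y)
  set u := Complex.exp (Complex.I * x) with hu
  set v := Complex.exp (Complex.I * y) with hv
  set E := Complex.exp (Complex.I * ((a : ℂ) * x + (b : ℂ) * y)) with hE
  have hu0 : u ≠ 0 := Complex.exp_ne_zero _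
  have hv0 : v ≠ 0 := Complex.exp_ne_zero _
  have e1 : Complex.exp (Complex.I * (((a+1 : ℤ) : ℂ) * x + (b : ℂ) * y)) = E * u := by
    rw [hE, hu, ← Complex.exp_add]; congr 1; push_cast; ring
  have e2 : Complex.exp (Complex.I * (((a-1 : ℤ) : ℂ) * x + (b : ℂ) * y)) = E * u⁻¹ := by
    rw [hE, hu, ← Complex.exp_neg, ← Complex.exp_add]; congr 1; push_cast; ring
  have e3 : Complex.exp (Complex.I * ((a : ℂ) * x + ((b+1 : ℤ) : ℂ) * y)) = E * v := by
    rw [hE, hv, ← Complex.exp_add]; congr 1; push_cast; ring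
  have e4 : Complex.exp (Complex.I * ((a : ℂ) * x + ((b-1 : ℤ) : ℂ) * y)) = E * v⁻¹ := by
    rw [hE, hv, ← Complex.exp_neg, ← Complex.exp_add]; congr 1; push_cast; ring
  have hden : den z (x, y) = 2 * 2 - 2 * ((u + u⁻¹) / 2 + (v + v⁻¹) / 2) - z := by
    rw [den]; rw [cos_ofReal_eq x, cos_ofReal_eq y]
  have hD' := hD
  rw [hden] at hD'
  have hnum : (4 - z) * E - E * u - E * u⁻¹ - E * v - E * v⁻¹
      = E * (2 * 2 - 2 * ((u + u⁻¹) / 2 + (v + v⁻¹) / 2) - z) := by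
    field_simp
    ring
  rw [e1, e2, e3, e4, hden, ← mul_div_assoc, div_sub_div_same, div_sub_div_same,
    div_sub_div_same, div_sub_div_same, hnum, mul_div_assoc, div_self hD', mul_one]

theorem gF (z : ℂ) (hz : ∀ x : ℝ, 0 ≤ x → x ≤ 8 → z ≠ (x : ℂ)) (a b : ℤ) :
    (4 - z) * g z a b - g z (a+1) b - g z (a-1) b - g z a (b+1) - g z a (b-1)
      = if a = 0 ∧ b = 0 then (4 * π ^ 2 : ℂ) else 0 := by
  have hint := integrable_integrand z hz
  have I0 : Integrable (fun p : ℝ × ℝ =>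
      (4 - z) * (Complex.exp (Complex.I * ((a : ℂ) * p.1 + (b : ℂ) * p.2)) / den z p))
      (volume.restrict box) := (hint a b).const_mul (4 - z)
  have I1 : Integrable (fun p : ℝ × ℝ =>
      (4 - z) * (Complex.exp (Complex.I * ((a : ℂ) * p.1 + (b : ℂ) * p.2)) / den z p)
      - Complex.exp (Complex.I * (((a+1 : ℤ) : ℂ) * p.1 + (b : ℂ) * p.2)) / den z p)
      (volume.restrict box) := I0.sub (hint (a+1) b)
  have I2 : Integrable (fun p : ℝ × ℝ =>
      (4 - z) * (Complex.exp (Complex.I * ((a : ℂ) * p.1 + (b : ℂ) * p.2)) / den z p)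
      - Complex.exp (Complex.I * (((a+1 : ℤ) : ℂ) * p.1 + (b : ℂ) * p.2)) / den z p
      - Complex.exp (Complex.I * (((a-1 : ℤ) : ℂ) * p.1 + (b : ℂ) * p.2)) / den z p)
      (volume.restrict box) := I1.sub (hint (a-1) b)
  have I3 : Integrable (fun p : ℝ × ℝ =>
      (4 - z) * (Complex.exp (Complex.I * ((a : ℂ) * p.1 + (b : ℂ) * p.2)) / den z p)
      - Complex.exp (Complex.I * (((a+1 : ℤ) : ℂ) * p.1 + (b : ℂ) * p.2)) / den z p
      - Complex.exp (Complex.I * (((a-1 : ℤ) : ℂ) * p.1 + (b : ℂ) * p.2)) / den z p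
      - Complex.exp (Complex.I * ((a : ℂ) * p.1 + ((b+1 : ℤ) : ℂ) * p.2)) / den z p)
      (volume.restrict box) := I2.sub (hint a (b+1))
  have East : (∫ p : ℝ × ℝ in box,
      ((4 - z) * (Complex.exp (Complex.I * ((a : ℂ) * p.1 + (b : ℂ) * p.2)) / den z p)
      - Complex.exp (Complex.I * (((a+1 : ℤ) : ℂ) * p.1 + (b : ℂ) * p.2)) / den z p
      - Complex.exp (Complex.I * (((a-1 : ℤ) : ℂ) * p.1 + (b : ℂ) * p.2)) / den z p
      - Complex.exp (Complex.I * ((a : ℂ) * p.1 + ((b+1 : ℤ) : ℂ) * p.2)) / den z p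
      - Complex.exp (Complex.I * ((a : ℂ) * p.1 + ((b-1 : ℤ) : ℂ) * p.2)) / den z p))
      = (4 - z) * g z a b - g z (a+1) b - g z (a-1) b - g z a (b+1) - g z a (b-1) := by
    rw [g, g, g, g, g]
    rw [integral_sub I3 (hint a (b-1)), integral_sub I2 (hint a (b+1)),
      integral_sub I1 (hint (a-1) b), integral_sub I0 (hint (a+1) b), integral_const_mul]
  rw [← East, ← orth a b]
  apply setIntegral_congr_fun (by rw [box]; exact measurableSet_Icc.prod measurableSet_Icc)
  intro p _
  exact key_pointwise z hz a b p
theorem G_eq (z : ℂ) (a b : ℤ) :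
    G 2 z ![a, b] = (2 * (Real.pi : ℂ)) ^ (-(2:ℕ) : ℤ) * g z a b := by
  rw [G, g]
  congr 1
  have hset : (Set.univ.pi fun _ : Fin 2 => Set.Icc (-π) π)
      = ⇑MeasurableEquiv.finTwoArrow ⁻¹' box := by
    ext θ
    simp [box, MeasurableEquiv.finTwoArrow, Pi.le_def, Fin.forall_fin_two]

  have hfun : ∀ θ : Fin 2 → ℝ,
      Complex.exp (Complex.I * ∑ j, ((![a,b] : Fin 2 → ℤ) j : ℂ) * (θ j : ℂ)) /
        (2 * (2:ℕ) - 2 * ∑ j, (Real.cos (θ j) : ℂ) - z)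
      = Complex.exp (Complex.I * ((a : ℂ) * (MeasurableEquiv.finTwoArrow θ).1
          + (b : ℂ) * (MeasurableEquiv.finTwoArrow θ).2))
          / den z (MeasurableEquiv.finTwoArrow θ) := by
    intro θ
    simp [Fin.sum_univ_two, den, MeasurableEquiv.finTwoArrow]
  simp only [hfun, hset]
  exact (volume_preserving_finTwoArrow ℝ).setIntegral_preimage_emb
    MeasurableEquiv.finTwoArrow.measurableEmbedding
    (fun p : ℝ × ℝ => Complex.exp (Complex.I * ((a:ℂ)*p.1 + (b:ℂ)*p.2)) / den z p) box
def GG (z : ℂ) (a b : ℤ) : ℂ := G 2 z ![a, b]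

theorem GG_eq (z : ℂ) (a b : ℤ) :
    GG z a b = (2 * (Real.pi : ℂ)) ^ (-(2:ℕ) : ℤ) * g z a b := G_eq z a b

theorem GG_swap (z : ℂ) (a b : ℤ) : GG z a b = GG z b a := by
  rw [GG_eq, GG_eq, g_swap]

theorem GG_neg2 (z : ℂ) (a b : ℤ) : GG z a (-b) = GG z a b := by
  rw [GG_eq, GG_eq, g_neg2]

theorem GGF (z : ℂ) (hz : ∀ x : ℝ, 0 ≤ x → x ≤ 8 → z ≠ (x : ℂ)) (a b : ℤ) :
    (4 - z) * GG z a b - GG z (a+1) b - GG z (a-1) b - GG z a (b+1) - GG z a (b-1)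
      = if a = 0 ∧ b = 0 then 1 else 0 := by
  have hπ : ((Real.pi : ℂ)) ≠ 0 := Complex.ofReal_ne_zero.mpr Real.pi_ne_zero
  set c : ℂ := (2 * (Real.pi : ℂ)) ^ (-(2:ℕ) : ℤ) with hcdef
  have hc : c * (4 * (Real.pi : ℂ) ^ 2) = 1 := by
    rw [hcdef, zpow_neg, zpow_natCast]
    field_simp
    ring
  have h := gF z hz a b
  simp only [GG_eq]
  by_cases hcond : a = 0 ∧ b = 0
  · rw [if_pos hcond] at h ⊢
    have h4 : (4 * (Real.pi : ℝ) ^ 2 : ℂ) = 4 * (Real.pi : ℂ) ^ 2 := by push_cast; ring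
    rw [h4] at h
    linear_combination c * h + hc
  · rw [if_neg hcond] at h ⊢
    linear_combination c * h

theorem GG_negneg (z : ℂ) (a b : ℤ) : GG z (-a) (-b) = GG z a b := by
  rw [GG_swap, GG_neg2, GG_swap, GG_neg2]

/-! sign lemmas -/

theorem sgn_congr (j k : ℤ) (h : Even (j - k)) : (-1:ℂ)^j = (-1:ℂ)^k := by
  obtain ⟨t, ht⟩ := h
  have hj : j = k + 2 * t := by omega
  rw [hj, zpow_add₀ (by norm_num : (-1:ℂ) ≠ 0), zpow_mul]
  norm_num

theorem sgnp (j : ℤ) : (-1:ℂ)^(j+1) = -(-1:ℂ)^j := by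
  rw [zpow_add₀ (by norm_num : (-1:ℂ) ≠ 0), zpow_one, mul_neg_one]

theorem sgnm (j : ℤ) : (-1:ℂ)^(j-1) = -(-1:ℂ)^j := by
  rw [zpow_sub₀ (by norm_num : (-1:ℂ) ≠ 0), zpow_one, div_neg, div_one]

theorem sgn_sq (j : ℤ) : (-1:ℂ)^j * (-1:ℂ)^j = 1 := by
  rw [← zpow_add₀ (by norm_num : (-1:ℂ) ≠ 0)]
  exact (sgn_congr _ 0 (by exact ⟨j, by ring⟩)).trans (zpow_zero _)

theorem sgn_ne (j : ℤ) : (-1:ℂ)^j ≠ 0 := zpow_ne_zero _ (by norm_num)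

/-! coordinate lemmas -/

theorem P_coords (z : ℂ) (m l a b : ℤ) (ha : a = m + l) (hb : b = m - l) :
    GG z a b = (-1:ℂ)^a * P z m l := by
  rw [P, ha, hb, ← mul_assoc, sgn_sq, one_mul, GG]

theorem Q_coords (z : ℂ) (m l a b : ℤ) (ha : a = m + l + 1) (hb : b = m - l) :
    GG z a b = (-1:ℂ)^(a+1) * Q z m l := by
  rw [Q, ha, hb, ← mul_assoc]
  have : (-1:ℂ)^(m+l+1+1) = (-1:ℂ)^(m+l) := sgn_congr _ _ ⟨1, by ring⟩
  rw [this, sgn_sq, one_mul, GG]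

/-! symmetries of P and Q -/

theorem pGG (z : ℂ) (m l : ℤ) : P z m l = (-1:ℂ)^(m+l) * GG z (m+l) (m-l) := rfl
theorem qGG (z : ℂ) (m l : ℤ) : Q z m l = (-1:ℂ)^(m+l) * GG z (m+l+1) (m-l) := rfl

theorem psym1 (z : ℂ) (m l : ℤ) : P z (-m) l = P z m l := by
  rw [pGG, pGG]
  have h1 : GG z (-m + l) (-m - l) = GG z (m + l) (m - l) := by
    rw [show (-m + l : ℤ) = -(m - l) by ring, show (-m - l : ℤ) = -(m + l) by ring,
      GG_negneg, GG_swap]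
  rw [h1, sgn_congr (-m + l) (m + l) ⟨-m, by ring⟩]

theorem psym2 (z : ℂ) (m l : ℤ) : P z m (-l) = P z m l := by
  rw [pGG, pGG]
  have h1 : GG z (m + -l) (m - -l) = GG z (m + l) (m - l) := by
    rw [show (m + -l : ℤ) = m - l by ring, show (m - -l : ℤ) = m + l by ring, GG_swap]
  rw [h1, sgn_congr (m + -l) (m + l) ⟨-l, by ring⟩]

theorem pswap (z : ℂ) (m l : ℤ) : P z m l = P z l m := by
  rw [pGG, pGG]
  have h1 : GG z (l + m) (l - m) = GG z (m + l) (m - l) := by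
    rw [show (l - m : ℤ) = -(m - l) by ring, GG_neg2, show (l + m : ℤ) = m + l by ring]
  rw [h1, sgn_congr (m + l) (l + m) ⟨0, by ring⟩]

theorem P_natAbs (z : ℂ) (m l : ℤ) : P z m l = P z m.natAbs l.natAbs := by
  rcases Int.natAbs_eq m with hm | hm <;> rcases Int.natAbs_eq l with hl | hl <;>
    rw [hm, hl] <;>
    simp only [psym1, psym2, neg_neg, Int.natAbs_neg, Int.natAbs_natCast]

theorem qswap (z : ℂ) (m l : ℤ) : Q z m l = Q z l m := by
  rw [qGG, qGG]
  have h1 : GG z (l + m + 1) (l - m) = GG z (m + l + 1) (m - l) := by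
    rw [show (l - m : ℤ) = -(m - l) by ring, GG_neg2, show (l + m + 1 : ℤ) = m + l + 1 by ring]
  rw [h1, sgn_congr (m + l) (l + m) ⟨0, by ring⟩]

theorem qneg1 (z : ℂ) (m : ℤ) : Q z m (-1) = -Q z m 0 := by
  rw [qGG, qGG]
  have h1 : GG z (m + -1 + 1) (m - -1) = GG z (m + 0 + 1) (m - 0) := by
    rw [show (m + -1 + 1 : ℤ) = m - 0 by ring, show (m - -1 : ℤ) = m + 0 + 1 by ring, GG_swap]
  rw [h1, show (-1:ℂ)^(m + -1) = -(-1:ℂ)^(m+0) from ?_]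
  · ring
  · rw [show (m + -1 : ℤ) = (m + 0) - 1 by ring, sgnm]

theorem qnegneg (z : ℂ) (m l : ℤ) : Q z (-1 - m) (-1 - l) = Q z m l := by
  rw [qGG, qGG]
  have h1 : GG z (-1 - m + (-1 - l) + 1) (-1 - m - (-1 - l)) = GG z (m + l + 1) (m - l) := by
    rw [show (-1 - m + (-1 - l) + 1 : ℤ) = -(m + l + 1) by ring,
      show (-1 - m - (-1 - l) : ℤ) = -(m - l) by ring, GG_negneg]
  rw [h1, sgn_congr (-1 - m + (-1 - l)) (m + l) ⟨-1 - m - l, by ring⟩]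

/-! the two recurrences -/

theorem R2 (z : ℂ) (hz : ∀ x : ℝ, 0 ≤ x → x ≤ 8 → z ≠ (x : ℂ)) (m l : ℤ) :
    (4 - z) * Q z m l = P z (m+1) (l+1) + P z m l - P z (m+1) l - P z m (l+1) := by
  have h := GGF z hz (m + l + 1) (m - l)
  have hcond : ¬(m + l + 1 = 0 ∧ m - l = 0) := by omega
  rw [if_neg hcond] at h
  rw [Q_coords z m l (m+l+1) (m-l) rfl rfl,
    P_coords z (m+1) (l+1) (m+l+1+1) (m-l) (by ring) (by ring),
    P_coords z m l (m+l+1-1) (m-l) (by ring) (by ring),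
    P_coords z (m+1) l (m+l+1) (m-l+1) (by ring) (by ring),
    P_coords z m (l+1) (m+l+1) (m-l-1) (by ring) (by ring)] at h
  simp only [sgnp, sgnm, neg_neg] at h
  have h2 : (-1:ℂ)^(m+l) *
      ((4 - z) * Q z m l - (P z (m+1) (l+1) + P z m l - P z (m+1) l - P z m (l+1)))
      = 0 := by linear_combination h
  rcases mul_eq_zero.mp h2 with h3 | h3
  · exact absurd h3 (sgn_ne _)
  · linear_combination h3

theorem R1 (z : ℂ) (hz : ∀ x : ℝ, 0 ≤ x → x ≤ 8 → z ≠ (x : ℂ)) (m l : ℤ) :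
    (4 - z) * P z m l - Q z m l - Q z (m-1) (l-1) + Q z m (l-1) + Q z (m-1) l
      = if m = 0 ∧ l = 0 then 1 else 0 := by
  have h := GGF z hz (m + l) (m - l)
  have hcond : (m + l = 0 ∧ m - l = 0) ↔ (m = 0 ∧ l = 0) := by omega
  rw [P_coords z m l (m+l) (m-l) rfl rfl,
    Q_coords z m l (m+l+1) (m-l) rfl rfl,
    Q_coords z (m-1) (l-1) (m+l-1) (m-l) (by ring) (by ring),
    Q_coords z m (l-1) (m+l) (m-l+1) (by ring) (by ring),
    Q_coords z (m-1) l (m+l) (m-l-1) (by ring) (by ring)] at h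
  simp only [sgnp, sgnm, neg_neg] at h
  by_cases hc : m = 0 ∧ l = 0
  · obtain ⟨hm, hl⟩ := hc
    subst hm; subst hl
    rw [if_pos ⟨rfl, rfl⟩]
    norm_num at h ⊢
    linear_combination h
  · rw [if_neg hc]
    rw [if_neg (fun hh => hc (hcond.mp hh))] at h
    have h2 : (-1:ℂ)^(m+l) *
        ((4 - z) * P z m l - Q z m l - Q z (m-1) (l-1) + Q z m (l-1) + Q z (m-1) l) = 0 := by
      linear_combination h
    rcases mul_eq_zero.mp h2 with h3 | h3
    · exact absurd h3 (sgn_ne _)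
    · linear_combination h3

theorem P_m0 (z : ℂ) (m : ℤ) : P z m 0 = P₀ z m := by
  show (-1:ℂ)^(m+0) * GG z (m+0) (m-0) = P₀ z m
  rw [show m+(0:ℤ) = m by ring, show m-(0:ℤ) = m by ring]
  rfl

theorem P_0l (z : ℂ) (l : ℤ) : P z 0 l = P₀ z l := by
  show (-1:ℂ)^(0+l) * GG z (0+l) (0-l) = P₀ z l
  rw [show (0:ℤ)+l = l by ring, show (0:ℤ)-l = -l by ring, GG_neg2]
  rfl

theorem P₀_natAbs (z : ℂ) (m : ℤ) : P₀ z m = P₀ z m.natAbs := by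
  have hsym : ∀ k : ℤ, P₀ z (-k) = P₀ z k := by
    intro k
    show (-1:ℂ)^(-k) * GG z (-k) (-k) = (-1:ℂ)^k * GG z k k
    rw [GG_negneg z k k, sgn_congr (-k) k ⟨-k, by ring⟩]
  rcases Int.natAbs_eq m with hm | hm
  · rw [← hm]
  · nth_rewrite 1 [hm]
    rw [hsym]
def S (z : ℂ) (m l : ℤ) : ℂ := ∑ μ ∈ Finset.Icc (-m) m, ∑ ν ∈ Finset.Icc (-l) l, P z μ ν

def T (z : ℂ) (m l : ℕ) : ℂ :=
  ∑ μ ∈ Finset.Icc (-(m : ℤ)) (m : ℤ), ∑ ν ∈ Finset.Icc (-(l : ℤ)) (l : ℤ),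
    ((m : ℂ) - (μ.natAbs : ℂ)) * ((l : ℂ) - (ν.natAbs : ℂ)) * P z μ ν

theorem sum_split (n : ℤ) (hn : 0 ≤ n) (f : ℤ → ℂ) :
    ∑ x ∈ Finset.Icc (-(n+1)) (n+1), f x
      = (∑ x ∈ Finset.Icc (-n) n, f x) + f (n+1) + f (-(n+1)) := by
  have h : Finset.Icc (-(n+1)) (n+1)
      = insert (-(n+1)) (insert (n+1) (Finset.Icc (-n) n)) := by
    ext x
    simp only [Finset.mem_Icc, Finset.mem_insert]
    omega
  rw [h, Finset.sum_insert (by simp only [Finset.mem_insert, Finset.mem_Icc]; omega),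
    Finset.sum_insert (by simp only [Finset.mem_Icc]; omega)]
  ring

theorem sum_shrink (n : ℤ) (hn : 0 ≤ n) (f : ℤ → ℂ) (h1 : f (n+1) = 0) (h2 : f (-(n+1)) = 0) :
    ∑ x ∈ Finset.Icc (-(n+1)) (n+1), f x = ∑ x ∈ Finset.Icc (-n) n, f x := by
  rw [sum_split n hn f, h1, h2]; ring

theorem Ssym (z : ℂ) (m l : ℤ) : S z m l = S z l m := by
  rw [S, S, Finset.sum_comm]
  exact Finset.sum_congr rfl fun ν _ => Finset.sum_congr rfl fun μ _ => pswap z μ ν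

theorem Sstep (z : ℂ) (m l : ℤ) (hm : 0 ≤ m) :
    S z (m+1) l = S z m l + 2 * ∑ ν ∈ Finset.Icc (-l) l, P z (m+1) ν := by
  rw [S, S, sum_split m hm]
  have : (∑ ν ∈ Finset.Icc (-l) l, P z (-(m+1)) ν) = ∑ ν ∈ Finset.Icc (-l) l, P z (m+1) ν :=
    Finset.sum_congr rfl fun ν _ => psym1 z (m+1) ν
  rw [this]; ring

theorem Sstep0 (z : ℂ) (m : ℤ) (hm : 0 ≤ m) : S z (m+1) 0 = S z m 0 + 2 * P z (m+1) 0 := by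
  rw [Sstep z m 0 hm]
  norm_num

theorem SΔΔ (z : ℂ) (m l : ℤ) (hm : 0 ≤ m) (hl : 0 ≤ l) :
    S z (m+1) (l+1) = S z m (l+1) + S z (m+1) l - S z m l + 4 * P z (m+1) (l+1) := by
  have h1 := Sstep z m (l+1) hm
  have h2 := Sstep z m l hm
  have h3 := sum_split l hl (fun ν => P z (m+1) ν)
  have h4 : P z (m+1) (-(l+1)) = P z (m+1) (l+1) := psym2 z (m+1) (l+1)
  rw [h4] at h3
  linear_combination h1 + h3 * 2 - h2

theorem Tax1 (z : ℂ) (m : ℕ) : T z m 0 = 0 := by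
  rw [T]
  apply Finset.sum_eq_zero
  intro μ _
  norm_num

theorem Tax2 (z : ℂ) (l : ℕ) : T z 0 l = 0 := by
  rw [T]
  norm_num

theorem Tshrink (z : ℂ) (m l : ℕ) :
    T z (m+1) (l+1) = ∑ μ ∈ Finset.Icc (-(m : ℤ)) (m : ℤ), ∑ ν ∈ Finset.Icc (-(l : ℤ)) (l : ℤ),
      (((m:ℂ)+1) - (μ.natAbs : ℂ)) * (((l:ℂ)+1) - (ν.natAbs : ℂ)) * P z μ ν := by
  rw [T]
  simp only [Nat.cast_add, Nat.cast_one]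
  rw [sum_shrink (m:ℤ) (by positivity) _ ?_ ?_]
  · apply Finset.sum_congr rfl
    intro μ _
    rw [sum_shrink (l:ℤ) (by positivity) _ ?_ ?_]
    · have : (((l:ℤ)+1).natAbs : ℂ) = (l:ℂ)+1 := by
        have : ((l:ℤ)+1).natAbs = l+1 := by omega
        rw [this]; push_cast; ring
      rw [this]; ring
    · have : ((-((l:ℤ)+1)).natAbs : ℂ) = (l:ℂ)+1 := by
        have : (-((l:ℤ)+1)).natAbs = l+1 := by omega
        rw [this]; push_cast; ring
      rw [this]; ring
  · apply Finset.sum_eq_zero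
    intro ν _
    have : (((m:ℤ)+1).natAbs : ℂ) = (m:ℂ)+1 := by
      have : ((m:ℤ)+1).natAbs = m+1 := by omega
      rw [this]; push_cast; ring
    rw [this]; ring
  · apply Finset.sum_eq_zero
    intro ν _
    have : ((-((m:ℤ)+1)).natAbs : ℂ) = (m:ℂ)+1 := by
      have : (-((m:ℤ)+1)).natAbs = m+1 := by omega
      rw [this]; push_cast; ring
    rw [this]; ring

theorem Tshrink1 (z : ℂ) (m l : ℕ) :
    T z (m+1) l = ∑ μ ∈ Finset.Icc (-(m : ℤ)) (m : ℤ), ∑ ν ∈ Finset.Icc (-(l : ℤ)) (l : ℤ),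
      (((m:ℂ)+1) - (μ.natAbs : ℂ)) * ((l:ℂ) - (ν.natAbs : ℂ)) * P z μ ν := by
  rw [T]
  simp only [Nat.cast_add, Nat.cast_one]
  rw [sum_shrink (m:ℤ) (by positivity) _ ?_ ?_]
  · apply Finset.sum_eq_zero
    intro ν _
    have : (((m:ℤ)+1).natAbs : ℂ) = (m:ℂ)+1 := by
      have : ((m:ℤ)+1).natAbs = m+1 := by omega
      rw [this]; push_cast; ring
    rw [this]; ring
  · apply Finset.sum_eq_zero
    intro ν _
    have : ((-((m:ℤ)+1)).natAbs : ℂ) = (m:ℂ)+1 := by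
      have : (-((m:ℤ)+1)).natAbs = m+1 := by omega
      rw [this]; push_cast; ring
    rw [this]; ring

theorem Tshrink2 (z : ℂ) (m l : ℕ) :
    T z m (l+1) = ∑ μ ∈ Finset.Icc (-(m : ℤ)) (m : ℤ), ∑ ν ∈ Finset.Icc (-(l : ℤ)) (l : ℤ),
      ((m:ℂ) - (μ.natAbs : ℂ)) * (((l:ℂ)+1) - (ν.natAbs : ℂ)) * P z μ ν := by
  rw [T]
  simp only [Nat.cast_add, Nat.cast_one]
  apply Finset.sum_congr rfl
  intro μ _
  rw [sum_shrink (l:ℤ) (by positivity) _ ?_ ?_]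
  · have : (((l:ℤ)+1).natAbs : ℂ) = (l:ℂ)+1 := by
      have : ((l:ℤ)+1).natAbs = l+1 := by omega
      rw [this]; push_cast; ring
    rw [this]; ring
  · have : ((-((l:ℤ)+1)).natAbs : ℂ) = (l:ℂ)+1 := by
      have : (-((l:ℤ)+1)).natAbs = l+1 := by omega
      rw [this]; push_cast; ring
    rw [this]; ring

theorem TΔΔ (z : ℂ) (m l : ℕ) :
    T z (m+1) (l+1) - T z (m+1) l - T z m (l+1) + T z m l = S z m l := by
  rw [Tshrink, Tshrink1, Tshrink2, T, S,
    ← Finset.sum_sub_distrib, ← Finset.sum_sub_distrib, ← Finset.sum_add_distrib]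
  apply Finset.sum_congr rfl
  intro μ _
  rw [← Finset.sum_sub_distrib, ← Finset.sum_sub_distrib, ← Finset.sum_add_distrib]
  apply Finset.sum_congr rfl
  intro ν _
  ring

theorem Qax (z : ℂ) (hz : ∀ x : ℝ, 0 ≤ x → x ≤ 8 → z ≠ (x : ℂ)) :
    ∀ m : ℕ, Q z (m : ℤ) 0 = -(1/4) - (z-4)/4 * S z (m : ℤ) 0 := by
  intro m
  induction m with
  | zero =>
    have h := R1 z hz 0 0
    rw [if_pos ⟨rfl, rfl⟩] at h
    rw [show ((0:ℤ)-1) = -1 by ring] at h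
    have e1 : Q z (-1) (-1) = Q z 0 0 := by
      have := qnegneg z 0 0
      norm_num at this
      exact this
    have e2 : Q z 0 (-1) = -Q z 0 0 := qneg1 z 0
    have e3 : Q z (-1) 0 = -Q z 0 0 := by rw [qswap]; exact qneg1 z 0
    rw [e1, e2, e3] at h
    have hS : S z ((0:ℕ):ℤ) 0 = P z 0 0 := by
      rw [S]; norm_num
    push_cast
    rw [show ((0:ℕ):ℤ) = 0 from rfl] at hS
    rw [hS]
    linear_combination (-1/4 : ℂ) * h
  | succ n ih =>
    have h := R1 z hz ((n:ℤ)+1) 0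
    rw [if_neg (by omega)] at h
    rw [show ((n:ℤ)+1-1) = (n:ℤ) by ring, show ((0:ℤ)-1) = -1 by ring] at h
    rw [qneg1 z ((n:ℤ)+1), qneg1 z (n:ℤ)] at h
    have hS := Sstep0 z (n:ℤ) (by positivity)
    push_cast
    rw [hS]
    linear_combination ih - (1/2 : ℂ) * h + (-(z-4)/4) * (2:ℂ) * (0:ℂ)

theorem Qid (z : ℂ) (hz : ∀ x : ℝ, 0 ≤ x → x ≤ 8 → z ≠ (x : ℂ)) :
    ∀ l m : ℕ, Q z (m : ℤ) (l : ℤ) = -(1/4) - (z-4)/4 * S z (m : ℤ) (l : ℤ) := by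
  intro l
  induction l with
  | zero => intro m; exact_mod_cast Qax z hz m
  | succ n ihl =>
    intro m
    induction m with
    | zero =>
      rw [show ((0:ℕ):ℤ) = 0 from rfl, qswap, Ssym]
      push_cast
      exact_mod_cast Qax z hz (n+1)
    | succ k ihm =>
      have h := R1 z hz ((k:ℤ)+1) ((n:ℤ)+1)
      rw [if_neg (by omega)] at h
      rw [show ((k:ℤ)+1-1) = (k:ℤ) by ring, show ((n:ℤ)+1-1) = (n:ℤ) by ring] at h
      have hS := SΔΔ z (k:ℤ) (n:ℤ) (by positivity) (by positivity)
      have h1 := ihl k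
      have h2 := ihl (k+1)
      push_cast at h1 h2 ihm ⊢
      rw [hS]
      linear_combination -h + ihm + h2 - h1 + (-(z-4)) * (P z ((k:ℤ)+1) ((n:ℤ)+1))

theorem Pid (z : ℂ) (hz : ∀ x : ℝ, 0 ≤ x → x ≤ 8 → z ≠ (x : ℂ)) :
    ∀ l m : ℕ, P z (m : ℤ) (l : ℤ) =
      1 / 4 * (m : ℂ) * (l : ℂ) * (z - 4) - P₀ z 0 + P₀ z (m : ℤ) + P₀ z (l : ℤ)
        + (z - 4) ^ 2 / 4 * T z m l := by
  have Pax1 : ∀ m : ℕ, P z (m : ℤ) ((0:ℕ) : ℤ) =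
      1 / 4 * (m : ℂ) * ((0:ℕ) : ℂ) * (z - 4) - P₀ z 0 + P₀ z (m : ℤ) + P₀ z ((0:ℕ) : ℤ)
        + (z - 4) ^ 2 / 4 * T z m 0 := by
    intro m
    rw [Tax1]
    push_cast
    rw [P_m0]
    ring
  intro l
  induction l with
  | zero => exact Pax1
  | succ n ihl =>
    intro m
    induction m with
    | zero =>
      rw [Tax2]
      push_cast
      rw [P_0l]
      ring
    | succ k ihm =>
      have h := R2 z hz (k:ℤ) (n:ℤ)
      have q := Qid z hz n k
      have t := TΔΔ z k n
      have h1 := ihl k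
      have h2 := ihl (k+1)
      push_cast at h1 h2 ihm ⊢
      linear_combination ihm + h2 - h1 - h + (-(z-4)) * q + (-(z-4)^2/4) * t

end PQR
end

/-- Recurrence relations for `𝒫` and `𝒬`. -/
theorem P_Q_recurrence (z : ℂ) (hz : ∀ x : ℝ, 0 ≤ x → x ≤ 8 → z ≠ (x : ℂ)) :
    (∀ m l : ℤ,
      P z m l =
        1 / 4 * (m.natAbs : ℂ) * (l.natAbs : ℂ) * (z - 4)
        - P₀ z 0 + P₀ z m + P₀ z l
        + (z - 4) ^ 2 / 4 *
            ∑ μ ∈ Finset.Icc (-(m.natAbs : ℤ)) (m.natAbs : ℤ),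
              ∑ ν ∈ Finset.Icc (-(l.natAbs : ℤ)) (l.natAbs : ℤ),
                ((m.natAbs : ℂ) - (μ.natAbs : ℂ)) * ((l.natAbs : ℂ) - (ν.natAbs : ℂ)) *
                  P z μ ν) ∧
    (∀ m l : ℕ,
      Q z m l =
        -(1 / 4) - (z - 4) / 4 *
          ∑ μ ∈ Finset.Icc (-(m : ℤ)) (m : ℤ),
            ∑ ν ∈ Finset.Icc (-(l : ℤ)) (l : ℤ), P z μ ν) := by
  constructor
  · intro m l
    rw [PQR.P_natAbs z m l, PQR.P₀_natAbs z m, PQR.P₀_natAbs z l]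
    exact PQR.Pid z hz l.natAbs m.natAbs
  · intro m l
    exact PQR.Qid z hz l m
end

section
/- Fix c ∈ ℂ and define the operator 𝒯 on functions F : ℤ² → ℂ by (𝒯F)(m,l) := (c²/4)·Σ_{μ=−|m|}^{|m|} Σ_{ν=−|l|}^{|l|} (|m|−|μ|)(|l|−|ν|)·F(μ,ν). Then for every k ∈ ℕ (k ≥ 1), every F : ℤ² → ℂ and every (m,l) ∈ ℤ²: (𝒯^k F)(m,l) = (c^{2k} / (4·((2k−1)!)²))·Σ_{μ=−|m|}^{|m|} Σ_{ν=−|l|}^{|l|} (|m|−|μ|−k+1)_{2k−1} · (|l|−|ν|−k+1)_{2k−1} · F(μ,ν). In particular, for each fixed (m,l) one has (𝒯^k F)(m,l) = 0 for all sufficiently large k. -/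
/-- The Pochhammer symbol `(q)_k = q (q+1) ⋯ (q+k-1)` on `ℂ`. -/
noncomputable def poch (q : ℂ) (k : ℕ) : ℂ := ∏ j ∈ Finset.range k, (q + j)

/-- The operator `𝒯` on functions `F : ℤ² → ℂ`:
`(𝒯F)(m,l) = (c²/4) Σ_{|μ|≤|m|} Σ_{|ν|≤|l|} (|m|-|μ|)(|l|-|ν|) F(μ,ν)`. -/
noncomputable def T (c : ℂ) (F : ℤ × ℤ → ℂ) : ℤ × ℤ → ℂ := fun p =>
  c ^ 2 / 4 *
    ∑ μ ∈ Finset.Icc (-(p.1.natAbs : ℤ)) (p.1.natAbs : ℤ),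
      ∑ ν ∈ Finset.Icc (-(p.2.natAbs : ℤ)) (p.2.natAbs : ℤ),
        ((p.1.natAbs : ℂ) - (μ.natAbs : ℂ)) * ((p.2.natAbs : ℂ) - (ν.natAbs : ℂ)) * F (μ, ν)

lemma poch_one (x : ℂ) : poch x 1 = x := by simp [poch]

lemma poch_succ (x : ℂ) (m : ℕ) : poch x (m+1) = poch x m * (x + m) :=
  Finset.prod_range_succ _ _

lemma poch_succ' (x : ℂ) (m : ℕ) : poch x (m+1) = x * poch (x+1) m := by
  unfold poch
  rw [Finset.prod_range_succ']
  simp only [Nat.cast_zero, add_zero]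
  rw [mul_comm]
  congr 1
  apply Finset.prod_congr rfl
  intro j _
  push_cast
  ring

lemma poch_diff (x : ℂ) (m : ℕ) :
    poch (x+1) (m+1) - poch x (m+1) = (m+1) * poch (x+1) m := by
  rw [poch_succ (x+1) m, poch_succ' x m]
  ring

lemma poch_eq_zero {x : ℂ} {n : ℕ} (j : ℕ) (hj : j < n) (h : x + j = 0) : poch x n = 0 :=
  Finset.prod_eq_zero (Finset.mem_range.mpr hj) h

lemma sumB (m n : ℕ) :
    (2*(m:ℂ)+2) * ∑ j ∈ Finset.range (n+1), poch ((j:ℂ) - m) (2*m+1)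
      = poch ((n:ℂ) - m) (2*m+2) := by
  induction n with
  | zero =>
    rw [Finset.sum_range_one]
    rw [show poch (((0:ℕ):ℂ) - (m:ℂ)) (2*m+1) = 0 from
      poch_eq_zero m (by omega) (by push_cast; ring)]
    rw [show poch (((0:ℕ):ℂ) - (m:ℂ)) (2*m+2) = 0 from
      poch_eq_zero m (by omega) (by push_cast; ring)]
    ring
  | succ n ih =>
    have hc : ((n+1:ℕ):ℂ) - m = ((n:ℂ) - m) + 1 := by push_cast; ring
    have h := poch_diff ((n:ℂ) - m) (2*m+1)
    push_cast at h
    rw [Finset.sum_range_succ, mul_add, ih, hc, show (2*m+2) = (2*m+1)+1 from rfl]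
    linear_combination -h

lemma sumA (m n : ℕ) :
    (2*(m:ℂ)+2) * (2*(m:ℂ)+3) *
        ∑ i ∈ Finset.range (n+1), (i:ℂ) * poch ((n:ℂ) - i - m) (2*m+1)
      = poch ((n:ℂ) - m - 1) (2*m+3) := by
  induction n with
  | zero =>
    rw [Finset.sum_range_one]
    rw [show poch (((0:ℕ):ℂ) - (m:ℂ) - 1) (2*m+3) = 0 from
      poch_eq_zero (m+1) (by omega) (by push_cast; ring)]
    simp
  | succ n ih =>
    have hshift : ∑ i ∈ Finset.range (n+1+1), (i:ℂ) * poch (((n+1:ℕ):ℂ) - i - m) (2*m+1)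
        = (∑ i ∈ Finset.range (n+1), (i:ℂ) * poch ((n:ℂ) - i - m) (2*m+1))
          + ∑ i ∈ Finset.range (n+1), poch ((n:ℂ) - i - m) (2*m+1) := by
      rw [Finset.sum_range_succ']
      simp only [Nat.cast_zero, zero_mul, add_zero]
      rw [← Finset.sum_add_distrib]
      apply Finset.sum_congr rfl
      intro i _
      have h1 : ((n+1:ℕ):ℂ) - ((i+1:ℕ):ℂ) - m = (n:ℂ) - i - m := by push_cast; ring
      rw [h1]
      push_cast
      ring
    have hrefl : ∑ i ∈ Finset.range (n+1), poch ((n:ℂ) - i - m) (2*m+1)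
        = ∑ j ∈ Finset.range (n+1), poch ((j:ℂ) - m) (2*m+1) := by
      rw [← Finset.sum_range_reflect (fun j => poch ((j:ℂ) - m) (2*m+1)) (n+1)]
      apply Finset.sum_congr rfl
      intro i hi
      simp only [Finset.mem_range] at hi
      congr 1
      rw [Nat.cast_sub (by omega), Nat.cast_sub (by omega)]
      push_cast
      ring
    have hB := sumB m n
    have h := poch_diff ((n:ℂ) - m - 1) (2*m+2)
    have e : ((n:ℂ) - m - 1) + 1 = (n:ℂ) - m := by ring
    rw [e, show (2*m+2)+1 = 2*m+3 from rfl] at h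
    push_cast at h
    have hc : ((n+1:ℕ):ℂ) - m - 1 = (n:ℂ) - m := by push_cast; ring
    rw [hshift, hrefl, hc]
    linear_combination ih + (2*(m:ℂ)+3) * hB - h

lemma sum_Icc_natAbs (a : ℕ) (g : ℕ → ℂ) :
    ∑ μ ∈ Finset.Icc (-(a:ℤ)) (a:ℤ), g μ.natAbs
      = g 0 + 2 * ∑ j ∈ Finset.Icc 1 a, g j := by
  induction a with
  | zero => simp
  | succ n ih =>
    have hins : Finset.Icc (-((n+1:ℕ):ℤ)) ((n+1:ℕ):ℤ)
        = insert (((n+1:ℕ):ℤ)) (insert (-((n+1:ℕ):ℤ)) (Finset.Icc (-(n:ℤ)) (n:ℤ))) := by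
      ext x
      simp only [Finset.mem_Icc, Finset.mem_insert]
      omega
    rw [hins, Finset.sum_insert (by simp only [Finset.mem_Icc, Finset.mem_insert]; omega),
      Finset.sum_insert (by simp only [Finset.mem_Icc]; omega), ih,
      Finset.sum_Icc_succ_top (by omega) g]
    have h1 : (((n+1:ℕ):ℤ)).natAbs = n+1 := by omega
    have h2 : (-((n+1:ℕ):ℤ)).natAbs = n+1 := by omega
    rw [h1, h2]
    ring

lemma keySum (m a b : ℕ) (hba : b ≤ a) :
    ∑ μ ∈ Finset.Icc (-(a:ℤ)) (a:ℤ),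
        poch ((a:ℂ) - μ.natAbs - m) (2*m+1) *
          (if b ≤ μ.natAbs then ((μ.natAbs:ℂ) - b) else 0)
      = 2 * poch ((a:ℂ) - b - m - 1) (2*m+3) / ((2*(m:ℂ)+2) * (2*(m:ℂ)+3)) := by
  set g : ℕ → ℂ := fun j => poch ((a:ℂ) - j - m) (2*m+1) * (if b ≤ j then ((j:ℂ) - b) else 0)
    with hg
  have hg0 : g 0 = 0 := by
    rcases Nat.eq_zero_or_pos b with hb | hb
    · subst hb; simp [hg]
    · simp only [hg]
      rw [if_neg (by omega), mul_zero]
  rw [sum_Icc_natAbs a g, hg0, zero_add]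
  have hsplit : ∑ j ∈ Finset.Icc 1 a, g j = ∑ j ∈ Finset.range (a+1), g j := by
    have : Finset.range (a+1) = insert 0 (Finset.Icc 1 a) := by
      ext x
      simp only [Finset.mem_range, Finset.mem_insert, Finset.mem_Icc]
      omega
    rw [this, Finset.sum_insert (by simp), hg0, zero_add]
  rw [hsplit]
  have hrange : ∑ j ∈ Finset.range (a+1), g j
      = ∑ i ∈ Finset.range ((a-b)+1), (i:ℂ) * poch (((a-b:ℕ):ℂ) - i - m) (2*m+1) := by
    rw [show a + 1 = b + ((a-b)+1) by omega, Finset.sum_range_add]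
    have hz : ∑ j ∈ Finset.range b, g j = 0 := by
      apply Finset.sum_eq_zero
      intro j hj
      simp only [Finset.mem_range] at hj
      simp only [hg]
      rw [if_neg (by omega), mul_zero]
    rw [hz, zero_add]
    apply Finset.sum_congr rfl
    intro i _
    simp only [hg]
    rw [if_pos (by omega)]
    have h1 : (a:ℂ) - ((b + i:ℕ):ℂ) - m = ((a-b:ℕ):ℂ) - i - m := by
      rw [Nat.cast_sub hba]; push_cast; ring
    rw [h1]
    push_cast
    ring
  rw [hrange]
  have hA := sumA m (a-b)
  have hcast : ((a-b:ℕ):ℂ) = (a:ℂ) - b := by rw [Nat.cast_sub hba]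
  rw [hcast] at hA
  simp only [hcast]
  have hne : ((2*(m:ℂ)+2) * (2*(m:ℂ)+3)) ≠ 0 := by
    intro hcontra
    rcases mul_eq_zero.mp hcontra with h | h
    · have : (m:ℂ) = -1 := by linear_combination h/2
      have := congrArg Complex.re this
      simp at this
      nlinarith [this]
    · have : (m:ℂ) = -3/2 := by linear_combination h/2
      have := congrArg Complex.re this
      simp at this
      nlinarith [this]
  rw [eq_div_iff hne]
  linear_combination 2 * hA

noncomputable def tfun (x y : ℤ) : ℂ :=
  if y.natAbs ≤ x.natAbs then ((x.natAbs:ℂ) - (y.natAbs:ℂ)) else 0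

lemma sum_tfun (b' : ℕ) (ν : ℤ) (hν : ν.natAbs ≤ b') (f : ℤ → ℂ) :
    ∑ ν' ∈ Finset.Icc (-(b':ℤ)) (b':ℤ), tfun ν ν' * f ν'
      = ∑ ν' ∈ Finset.Icc (-(ν.natAbs:ℤ)) (ν.natAbs:ℤ), ((ν.natAbs:ℂ) - (ν'.natAbs:ℂ)) * f ν' := by
  have hfil : Finset.Icc (-(ν.natAbs:ℤ)) (ν.natAbs:ℤ)
      = (Finset.Icc (-(b':ℤ)) (b':ℤ)).filter (fun ν' => ν'.natAbs ≤ ν.natAbs) := by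
    ext x; simp only [Finset.mem_Icc, Finset.mem_filter]; omega
  rw [hfil, Finset.sum_filter]
  apply Finset.sum_congr rfl
  intro x _
  unfold tfun
  rw [ite_mul, zero_mul]

lemma T_apply_in (c : ℂ) (F : ℤ × ℤ → ℂ) (a b : ℕ) (μ ν : ℤ)
    (hμ : μ.natAbs ≤ a) (hν : ν.natAbs ≤ b) :
    T c F (μ, ν) = c ^ 2 / 4 *
      ∑ μ' ∈ Finset.Icc (-(a:ℤ)) (a:ℤ), ∑ ν' ∈ Finset.Icc (-(b:ℤ)) (b:ℤ),
        tfun μ μ' * tfun ν ν' * F (μ', ν') := by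
  unfold T
  congr 1
  symm
  calc ∑ μ' ∈ Finset.Icc (-(a:ℤ)) (a:ℤ), ∑ ν' ∈ Finset.Icc (-(b:ℤ)) (b:ℤ),
        tfun μ μ' * tfun ν ν' * F (μ', ν')
      = ∑ μ' ∈ Finset.Icc (-(a:ℤ)) (a:ℤ), tfun μ μ' *
          ∑ ν' ∈ Finset.Icc (-(b:ℤ)) (b:ℤ), tfun ν ν' * F (μ', ν') := by
        apply Finset.sum_congr rfl
        intro μ' _
        rw [Finset.mul_sum]
        apply Finset.sum_congr rfl
        intro ν' _
        ring
    _ = ∑ μ' ∈ Finset.Icc (-(a:ℤ)) (a:ℤ), tfun μ μ' *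
          ∑ ν' ∈ Finset.Icc (-(ν.natAbs:ℤ)) (ν.natAbs:ℤ),
            ((ν.natAbs:ℂ) - (ν'.natAbs:ℂ)) * F (μ', ν') := by
        apply Finset.sum_congr rfl
        intro μ' _
        rw [sum_tfun b ν hν]
    _ = ∑ μ' ∈ Finset.Icc (-(μ.natAbs:ℤ)) (μ.natAbs:ℤ), ((μ.natAbs:ℂ) - (μ'.natAbs:ℂ)) *
          ∑ ν' ∈ Finset.Icc (-(ν.natAbs:ℤ)) (ν.natAbs:ℤ),
            ((ν.natAbs:ℂ) - (ν'.natAbs:ℂ)) * F (μ', ν') := by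
        rw [sum_tfun a μ hμ]
    _ = ∑ μ' ∈ Finset.Icc (-(μ.natAbs:ℤ)) (μ.natAbs:ℤ),
          ∑ ν' ∈ Finset.Icc (-(ν.natAbs:ℤ)) (ν.natAbs:ℤ),
            ((μ.natAbs:ℂ) - (μ'.natAbs:ℂ)) * ((ν.natAbs:ℂ) - (ν'.natAbs:ℂ)) * F (μ', ν') := by
        apply Finset.sum_congr rfl
        intro μ' _
        rw [Finset.mul_sum]
        apply Finset.sum_congr rfl
        intro ν' _
        ring

lemma swap_lemma (A B : Finset ℤ) (p q : ℤ → ℂ) (t s : ℤ → ℤ → ℂ) (F : ℤ × ℤ → ℂ) :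
    ∑ μ ∈ A, ∑ ν ∈ B, p μ * q ν * (∑ μ' ∈ A, ∑ ν' ∈ B, t μ μ' * s ν ν' * F (μ', ν'))
      = ∑ μ' ∈ A, ∑ ν' ∈ B, (∑ μ ∈ A, p μ * t μ μ') * (∑ ν ∈ B, q ν * s ν ν') * F (μ', ν') := by
  simp only [Finset.sum_mul, Finset.mul_sum]
  conv_lhs => enter [2, μ]; rw [Finset.sum_comm]
  rw [Finset.sum_comm]
  conv_lhs => enter [2, μ', 2, μ]; rw [Finset.sum_comm]
  conv_lhs => enter [2, μ']; rw [Finset.sum_comm]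
  apply Finset.sum_congr rfl; intro μ' _
  apply Finset.sum_congr rfl; intro ν' _
  rw [Finset.sum_comm]
  apply Finset.sum_congr rfl; intro μ _
  apply Finset.sum_congr rfl; intro ν _
  ring

lemma scalar_step (c x P Q Fv f D2 D3 : ℂ) (hf : f ≠ 0) (h2 : D2 ≠ 0) (h3 : D3 ≠ 0) :
    x / (4 * f ^ 2) * (c ^ 2 / 4 * (2 * P / (D2 * D3) * (2 * Q / (D2 * D3)) * Fv))
      = x * c ^ 2 / (4 * (f * (D2 * D3)) ^ 2) * (P * Q * Fv) := by
  have hprod : f ^ 2 * D2 ^ 2 * D3 ^ 2 * f⁻¹ ^ 2 * D2⁻¹ ^ 2 * D3⁻¹ ^ 2 = 1 := by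
    field_simp
  field_simp
  linear_combination

lemma main_formula (c : ℂ) (mm ll : ℤ) : ∀ (m : ℕ) (F : ℤ × ℤ → ℂ),
    (T c)^[m+1] F (mm, ll) =
      c ^ (2*m+2) / (4 * (((2*m+1).factorial : ℂ)) ^ 2) *
        ∑ μ ∈ Finset.Icc (-(mm.natAbs : ℤ)) (mm.natAbs : ℤ),
          ∑ ν ∈ Finset.Icc (-(ll.natAbs : ℤ)) (ll.natAbs : ℤ),
            poch ((mm.natAbs : ℂ) - (μ.natAbs:ℂ) - m) (2*m+1) *
              poch ((ll.natAbs : ℂ) - (ν.natAbs:ℂ) - m) (2*m+1) * F (μ, ν) := by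
  intro m
  induction m with
  | zero =>
    intro F
    simp only [zero_add, Function.iterate_one]
    unfold T
    norm_num [poch_one, Nat.factorial]
  | succ n ih =>
    intro F
    rw [Function.iterate_succ_apply, ih (T c F)]
    have hsum : ∑ μ ∈ Finset.Icc (-(mm.natAbs:ℤ)) (mm.natAbs:ℤ),
          ∑ ν ∈ Finset.Icc (-(ll.natAbs:ℤ)) (ll.natAbs:ℤ),
            poch ((mm.natAbs:ℂ) - (μ.natAbs:ℂ) - n) (2*n+1) *
              poch ((ll.natAbs:ℂ) - (ν.natAbs:ℂ) - n) (2*n+1) * T c F (μ, ν)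
        = c ^ 2 / 4 * ∑ μ ∈ Finset.Icc (-(mm.natAbs:ℤ)) (mm.natAbs:ℤ),
            ∑ ν ∈ Finset.Icc (-(ll.natAbs:ℤ)) (ll.natAbs:ℤ),
              poch ((mm.natAbs:ℂ) - (μ.natAbs:ℂ) - n) (2*n+1) *
                poch ((ll.natAbs:ℂ) - (ν.natAbs:ℂ) - n) (2*n+1) *
                (∑ μ' ∈ Finset.Icc (-(mm.natAbs:ℤ)) (mm.natAbs:ℤ),
                  ∑ ν' ∈ Finset.Icc (-(ll.natAbs:ℤ)) (ll.natAbs:ℤ),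
                    tfun μ μ' * tfun ν ν' * F (μ', ν')) := by
      rw [Finset.mul_sum]
      apply Finset.sum_congr rfl; intro μ hμ
      rw [Finset.mul_sum]
      apply Finset.sum_congr rfl; intro ν hν
      simp only [Finset.mem_Icc] at hμ hν
      rw [T_apply_in c F mm.natAbs ll.natAbs μ ν (by omega) (by omega)]
      ring
    rw [hsum, swap_lemma]
    have hcoef : ∀ a' : ℕ, ∀ x : ℤ, x.natAbs ≤ a' →
        ∑ μ ∈ Finset.Icc (-(a':ℤ)) (a':ℤ),
            poch ((a':ℂ) - (μ.natAbs:ℂ) - n) (2*n+1) * tfun μ x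
          = 2 * poch ((a':ℂ) - (x.natAbs:ℂ) - n - 1) (2*n+3) / ((2*(n:ℂ)+2) * (2*(n:ℂ)+3)) := by
      intro a' x hx
      simp only [tfun]
      exact keySum n a' x.natAbs hx
    have hnew : ∑ μ' ∈ Finset.Icc (-(mm.natAbs:ℤ)) (mm.natAbs:ℤ),
          ∑ ν' ∈ Finset.Icc (-(ll.natAbs:ℤ)) (ll.natAbs:ℤ),
            (∑ μ ∈ Finset.Icc (-(mm.natAbs:ℤ)) (mm.natAbs:ℤ),
                poch ((mm.natAbs:ℂ) - (μ.natAbs:ℂ) - n) (2*n+1) * tfun μ μ') *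
              (∑ ν ∈ Finset.Icc (-(ll.natAbs:ℤ)) (ll.natAbs:ℤ),
                poch ((ll.natAbs:ℂ) - (ν.natAbs:ℂ) - n) (2*n+1) * tfun ν ν') * F (μ', ν')
        = ∑ μ' ∈ Finset.Icc (-(mm.natAbs:ℤ)) (mm.natAbs:ℤ),
            ∑ ν' ∈ Finset.Icc (-(ll.natAbs:ℤ)) (ll.natAbs:ℤ),
              (2 * poch ((mm.natAbs:ℂ) - (μ'.natAbs:ℂ) - n - 1) (2*n+3) / ((2*(n:ℂ)+2) * (2*(n:ℂ)+3))) *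
                (2 * poch ((ll.natAbs:ℂ) - (ν'.natAbs:ℂ) - n - 1) (2*n+3) / ((2*(n:ℂ)+2) * (2*(n:ℂ)+3))) * F (μ', ν') := by
      apply Finset.sum_congr rfl; intro μ' hμ'
      apply Finset.sum_congr rfl; intro ν' hν'
      simp only [Finset.mem_Icc] at hμ' hν'
      rw [hcoef mm.natAbs μ' (by omega), hcoef ll.natAbs ν' (by omega)]
    rw [hnew]
    simp only [Finset.mul_sum]
    apply Finset.sum_congr rfl; intro μ' hμ'
    apply Finset.sum_congr rfl; intro ν' hν'
    rw [show (2*(n+1)+1) = 2*n+3 from rfl]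
    rw [show ((mm.natAbs:ℂ) - (μ'.natAbs:ℂ) - ((n+1:ℕ):ℂ)) = (mm.natAbs:ℂ) - (μ'.natAbs:ℂ) - n - 1 by push_cast; ring]
    rw [show ((ll.natAbs:ℂ) - (ν'.natAbs:ℂ) - ((n+1:ℕ):ℂ)) = (ll.natAbs:ℂ) - (ν'.natAbs:ℂ) - n - 1 by push_cast; ring]
    have hfact : ((2*n+3).factorial : ℂ)
        = ((2*n+1).factorial : ℂ) * ((2*(n:ℂ)+2) * (2*(n:ℂ)+3)) := by
      have hnat : (2*n+3).factorial = (2*n+1).factorial * ((2*n+2) * (2*n+3)) := by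
        rw [show 2*n+3 = (2*n+2)+1 from rfl, Nat.factorial_succ,
          show 2*n+2 = (2*n+1)+1 from rfl, Nat.factorial_succ]
        ring
      rw [hnat]
      push_cast
      ring
    rw [hfact, show (2*(n+1)+2) = (2*n+2)+2 from rfl, pow_add c (2*n+2) 2]
    have hf1 : ((2*n+1).factorial : ℂ) ≠ 0 := Nat.cast_ne_zero.mpr (Nat.factorial_ne_zero _)
    have h2 : (2*(n:ℂ)+2) ≠ 0 := by
      have h := Nat.cast_ne_zero (R := ℂ).mpr (show 2*n+2 ≠ 0 by omega)
      push_cast at h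
      exact h
    have h3 : (2*(n:ℂ)+3) ≠ 0 := by
      have h := Nat.cast_ne_zero (R := ℂ).mpr (show 2*n+3 ≠ 0 by omega)
      push_cast at h
      exact h
    exact scalar_step c (c ^ (2*n+2))
      (poch ((mm.natAbs:ℂ) - (μ'.natAbs:ℂ) - n - 1) (2*n+3))
      (poch ((ll.natAbs:ℂ) - (ν'.natAbs:ℂ) - n - 1) (2*n+3))
      (F (μ', ν')) ((2*n+1).factorial : ℂ) (2*(n:ℂ)+2) (2*(n:ℂ)+3) hf1 h2 h3

/-- Closed formula for the iterates of `𝒯`, and local nilpotency of `𝒯`. -/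
theorem T_iterate_formula (c : ℂ) :
    (∀ k : ℕ, 1 ≤ k → ∀ F : ℤ × ℤ → ℂ, ∀ m l : ℤ,
      (T c)^[k] F (m, l) =
        c ^ (2 * k) / (4 * ((2 * k - 1).factorial : ℂ) ^ 2) *
          ∑ μ ∈ Finset.Icc (-(m.natAbs : ℤ)) (m.natAbs : ℤ),
            ∑ ν ∈ Finset.Icc (-(l.natAbs : ℤ)) (l.natAbs : ℤ),
              poch ((m.natAbs : ℂ) - (μ.natAbs : ℂ) - k + 1) (2 * k - 1) *
                poch ((l.natAbs : ℂ) - (ν.natAbs : ℂ) - k + 1) (2 * k - 1) * F (μ, ν)) ∧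
    (∀ F : ℤ × ℤ → ℂ, ∀ m l : ℤ, ∃ K : ℕ, ∀ k : ℕ, K ≤ k → (T c)^[k] F (m, l) = 0) := by
  constructor
  · intro k hk F m l
    obtain ⟨n, rfl⟩ : ∃ n, k = n + 1 := ⟨k - 1, by omega⟩
    rw [main_formula c m l n F]
    rw [show 2*(n+1)-1 = 2*n+1 by omega, show 2*(n+1) = 2*n+2 from rfl]
    congr 1
    apply Finset.sum_congr rfl; intro μ _
    apply Finset.sum_congr rfl; intro ν _
    rw [show (m.natAbs : ℂ) - (μ.natAbs:ℂ) - ((n+1:ℕ):ℂ) + 1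
        = (m.natAbs : ℂ) - (μ.natAbs:ℂ) - n by push_cast; ring,
      show (l.natAbs : ℂ) - (ν.natAbs:ℂ) - ((n+1:ℕ):ℂ) + 1
        = (l.natAbs : ℂ) - (ν.natAbs:ℂ) - n by push_cast; ring]
  · intro F m l
    refine ⟨m.natAbs + 1, fun k hk => ?_⟩
    obtain ⟨n, rfl⟩ : ∃ n, k = n + 1 := ⟨k - 1, by omega⟩
    rw [main_formula c m l n F]
    have hz : (∑ μ ∈ Finset.Icc (-(m.natAbs : ℤ)) (m.natAbs : ℤ),
        ∑ ν ∈ Finset.Icc (-(l.natAbs : ℤ)) (l.natAbs : ℤ),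
          poch ((m.natAbs : ℂ) - (μ.natAbs:ℂ) - n) (2*n+1) *
            poch ((l.natAbs : ℂ) - (ν.natAbs:ℂ) - n) (2*n+1) * F (μ, ν)) = 0 := by
      apply Finset.sum_eq_zero; intro μ hμ
      apply Finset.sum_eq_zero; intro ν _
      simp only [Finset.mem_Icc] at hμ
      have hμa : μ.natAbs ≤ m.natAbs := by omega
      have hpz : poch ((m.natAbs : ℂ) - (μ.natAbs:ℂ) - n) (2*n+1) = 0 := by
        apply poch_eq_zero (n - (m.natAbs - μ.natAbs)) (by omega)
        rw [Nat.cast_sub (show m.natAbs - μ.natAbs ≤ n by omega), Nat.cast_sub hμa]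
        ring
      rw [hpz, zero_mul, zero_mul]
    rw [hz, mul_zero]
end

section
/- For all k ∈ ℕ₀ and all n = (n₁,n₂) ∈ ℤ² the following two identities hold, where the Pochhammer symbols are evaluated in ℚ: (i) Σ_{α₁+α₂=2k, α₁,α₂ ∈ ℕ₀} ((−1)^{α₁}/(α₁! α₂!))·(1/2+n₁)_{α₁}(1/2−n₁)_{α₁}(1/2+n₂)_{α₂}(1/2−n₂)_{α₂} = (4^{2k}/(2k)!)·((1+n₁+n₂)/2)_k·((1+n₁−n₂)/2)_k·((1−n₁+n₂)/2)_k·((1−n₁−n₂)/2)_k; and (ii) Σ_{α₁+α₂=2k+1, α₁,α₂ ∈ ℕ₀} ((−1)^{α₁}/(α₁! α₂!))·(1/2+n₁)_{α₁}(1/2−n₁)_{α₁}(1/2+n₂)_{α₂}(1/2−n₂)_{α₂} = (4^{2k+1}/(2k+1)!)·((n₁+n₂)/2)_{k+1}·((n₁−n₂)/2)_{k+1}·((2−n₁+n₂)/2)_k·((2−n₁−n₂)/2)_k. -/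
open Finset

def pochQ (q : ℚ) (k : ℕ) : ℚ := ∏ j ∈ Finset.range k, (q + j)
def AA (x : ℚ) (α : ℕ) : ℚ := ∏ j ∈ Finset.range α, ((2*(j:ℚ)+1)^2 - x^2)

lemma pair1 (n : ℚ) (α : ℕ) :
    pochQ (1/2 + n) α * pochQ (1/2 - n) α = AA (2*n) α / 4^α := by
  rw [pochQ, pochQ, AA, ← Finset.prod_mul_distrib]
  rw [show (4:ℚ)^α = ∏ _j ∈ Finset.range α, (4:ℚ) by
    rw [Finset.prod_const, Finset.card_range]]
  rw [← Finset.prod_div_distrib]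
  exact Finset.prod_congr rfl (fun j _ => by ring)

lemma pair2 (a : ℚ) (k : ℕ) :
    pochQ ((1+a)/2) k * pochQ ((1-a)/2) k
      = (∏ j ∈ Finset.range k, ((4*(j:ℚ)+2)^2 - (2*a)^2)) / 16^k := by
  rw [pochQ, pochQ, ← Finset.prod_mul_distrib]
  rw [show (16:ℚ)^k = ∏ _j ∈ Finset.range k, (16:ℚ) by
    rw [Finset.prod_const, Finset.card_range]]
  rw [← Finset.prod_div_distrib]
  exact Finset.prod_congr rfl (fun j _ => by ring)

lemma pair3 (a : ℚ) (k : ℕ) :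
    pochQ (a/2) (k+1) * pochQ ((2-a)/2) k
      = (a/2) * (∏ j ∈ Finset.range k, ((4*(j:ℚ)+4)^2 - (2*a)^2)) / 16^k := by
  rw [pochQ, pochQ, Finset.prod_range_succ']
  push_cast
  rw [mul_right_comm, ← Finset.prod_mul_distrib,
    Finset.prod_congr rfl (fun j (_ : j ∈ Finset.range k) =>
      show (a/2 + ((j:ℚ)+1)) * ((2-a)/2 + j) = ((4*(j:ℚ)+4)^2 - (2*a)^2) / 16 by ring),
    Finset.prod_div_distrib, Finset.prod_const, Finset.card_range]
  ring

def SS (x y : ℚ) (m : ℕ) : ℚ :=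
  ∑ α ∈ Finset.range (m+1), (-1:ℚ)^α * (m.choose α : ℚ) * (AA x α * AA y (m - α))

lemma AA_succ (x : ℚ) (α : ℕ) : AA x (α+1) = AA x α * ((2*(α:ℚ)+1)^2 - x^2) :=
  Finset.prod_range_succ _ _

lemma step (m : ℕ) (F : ℕ → ℚ) :
    ∑ α ∈ Finset.range (m+2), (-1:ℚ)^α * ((m+1).choose α : ℚ) * F α
      = ∑ α ∈ Finset.range (m+1), (-1:ℚ)^α * (m.choose α : ℚ) * (F α - F (α+1)) := by
  have h1 : ∑ α ∈ Finset.range (m+1), (-1:ℚ)^α * (m.choose α : ℚ) * F α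
      = (∑ α ∈ Finset.range (m+1), (-1:ℚ)^(α+1) * (m.choose (α+1) : ℚ) * F (α+1)) + F 0 := by
    have h0 := Finset.sum_range_succ' (fun α => (-1:ℚ)^α * (m.choose α : ℚ) * F α) (m+1)
    rw [Finset.sum_range_succ] at h0
    simpa using h0
  rw [Finset.sum_range_succ' (fun α => (-1:ℚ)^α * ((m+1).choose α : ℚ) * F α) (m+1)]
  simp only [Nat.choose_succ_succ, Nat.cast_add, Nat.choose_zero_right, Nat.cast_one, pow_zero,
    one_mul, mul_one]
  have h2 : ∀ α ∈ Finset.range (m+1),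
      (-1:ℚ)^(α+1) * ((m.choose α : ℚ) + (m.choose (α+1) : ℚ)) * F (α+1)
        = (-1:ℚ)^(α+1) * (m.choose (α+1) : ℚ) * F (α+1)
          - (-1:ℚ)^α * (m.choose α : ℚ) * F (α+1) := by
    intro α _; rw [pow_succ]; ring
  rw [Finset.sum_congr rfl h2, Finset.sum_sub_distrib]
  rw [eq_comm]
  rw [Finset.sum_congr rfl (fun α _ => mul_sub ((-1:ℚ)^α * (m.choose α : ℚ)) (F α) (F (α+1))),
    Finset.sum_sub_distrib, h1]
  ring

lemma per (x y : ℚ) (α β : ℕ) :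
    (-1:ℚ)^α * ((α+β).choose α : ℚ) *
        ((AA x α * AA y (β+2) - AA x (α+1) * AA y (β+1))
          - (AA x (α+1) * AA y (β+1) - AA x (α+2) * AA y β))
      - ((2*((α:ℚ)+(β:ℚ))+2)^2-(x+y)^2) * ((2*((α:ℚ)+(β:ℚ))+2)^2-(x-y)^2) *
        ((-1:ℚ)^α * ((α+β).choose α : ℚ) * (AA x α * AA y β))
    = (8*(2*((α:ℚ)+(β:ℚ))+3) * ((-1:ℚ)^(α+1) * ((α:ℚ)+1) * ((α+β).choose (α+1) : ℚ) *
          (AA x (α+1) * AA y β)))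
      - (8*(2*((α:ℚ)+(β:ℚ))+3) * ((-1:ℚ)^α * (α:ℚ) * ((α+β).choose α : ℚ) *
          (AA x α * AA y (β+1)))) := by
  have hc : (((α+β).choose (α+1) : ℚ)) * ((α:ℚ)+1) = ((α+β).choose α : ℚ) * (β:ℚ) := by
    have := Nat.choose_succ_right_eq (α+β) α
    have h2 : α + β - α = β := by omega
    rw [h2] at this
    exact_mod_cast congrArg (fun n : ℕ => (n : ℚ)) this
  have e2 : (β:ℕ)+2 = (β+1)+1 := rfl
  rw [e2, AA_succ, AA_succ, AA_succ, AA_succ, AA_succ, pow_succ]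
  push_cast
  linear_combination (8*(2*((α:ℚ)+(β:ℚ))+3) * ((-1:ℚ)^α) *
    (AA x α * ((2*(α:ℚ)+1)^2 - x^2)) * AA y β) * hc

lemma SS_rec (x y : ℚ) (m : ℕ) :
    SS x y (m+2) = ((2*(m:ℚ)+2)^2-(x+y)^2) * ((2*(m:ℚ)+2)^2-(x-y)^2) * SS x y m := by
  set c : ℚ := ((2*(m:ℚ)+2)^2-(x+y)^2) * ((2*(m:ℚ)+2)^2-(x-y)^2) with hc
  set F : ℕ → ℚ := fun α => AA x α * AA y (m+2-α) with hF
  have e1 : SS x y (m+2)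
      = ∑ α ∈ Finset.range (m+1), (-1:ℚ)^α * (m.choose α : ℚ)
          * ((F α - F (α+1)) - (F (α+1) - F (α+2))) := by
    rw [SS, show m+2+1 = (m+1)+2 from rfl, step (m+1) F, step m (fun α => F α - F (α+1))]
  set H : ℕ → ℚ := fun α => 8*(2*(m:ℚ)+3) *
      ((-1:ℚ)^α * (α:ℚ) * (m.choose α : ℚ) * (AA x α * AA y (m+1-α))) with hH
  have tele : ∑ α ∈ Finset.range (m+1), (H (α+1) - H α) = H (m+1) - H 0 :=
    Finset.sum_range_sub H (m+1)
  have hH0 : H 0 = 0 := by simp [hH]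
  have hHtop : H (m+1) = 0 := by simp [hH, Nat.choose_succ_self]
  have key : ∀ α ∈ Finset.range (m+1),
      (-1:ℚ)^α * (m.choose α : ℚ) * ((F α - F (α+1)) - (F (α+1) - F (α+2)))
        - c * ((-1:ℚ)^α * (m.choose α : ℚ) * (AA x α * AA y (m-α)))
      = H (α+1) - H α := by
    intro α hα
    rw [Finset.mem_range] at hα
    obtain ⟨β, hβ⟩ : ∃ β, m = α + β := ⟨m - α, by omega⟩
    subst hβ
    have i1 : α + β + 2 - α = β + 2 := by omega
    have i2 : α + β + 2 - (α+1) = β + 1 := by omega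
    have i3 : α + β + 2 - (α+2) = β := by omega
    have i4 : α + β - α = β := by omega
    have i5 : α + β + 1 - (α+1) = β := by omega
    have i6 : α + β + 1 - α = β + 1 := by omega
    simp only [hF, hH, i1, i2, i3, i4, i5, i6, hc]
    have := per x y α β
    push_cast at this ⊢
    linear_combination this
  have sum0 : ∑ α ∈ Finset.range (m+1),
      ((-1:ℚ)^α * (m.choose α : ℚ) * ((F α - F (α+1)) - (F (α+1) - F (α+2)))
        - c * ((-1:ℚ)^α * (m.choose α : ℚ) * (AA x α * AA y (m-α)))) = 0 := by
    rw [Finset.sum_congr rfl key, tele, hH0, hHtop, sub_zero]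
  rw [Finset.sum_sub_distrib, ← Finset.mul_sum, sub_eq_zero] at sum0
  rw [e1, sum0, SS]

lemma SS_even (x y : ℚ) (k : ℕ) :
    SS x y (2*k) = ∏ j ∈ Finset.range k,
      (((4*(j:ℚ)+2)^2-(x+y)^2) * ((4*(j:ℚ)+2)^2-(x-y)^2)) := by
  induction k with
  | zero => simp [SS, AA]
  | succ k ih =>
    have h2 : 2*(k+1) = 2*k+2 := by ring
    rw [h2, SS_rec, ih, Finset.prod_range_succ]
    push_cast
    ring

lemma SS_odd (x y : ℚ) (k : ℕ) :
    SS x y (2*k+1) = (x^2-y^2) * ∏ j ∈ Finset.range k,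
      (((4*(j:ℚ)+4)^2-(x+y)^2) * ((4*(j:ℚ)+4)^2-(x-y)^2)) := by
  induction k with
  | zero =>
    simp only [SS, AA, Finset.sum_range_succ, Finset.sum_range_zero,
      Finset.prod_range_succ, Finset.prod_range_zero, Finset.prod_range_one]
    norm_num
  | succ k ih =>
    have h2 : 2*(k+1)+1 = (2*k+1)+2 := by ring
    rw [h2, SS_rec, ih, Finset.prod_range_succ]
    push_cast
    ring

lemma LHS_eq (n₁ n₂ : ℤ) (M : ℕ) :
    ∑ p ∈ Finset.HasAntidiagonal.antidiagonal M,
        (-1 : ℚ) ^ p.1 / ((p.1.factorial : ℚ) * (p.2.factorial : ℚ)) *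
          pochQ (1 / 2 + n₁) p.1 * pochQ (1 / 2 - n₁) p.1 *
          pochQ (1 / 2 + n₂) p.2 * pochQ (1 / 2 - n₂) p.2
      = SS (2*(n₁:ℚ)) (2*(n₂:ℚ)) M / (4^M * (M.factorial : ℚ)) := by
  rw [Finset.Nat.sum_antidiagonal_eq_sum_range_succ_mk, SS, Finset.sum_div]
  refine Finset.sum_congr rfl (fun α hα => ?_)
  rw [Finset.mem_range] at hα
  have hle : α ≤ M := by omega
  have hCf : ((M.choose α : ℚ)) * (α.factorial : ℚ) * ((M-α).factorial : ℚ)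
      = (M.factorial : ℚ) := by
    exact_mod_cast congrArg (fun n : ℕ => (n:ℚ))
      (Nat.choose_mul_factorial_mul_factorial hle)
  have hpow : (4:ℚ)^α * (4:ℚ)^(M-α) = (4:ℚ)^M := by
    rw [← pow_add]; congr 1; omega
  have h1 := pair1 (n₁:ℚ) α
  have h2 := pair1 (n₂:ℚ) (M-α)
  have hf1 : ((α.factorial : ℚ)) ≠ 0 := Nat.cast_ne_zero.mpr (Nat.factorial_ne_zero _)
  have hf2 : (((M-α).factorial : ℚ)) ≠ 0 := Nat.cast_ne_zero.mpr (Nat.factorial_ne_zero _)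
  have hp1 : (4:ℚ)^α ≠ 0 := pow_ne_zero _ (by norm_num)
  have hp2 : (4:ℚ)^(M-α) ≠ 0 := pow_ne_zero _ (by norm_num)
  calc (-1 : ℚ) ^ α / ((α.factorial : ℚ) * ((M-α).factorial : ℚ)) *
          pochQ (1 / 2 + n₁) α * pochQ (1 / 2 - n₁) α *
          pochQ (1 / 2 + n₂) (M-α) * pochQ (1 / 2 - n₂) (M-α)
      = (-1 : ℚ) ^ α / ((α.factorial : ℚ) * ((M-α).factorial : ℚ)) *
          (pochQ (1 / 2 + n₁) α * pochQ (1 / 2 - n₁) α) *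
          (pochQ (1 / 2 + n₂) (M-α) * pochQ (1 / 2 - n₂) (M-α)) := by ring
    _ = (-1:ℚ)^α * (M.choose α : ℚ) * (AA (2*(n₁:ℚ)) α * AA (2*(n₂:ℚ)) (M-α))
          / (4^M * (M.factorial : ℚ)) := by
        have hC : ((M.choose α : ℚ)) ≠ 0 :=
          ne_of_gt (by exact_mod_cast Nat.choose_pos hle)
        rw [h1, h2, ← hCf, ← hpow, div_mul_div_comm, div_mul_div_comm]
        rw [div_eq_div_iff (by positivity) (mul_ne_zero (mul_ne_zero hp1 hp2)
          (mul_ne_zero (mul_ne_zero hC hf1) hf2))]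
        ring

/-- Two Pochhammer-symbol identities equivalent to the coincidence of the singular parts
of the resolvent expansions around the embedded threshold. -/
theorem poch_identities (k : ℕ) (n₁ n₂ : ℤ) :
    (∑ p ∈ Finset.HasAntidiagonal.antidiagonal (2 * k),
        (-1 : ℚ) ^ p.1 / ((p.1.factorial : ℚ) * (p.2.factorial : ℚ)) *
          pochQ (1 / 2 + n₁) p.1 * pochQ (1 / 2 - n₁) p.1 *
          pochQ (1 / 2 + n₂) p.2 * pochQ (1 / 2 - n₂) p.2
      = (4 : ℚ) ^ (2 * k) / ((2 * k).factorial : ℚ) *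
          pochQ ((1 + n₁ + n₂) / 2) k * pochQ ((1 + n₁ - n₂) / 2) k *
          pochQ ((1 - n₁ + n₂) / 2) k * pochQ ((1 - n₁ - n₂) / 2) k) ∧
    (∑ p ∈ Finset.HasAntidiagonal.antidiagonal (2 * k + 1),
        (-1 : ℚ) ^ p.1 / ((p.1.factorial : ℚ) * (p.2.factorial : ℚ)) *
          pochQ (1 / 2 + n₁) p.1 * pochQ (1 / 2 - n₁) p.1 *
          pochQ (1 / 2 + n₂) p.2 * pochQ (1 / 2 - n₂) p.2
      = (4 : ℚ) ^ (2 * k + 1) / ((2 * k + 1).factorial : ℚ) *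
          pochQ ((n₁ + n₂) / 2) (k + 1) * pochQ ((n₁ - n₂) / 2) (k + 1) *
          pochQ ((2 - n₁ + n₂) / 2) k * pochQ ((2 - n₁ - n₂) / 2) k) := by
  have h16 : (16:ℚ)^k = 4^(2*k) := by
    rw [pow_mul]; norm_num
  constructor
  · rw [LHS_eq n₁ n₂ (2*k), SS_even, Finset.prod_mul_distrib]
    rw [show ((1:ℚ) + (n₁:ℚ) + (n₂:ℚ))/2 = (1 + ((n₁:ℚ)+(n₂:ℚ)))/2 by ring,
      show ((1:ℚ) + (n₁:ℚ) - (n₂:ℚ))/2 = (1 + ((n₁:ℚ)-(n₂:ℚ)))/2 by ring,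
      show ((1:ℚ) - (n₁:ℚ) + (n₂:ℚ))/2 = (1 - ((n₁:ℚ)-(n₂:ℚ)))/2 by ring,
      show ((1:ℚ) - (n₁:ℚ) - (n₂:ℚ))/2 = (1 - ((n₁:ℚ)+(n₂:ℚ)))/2 by ring]
    rw [show (4 : ℚ) ^ (2 * k) / ((2 * k).factorial : ℚ) *
          pochQ ((1 + ((n₁:ℚ)+(n₂:ℚ)))/2) k * pochQ ((1 + ((n₁:ℚ)-(n₂:ℚ)))/2) k *
          pochQ ((1 - ((n₁:ℚ)-(n₂:ℚ)))/2) k * pochQ ((1 - ((n₁:ℚ)+(n₂:ℚ)))/2) k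
        = (4 : ℚ) ^ (2 * k) / ((2 * k).factorial : ℚ) *
          (pochQ ((1 + ((n₁:ℚ)+(n₂:ℚ)))/2) k * pochQ ((1 - ((n₁:ℚ)+(n₂:ℚ)))/2) k) *
          (pochQ ((1 + ((n₁:ℚ)-(n₂:ℚ)))/2) k * pochQ ((1 - ((n₁:ℚ)-(n₂:ℚ)))/2) k) by ring]
    rw [pair2, pair2, h16]
    rw [Finset.prod_congr rfl (fun j (_ : j ∈ Finset.range k) =>
        show (4*(j:ℚ)+2)^2 - (2*(n₁:ℚ)+2*(n₂:ℚ))^2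
          = (4*(j:ℚ)+2)^2 - (2*((n₁:ℚ)+(n₂:ℚ)))^2 by ring),
      Finset.prod_congr rfl (fun j (_ : j ∈ Finset.range k) =>
        show (4*(j:ℚ)+2)^2 - (2*(n₁:ℚ)-2*(n₂:ℚ))^2
          = (4*(j:ℚ)+2)^2 - (2*((n₁:ℚ)-(n₂:ℚ)))^2 by ring)]
    have hD : (((2*k).factorial : ℚ)) ≠ 0 := Nat.cast_ne_zero.mpr (Nat.factorial_ne_zero _)
    have h4 : (4:ℚ)^(2*k) ≠ 0 := pow_ne_zero _ (by norm_num)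
    field_simp
  · rw [LHS_eq n₁ n₂ (2*k+1), SS_odd, Finset.prod_mul_distrib]
    rw [show ((2:ℚ) - (n₁:ℚ) + (n₂:ℚ))/2 = (2 - ((n₁:ℚ)-(n₂:ℚ)))/2 by ring,
      show ((2:ℚ) - (n₁:ℚ) - (n₂:ℚ))/2 = (2 - ((n₁:ℚ)+(n₂:ℚ)))/2 by ring]
    rw [show (4 : ℚ) ^ (2 * k + 1) / ((2 * k + 1).factorial : ℚ) *
          pochQ (((n₁:ℚ) + (n₂:ℚ))/2) (k+1) * pochQ (((n₁:ℚ) - (n₂:ℚ))/2) (k+1) *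
          pochQ ((2 - ((n₁:ℚ)-(n₂:ℚ)))/2) k * pochQ ((2 - ((n₁:ℚ)+(n₂:ℚ)))/2) k
        = (4 : ℚ) ^ (2 * k + 1) / ((2 * k + 1).factorial : ℚ) *
          (pochQ (((n₁:ℚ) + (n₂:ℚ))/2) (k+1) * pochQ ((2 - ((n₁:ℚ)+(n₂:ℚ)))/2) k) *
          (pochQ (((n₁:ℚ) - (n₂:ℚ))/2) (k+1) * pochQ ((2 - ((n₁:ℚ)-(n₂:ℚ)))/2) k) by ring]
    rw [pair3, pair3, h16]
    rw [Finset.prod_congr rfl (fun j (_ : j ∈ Finset.range k) =>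
        show (4*(j:ℚ)+4)^2 - (2*(n₁:ℚ)+2*(n₂:ℚ))^2
          = (4*(j:ℚ)+4)^2 - (2*((n₁:ℚ)+(n₂:ℚ)))^2 by ring),
      Finset.prod_congr rfl (fun j (_ : j ∈ Finset.range k) =>
        show (4*(j:ℚ)+4)^2 - (2*(n₁:ℚ)-2*(n₂:ℚ))^2
          = (4*(j:ℚ)+4)^2 - (2*((n₁:ℚ)-(n₂:ℚ)))^2 by ring)]
    have hD : (((2*k+1).factorial : ℚ)) ≠ 0 := Nat.cast_ne_zero.mpr (Nat.factorial_ne_zero _)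
    have h4 : (4:ℚ)^(2*k+1) ≠ 0 := pow_ne_zero _ (by norm_num)
    field_simp
    ring
end
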